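/- arXiv:math/0702481 — 8 statements merged into one kernel-verified Lean document; each statement's English description precedes it below -/
import Mathlib

section
/- Suppose g(r) ≥ ε for all r ≥ r₀, where r₀ ≥ 1 and ε > 0. Then for r ≥ r₀ the quantity λ(r) := ∫_r^∞ μ(ρ)^{1−d} e^{βG(ρ)} ( ∫_ρ^∞ e^{−βG(s)} μ(s)^{d−1} (1+η(s)²)^{−1} s^{−2} ds ) dρ is finite, λ is nonincreasing on [r₀,∞), and λ(r) = O(1/r) as r → ∞; in particular λ(r) → 0 as r → ∞. -/
open Filter MeasureTheory Set Asymptotics Topology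


lemma aux_contOn_primitive {φ : ℝ → ℝ} {a : ℝ} (hφ : ContinuousOn φ (Ici a)) :
    ContinuousOn (fun x => ∫ t in a..x, φ t) (Ici a) := by
  intro x hx
  have hx1 : x < x + 1 := by linarith
  have hint : IntegrableOn φ (Icc a (x+1)) :=
    (hφ.mono Icc_subset_Ici_self).integrableOn_Icc
  have h : ContinuousOn (fun y => ∫ t in a..y, φ t) (Icc a (x+1)) :=
    (intervalIntegral.continuousOn_primitive hint).congr
      (fun y hy => by rw [intervalIntegral.integral_of_le hy.1])
  have hmem : Icc a (x+1) ∈ 𝓝[Ici a] x := by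
    rw [← Ici_inter_Iic]
    exact Filter.inter_mem self_mem_nhdsWithin
      (mem_nhdsWithin_of_mem_nhds (Iic_mem_nhds hx1))
  exact (h x ⟨hx, hx1.le⟩).mono_of_mem_nhdsWithin hmem

lemma aux_pow_le_exp (n : ℕ) {x : ℝ} (hx : 0 ≤ x) : x ^ n ≤ (n:ℝ)^n * Real.exp x := by
  rcases Nat.eq_zero_or_pos n with rfl | hn
  · simpa using Real.one_le_exp hx
  · have hn0 : (0:ℝ) < n := by exact_mod_cast hn
    have h1 : x / n ≤ Real.exp (x / n) := by
      have := Real.add_one_le_exp (x / n)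
      linarith
    have h2 : (x / n) ^ n ≤ Real.exp (x / n) ^ n :=
      pow_le_pow_left₀ (by positivity) h1 n
    have h3 : Real.exp (x / n) ^ n = Real.exp x := by
      rw [← Real.exp_nat_mul]
      congr 1
      field_simp
    calc x ^ n = (n:ℝ)^n * (x / n)^n := by rw [div_pow]; field_simp
      _ ≤ (n:ℝ)^n * Real.exp (x / n)^n := mul_le_mul_of_nonneg_left h2 (by positivity)
      _ = (n:ℝ)^n * Real.exp x := by rw [h3]

lemma aux_exp_integrable {c : ℝ} (hc : 0 < c) (a : ℝ) :
    IntegrableOn (fun s => Real.exp (-(c*s))) (Ioi a) := by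
  simpa [neg_mul] using exp_neg_integrableOn_Ioi a hc

lemma aux_exp_integral {c : ℝ} (hc : 0 < c) (a : ℝ) :
    ∫ s in Ioi a, Real.exp (-(c*s)) = Real.exp (-(c*a)) / c := by
  have hderiv : ∀ x ∈ Ici a, HasDerivAt (fun y => -(Real.exp (-(c*y)) / c)) (Real.exp (-(c*x))) x := by
    intro x _
    have h1 : HasDerivAt (fun y : ℝ => -(c*y)) (-c) x := by
      have h := ((hasDerivAt_id x).const_mul c).neg; simp only [mul_one] at h; exact h
    have h2 := (h1.exp.div_const c).neg
    have hc0 : c ≠ 0 := hc.ne'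
    have h3 : -(Real.exp (-(c * x)) * -c / c) = Real.exp (-(c * x)) := by field_simp
    rw [h3] at h2
    exact h2
  have htend : Tendsto (fun y => -(Real.exp (-(c*y)) / c)) atTop (𝓝 0) := by
    have h0 : Tendsto (fun y : ℝ => -(c*y)) atTop atBot := by
      have := (tendsto_id (α := ℝ)).const_mul_atTop hc
      exact tendsto_neg_atTop_atBot.comp this
    have h1 : Tendsto (fun y : ℝ => Real.exp (-(c*y))) atTop (𝓝 0) :=
      Real.tendsto_exp_atBot.comp h0
    simpa using (h1.div_const c).neg
  have := integral_Ioi_of_hasDerivAt_of_tendsto' hderiv (aux_exp_integrable hc a) htend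
  rw [this]; ring

lemma aux_invsq_integrable {a : ℝ} (ha : 0 < a) :
    IntegrableOn (fun x : ℝ => (x^2)⁻¹) (Ioi a) := by
  have h := integrableOn_Ioi_rpow_of_lt (by norm_num : (-2:ℝ) < -1) ha
  apply h.congr_fun ?_ measurableSet_Ioi
  intro x hx
  have hx0 : (0:ℝ) < x := ha.trans hx
  show x ^ (-2 : ℝ) = (x ^ 2)⁻¹
  rw [← Real.rpow_natCast x 2, ← Real.rpow_neg hx0.le]
  norm_num

lemma aux_invsq_integral {a : ℝ} (ha : 0 < a) :
    ∫ x in Ioi a, (x^2)⁻¹ = a⁻¹ := by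
  have hderiv : ∀ x ∈ Ici a, HasDerivAt (fun y : ℝ => -y⁻¹) ((x^2)⁻¹) x := by
    intro x hx
    have hx0 : x ≠ 0 := ne_of_gt (ha.trans_le hx)
    have h := (hasDerivAt_inv hx0).neg; rw [neg_neg] at h; exact h
  have htend : Tendsto (fun y : ℝ => -y⁻¹) atTop (𝓝 (0:ℝ)) := by
    simpa using (tendsto_inv_atTop_zero (𝕜 := ℝ)).neg
  have := integral_Ioi_of_hasDerivAt_of_tendsto' hderiv (aux_invsq_integrable ha) htend
  rw [this]; ring

lemma aux_shift (K c ρ : ℝ) :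
    (fun s => K * Real.exp (-(c*(s-ρ)))) = fun s => (K * Real.exp (c*ρ)) * Real.exp (-(c*s)) := by
  funext s
  rw [mul_assoc, ← Real.exp_add]
  congr 2
  ring

set_option maxHeartbeats 2000000 in
/-- If g ≥ ε on [r₀,∞), the quantity
λ(r) = ∫_r^∞ μ(ρ)^{1-d} e^{βG(ρ)} ( ∫_ρ^∞ e^{-βG(s)} μ(s)^{d-1} (1+η(s)²)⁻¹ s⁻² ds ) dρ
is finite for r ≥ r₀, nonincreasing on [r₀,∞), O(1/r) at ∞, and tends to 0 at ∞. -/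
theorem stmt3 (d : ℕ) (hd : 1 ≤ d) (β ε : ℝ) (hβ : 0 < β) (hε : 0 < ε)
    (f b σ η : ℝ → ℝ)
    (hfc : ContinuousOn f (Ici 0)) (hbc : ContinuousOn b (Ici 0))
    (hσc : ContinuousOn σ (Ici 0)) (hηc : ContinuousOn η (Ici 0))
    (hσε : ∀ r ∈ Ici (0:ℝ), ε ≤ σ r)
    (g G μ : ℝ → ℝ)
    (hg : ∀ r, g r = 2 * r * b r / (σ r) ^ 2)
    (hG : ∀ r, G r = ∫ ρ in (0:ℝ)..r, g ρ)
    (hμ : ∀ r, μ r = Real.exp (∫ s in (1:ℝ)..r, 1 / (s * (1 + η s ^ 2))))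
    (r₀ : ℝ) (hr₀ : 1 ≤ r₀) (hgr₀ : ∀ r ≥ r₀, ε ≤ g r)
    (lam : ℝ → ℝ)
    (hlam : ∀ r, lam r = ∫ ρ in Ioi r, (μ ρ ^ (d - 1))⁻¹ * Real.exp (β * G ρ) *
        ∫ s in Ioi ρ, Real.exp (-(β * G s)) * μ s ^ (d - 1) * (1 + η s ^ 2)⁻¹ * (s ^ 2)⁻¹) :
    (∀ ρ ≥ r₀, IntegrableOn
        (fun s => Real.exp (-(β * G s)) * μ s ^ (d - 1) * (1 + η s ^ 2)⁻¹ * (s ^ 2)⁻¹)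
        (Ioi ρ)) ∧
    (∀ r ≥ r₀, IntegrableOn
        (fun ρ => (μ ρ ^ (d - 1))⁻¹ * Real.exp (β * G ρ) *
          ∫ s in Ioi ρ, Real.exp (-(β * G s)) * μ s ^ (d - 1) * (1 + η s ^ 2)⁻¹ * (s ^ 2)⁻¹)
        (Ioi r)) ∧
    AntitoneOn lam (Ici r₀) ∧
    (lam =O[atTop] fun r => 1 / r) ∧
    Tendsto lam atTop (nhds 0) := by
  -- basic positivity
  have hc2 : (0:ℝ) < β * ε / 2 := by positivity
  set c : ℝ := β * ε / 2 with hcdef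
  clear_value c
  have hμpos : ∀ r, 0 < μ r := fun r => by rw [hμ]; exact Real.exp_pos _
  -- continuity of g on [0,∞)
  have hσ0 : ∀ r ∈ Ici (0:ℝ), σ r ^ 2 ≠ 0 := fun r hr =>
    pow_ne_zero _ (ne_of_gt (lt_of_lt_of_le hε (hσε r hr)))
  have hgc : ContinuousOn g (Ici 0) := by
    have h : ContinuousOn (fun r => 2 * r * b r / σ r ^ 2) (Ici 0) :=
      ((continuousOn_const.mul continuousOn_id).mul hbc).div (hσc.pow 2) hσ0
    exact h.congr fun r _ => hg r
  have hgint : ∀ u v : ℝ, 0 ≤ u → u ≤ v → IntervalIntegrable g volume u v := by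
    intro u v hu huv
    apply (hgc.mono ?_).intervalIntegrable
    rw [uIcc_of_le huv]
    exact fun t ht => hu.trans ht.1
  -- G difference and growth
  have hGdiff : ∀ u v : ℝ, 0 ≤ u → u ≤ v → G v - G u = ∫ t in u..v, g t := by
    intro u v hu huv
    rw [hG, hG]
    exact intervalIntegral.integral_interval_sub_left (hgint 0 v le_rfl (hu.trans huv))
      (hgint 0 u le_rfl hu)
  have hGgrow : ∀ u v : ℝ, r₀ ≤ u → u ≤ v → ε * (v - u) ≤ G v - G u := by
    intro u v hu huv
    have hu0 : (0:ℝ) ≤ u := le_trans (le_trans zero_le_one hr₀) hu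
    rw [hGdiff u v hu0 huv]
    have h := intervalIntegral.integral_mono_on (f := fun _ => ε) (g := g) huv
      intervalIntegrable_const (hgint u v hu0 huv)
      (fun t ht => hgr₀ t (hu.trans ht.1))
    simpa [mul_comm] using h
  -- μ : ratio bound
  set w : ℝ → ℝ := fun t => 1 / (t * (1 + η t ^ 2)) with hwdef
  have hwc : ContinuousOn w (Ici 1) := by
    apply continuousOn_const.div
    · exact continuousOn_id.mul (continuousOn_const.add
        (((hηc.mono (fun t (ht : (1:ℝ) ≤ t) => zero_le_one.trans ht)).pow 2)))
    · intro t ht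
      have h1 : (0:ℝ) < t := lt_of_lt_of_le one_pos ht
      have h2 : (0:ℝ) < 1 + η t ^ 2 := by positivity
      exact ne_of_gt (mul_pos h1 h2)
  have hwint : ∀ u v : ℝ, 1 ≤ u → u ≤ v → IntervalIntegrable w volume u v := by
    intro u v hu huv
    apply (hwc.mono ?_).intervalIntegrable
    rw [uIcc_of_le huv]
    exact fun t ht => hu.trans ht.1
  have hratio : ∀ u v : ℝ, 1 ≤ u → u ≤ v → μ v ≤ (v / u) * μ u := by
    intro u v hu huv
    have hu0 : (0:ℝ) < u := lt_of_lt_of_le one_pos hu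
    have hv0 : (0:ℝ) < v := lt_of_lt_of_le hu0 huv
    have hsplit : μ v = μ u * Real.exp (∫ t in u..v, w t) := by
      rw [hμ, hμ, ← Real.exp_add,
        intervalIntegral.integral_add_adjacent_intervals (hwint 1 u le_rfl hu) (hwint u v hu huv)]
    have hmono : ∫ t in u..v, w t ≤ ∫ t in u..v, t⁻¹ := by
      apply intervalIntegral.integral_mono_on huv (hwint u v hu huv)
      · apply ContinuousOn.intervalIntegrable
        apply continuousOn_inv₀.mono
        intro t ht
        rw [uIcc_of_le huv] at ht
        exact ne_of_gt (lt_of_lt_of_le hu0 ht.1)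
      · intro t ht
        have ht0 : (0:ℝ) < t := lt_of_lt_of_le hu0 ht.1
        have h2 : (0:ℝ) < 1 + η t ^ 2 := by positivity
        show 1 / (t * (1 + η t ^ 2)) ≤ t⁻¹
        rw [← one_div t]
        apply one_div_le_one_div_of_le ht0
        have h1 : (1:ℝ) ≤ 1 + η t ^ 2 := by nlinarith [sq_nonneg (η t)]
        exact le_mul_of_one_le_right ht0.le h1
    have hlog : ∫ t in u..v, t⁻¹ = Real.log (v / u) := by
      apply integral_inv
      rw [uIcc_of_le huv]
      intro hmem
      exact absurd hmem.1 (not_le.mpr hu0)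
    calc μ v = μ u * Real.exp (∫ t in u..v, w t) := hsplit
      _ ≤ μ u * Real.exp (Real.log (v / u)) := by
          apply mul_le_mul_of_nonneg_left _ (hμpos u).le
          rw [← hlog]
          exact Real.exp_le_exp.mpr hmono
      _ = (v / u) * μ u := by rw [Real.exp_log (div_pos hv0 hu0)]; ring
  -- continuity of G and μ
  have hGc : ContinuousOn G (Ici 0) :=
    (aux_contOn_primitive hgc).congr fun r _ => hG r
  have hμc : ContinuousOn μ (Ici 1) :=
    (Real.continuous_exp.comp_continuousOn (aux_contOn_primitive hwc)).congr fun r _ => hμ r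
  have hsub10 : Ici (1:ℝ) ⊆ Ici 0 := fun t (ht : (1:ℝ) ≤ t) => (zero_le_one.trans ht : (0:ℝ) ≤ t)
  -- F
  set F : ℝ → ℝ := fun s => Real.exp (-(β * G s)) * μ s ^ (d - 1) * (1 + η s ^ 2)⁻¹ * (s ^ 2)⁻¹
    with hFdef
  have hFnonneg : ∀ s : ℝ, 0 < s → 0 ≤ F s := by
    intro s hs
    have h1 := (hμpos s).le
    have h2 : (0:ℝ) < 1 + η s ^ 2 := by positivity
    show (0:ℝ) ≤ Real.exp (-(β * G s)) * μ s ^ (d - 1) * (1 + η s ^ 2)⁻¹ * (s ^ 2)⁻¹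
    apply mul_nonneg (mul_nonneg (mul_nonneg (Real.exp_pos _).le (pow_nonneg h1 _)) (by positivity))
      (by positivity)
  have hFc : ContinuousOn F (Ici 1) := by
    have hc1 : ContinuousOn (fun s => Real.exp (-(β * G s))) (Ici (1:ℝ)) :=
      Real.continuous_exp.comp_continuousOn ((continuousOn_const.mul (hGc.mono hsub10)).neg)
    have hc2' : ContinuousOn (fun s => μ s ^ (d-1)) (Ici (1:ℝ)) := hμc.pow _
    have hc3' : ContinuousOn (fun s => (1 + η s ^ 2)⁻¹) (Ici (1:ℝ)) := by
      apply ContinuousOn.inv₀ (continuousOn_const.add ((hηc.mono hsub10).pow 2))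
      intro t _
      exact (by positivity : (0:ℝ) < 1 + η t ^ 2).ne'
    have hc4' : ContinuousOn (fun s : ℝ => (s ^ 2)⁻¹) (Ici (1:ℝ)) := by
      apply ContinuousOn.inv₀ (continuousOn_id.pow 2)
      intro t ht
      exact pow_ne_zero _ (ne_of_gt (lt_of_lt_of_le one_pos ht))
    exact ((hc1.mul hc2').mul hc3').mul hc4'
  -- constant D and poly-exp bound
  set D : ℝ := (↑(d-1):ℝ)^(d-1) * (c⁻¹)^(d-1) * Real.exp c with hDdef
  clear_value D
  have hD0 : 0 ≤ D := by rw [hDdef]; positivity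
  have hpe : ∀ u : ℝ, 0 ≤ u → (1+u)^(d-1) * Real.exp (-(β*ε*u)) ≤ D * Real.exp (-(c*u)) := by
    intro u hu
    have h1 : (c*(1+u))^(d-1) ≤ (↑(d-1):ℝ)^(d-1) * Real.exp (c*(1+u)) :=
      aux_pow_le_exp _ (by positivity)
    have h2 : (1+u)^(d-1) ≤ (↑(d-1):ℝ)^(d-1) * (c⁻¹)^(d-1) * Real.exp (c*(1+u)) := by
      have hc' : c ≠ 0 := ne_of_gt hc2
      have h5 := mul_le_mul_of_nonneg_left h1 (show (0:ℝ) ≤ (c⁻¹)^(d-1) by positivity)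
      calc (1+u)^(d-1) = (c⁻¹)^(d-1) * (c*(1+u))^(d-1) := by
            rw [← mul_pow]
            congr 1
            field_simp
        _ ≤ (c⁻¹)^(d-1) * ((↑(d-1):ℝ)^(d-1) * Real.exp (c*(1+u))) := h5
        _ = (↑(d-1):ℝ)^(d-1) * (c⁻¹)^(d-1) * Real.exp (c*(1+u)) := by ring
    have h3 : Real.exp (c*(1+u)) * Real.exp (-(β*ε*u)) = Real.exp c * Real.exp (-(c*u)) := by
      rw [← Real.exp_add, ← Real.exp_add]
      congr 1
      rw [hcdef]
      ring
    calc (1+u)^(d-1) * Real.exp (-(β*ε*u))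
        ≤ ((↑(d-1):ℝ)^(d-1) * (c⁻¹)^(d-1) * Real.exp (c*(1+u))) * Real.exp (-(β*ε*u)) :=
          mul_le_mul_of_nonneg_right h2 (Real.exp_pos _).le
      _ = (↑(d-1):ℝ)^(d-1) * (c⁻¹)^(d-1) * (Real.exp (c*(1+u)) * Real.exp (-(β*ε*u))) := by ring
      _ = D * Real.exp (-(c*u)) := by rw [h3, hDdef]; ring
  -- the key pointwise bound
  have hkey : ∀ ρ, r₀ ≤ ρ → ∀ s, ρ ≤ s →
      F s ≤ (Real.exp (-(β * G ρ)) * μ ρ ^ (d-1) * (ρ^2)⁻¹ * D) * Real.exp (-(c*(s-ρ))) := by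
    intro ρ hρ s hs
    have hρ1 : (1:ℝ) ≤ ρ := hr₀.trans hρ
    have hρ0 : (0:ℝ) < ρ := lt_of_lt_of_le one_pos hρ1
    have hs0 : (0:ℝ) < s := lt_of_lt_of_le hρ0 hs
    have hu : (0:ℝ) ≤ s - ρ := by linarith
    have ha : Real.exp (-(β*G s)) ≤ Real.exp (-(β*G ρ)) * Real.exp (-(β*ε*(s-ρ))) := by
      rw [← Real.exp_add]
      apply Real.exp_le_exp.mpr
      have h6 := hGgrow ρ s hρ hs
      nlinarith [mul_le_mul_of_nonneg_left h6 hβ.le]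
    have hb2 : μ s ^ (d-1) ≤ (1+(s-ρ))^(d-1) * μ ρ ^ (d-1) := by
      have hsρ : μ s ≤ (1+(s-ρ)) * μ ρ := by
        have h7 := hratio ρ s hρ1 hs
        have h8 : s / ρ ≤ 1 + (s-ρ) := by
          rw [div_le_iff₀ hρ0]
          nlinarith
        calc μ s ≤ (s/ρ) * μ ρ := h7
          _ ≤ (1+(s-ρ)) * μ ρ := mul_le_mul_of_nonneg_right h8 (hμpos ρ).le
      calc μ s ^ (d-1) ≤ ((1+(s-ρ)) * μ ρ)^(d-1) := pow_le_pow_left₀ (hμpos s).le hsρ _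
        _ = (1+(s-ρ))^(d-1) * μ ρ ^ (d-1) := mul_pow _ _ _
    have hc3 : (1 + η s ^ 2)⁻¹ ≤ 1 := by
      have h9 : (1:ℝ) ≤ 1 + η s ^ 2 := by nlinarith [sq_nonneg (η s)]
      exact inv_le_one_of_one_le₀ h9
    have hd2 : (s^2)⁻¹ ≤ (ρ^2)⁻¹ :=
      inv_anti₀ (by positivity) (by nlinarith)
    have hR1nn : (0:ℝ) ≤ Real.exp (-(β*G ρ)) * Real.exp (-(β*ε*(s-ρ))) := by positivity
    have hR2nn : (0:ℝ) ≤ (1+(s-ρ))^(d-1) * μ ρ ^ (d-1) :=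
      mul_nonneg (pow_nonneg (by linarith) _) (pow_nonneg (hμpos ρ).le _)
    have hm1 : Real.exp (-(β*G s)) * μ s ^ (d-1)
        ≤ (Real.exp (-(β*G ρ)) * Real.exp (-(β*ε*(s-ρ)))) * ((1+(s-ρ))^(d-1) * μ ρ ^ (d-1)) :=
      mul_le_mul ha hb2 (pow_nonneg (hμpos s).le _) hR1nn
    have hm2 : Real.exp (-(β*G s)) * μ s ^ (d-1) * (1 + η s ^ 2)⁻¹
        ≤ (Real.exp (-(β*G ρ)) * Real.exp (-(β*ε*(s-ρ)))) * ((1+(s-ρ))^(d-1) * μ ρ ^ (d-1)) * 1 :=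
      mul_le_mul hm1 hc3 (by positivity) (mul_nonneg hR1nn hR2nn)
    have hm3 : Real.exp (-(β*G s)) * μ s ^ (d-1) * (1 + η s ^ 2)⁻¹ * (s^2)⁻¹
        ≤ (Real.exp (-(β*G ρ)) * Real.exp (-(β*ε*(s-ρ)))) * ((1+(s-ρ))^(d-1) * μ ρ ^ (d-1)) * 1 * (ρ^2)⁻¹ :=
      mul_le_mul hm2 hd2 (by positivity) (by
        apply mul_nonneg (mul_nonneg hR1nn hR2nn)
        norm_num)
    calc F s ≤ (Real.exp (-(β*G ρ)) * Real.exp (-(β*ε*(s-ρ)))) * ((1+(s-ρ))^(d-1) * μ ρ ^ (d-1)) * 1 * (ρ^2)⁻¹ := hm3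
      _ = (Real.exp (-(β*G ρ)) * μ ρ ^ (d-1) * (ρ^2)⁻¹) * ((1+(s-ρ))^(d-1) * Real.exp (-(β*ε*(s-ρ)))) := by ring
      _ ≤ (Real.exp (-(β*G ρ)) * μ ρ ^ (d-1) * (ρ^2)⁻¹) * (D * Real.exp (-(c*(s-ρ)))) := by
          apply mul_le_mul_of_nonneg_left (hpe _ hu)
          have := (hμpos ρ).le
          positivity
      _ = (Real.exp (-(β * G ρ)) * μ ρ ^ (d-1) * (ρ^2)⁻¹ * D) * Real.exp (-(c*(s-ρ))) := by ring
  -- part 1 : inner integrability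
  have part1 : ∀ ρ ≥ r₀, IntegrableOn F (Ioi ρ) := by
    intro ρ hρ
    have hρ1 : (1:ℝ) ≤ ρ := hr₀.trans hρ
    have hρ0 : (0:ℝ) < ρ := lt_of_lt_of_le one_pos hρ1
    have hmeas : AEStronglyMeasurable F (volume.restrict (Ioi ρ)) :=
      (hFc.mono (fun s (hs : ρ < s) => le_of_lt (lt_of_le_of_lt hρ1 hs))).aestronglyMeasurable
        measurableSet_Ioi
    set K := Real.exp (-(β * G ρ)) * μ ρ ^ (d-1) * (ρ^2)⁻¹ * D * Real.exp (c*ρ) with hK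
    have hKnn : 0 ≤ K := by
      have := (hμpos ρ).le
      positivity
    apply Integrable.mono ((aux_exp_integrable hc2 ρ).const_mul K) hmeas
    apply (ae_restrict_iff' measurableSet_Ioi).2 (ae_of_all _ ?_)
    intro s hs
    have hs' : ρ ≤ s := le_of_lt hs
    have hs0 : (0:ℝ) < s := lt_of_lt_of_le hρ0 hs'
    rw [Real.norm_eq_abs, Real.norm_eq_abs, abs_of_nonneg (hFnonneg s hs0),
      abs_of_nonneg (by positivity)]
    have h1 := hkey ρ hρ s hs'
    have h2 : Real.exp (-(c*(s-ρ))) = Real.exp (c*ρ) * Real.exp (-(c*s)) := by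
      rw [← Real.exp_add]
      congr 1
      ring
    calc F s ≤ (Real.exp (-(β * G ρ)) * μ ρ ^ (d-1) * (ρ^2)⁻¹ * D) * Real.exp (-(c*(s-ρ))) := h1
      _ = K * Real.exp (-(c*s)) := by rw [h2, hK]; ring
  -- the inner integral I and its properties
  set I : ℝ → ℝ := fun ρ => ∫ s in Ioi ρ, F s with hIdef
  have hInn : ∀ ρ : ℝ, 0 ≤ ρ → 0 ≤ I ρ := by
    intro ρ hρ
    apply setIntegral_nonneg measurableSet_Ioi
    intro s hs
    exact hFnonneg s (lt_of_le_of_lt hρ hs)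
  have hFae : ∀ ρ : ℝ, 0 ≤ ρ → 0 ≤ᵐ[volume.restrict (Ioi ρ)] F := fun ρ hρ =>
    (ae_restrict_iff' measurableSet_Ioi).2 (ae_of_all _ fun s hs => hFnonneg s (lt_of_le_of_lt hρ hs))
  have hIanti : AntitoneOn I (Ici r₀) := by
    intro u hu v hv huv
    exact setIntegral_mono_set (part1 u hu) (hFae u (le_trans (zero_le_one.trans hr₀) hu))
      (Ioi_subset_Ioi huv).eventuallyLE
  have hIbound : ∀ ρ, r₀ ≤ ρ → I ρ ≤ Real.exp (-(β * G ρ)) * μ ρ ^ (d-1) * (ρ^2)⁻¹ * D / c := by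
    intro ρ hρ
    set K := Real.exp (-(β * G ρ)) * μ ρ ^ (d-1) * (ρ^2)⁻¹ * D with hK
    have hfun := aux_shift K c ρ
    have hint2 : IntegrableOn (fun s => K * Real.exp (-(c*(s-ρ)))) (Ioi ρ) := by
      rw [hfun]
      exact (aux_exp_integrable hc2 ρ).const_mul _
    have h1 : I ρ ≤ ∫ s in Ioi ρ, K * Real.exp (-(c*(s-ρ))) :=
      setIntegral_mono_on (part1 ρ hρ) hint2 measurableSet_Ioi (fun s hs => hkey ρ hρ s (le_of_lt hs))
    have h2 : ∫ s in Ioi ρ, K * Real.exp (-(c*(s-ρ))) = K / c := by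
      rw [hfun, integral_const_mul, aux_exp_integral hc2 ρ, Real.exp_neg]
      have he0 : Real.exp (c*ρ) ≠ 0 := (Real.exp_pos _).ne'
      field_simp
    rw [h2] at h1
    exact h1
  -- the outer integrand H
  set H : ℝ → ℝ := fun ρ => (μ ρ ^ (d - 1))⁻¹ * Real.exp (β * G ρ) * I ρ with hHdef
  have hHnn : ∀ ρ, r₀ ≤ ρ → 0 ≤ H ρ := by
    intro ρ hρ
    have h0 : (0:ℝ) ≤ (μ ρ ^ (d - 1))⁻¹ * Real.exp (β * G ρ) := by
      have := (hμpos ρ).le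
      positivity
    exact mul_nonneg h0 (hInn ρ (le_trans (zero_le_one.trans hr₀) hρ))
  have hHbound : ∀ ρ, r₀ ≤ ρ → H ρ ≤ D / c * (ρ^2)⁻¹ := by
    intro ρ hρ
    have hμρ := hμpos ρ
    have hpos : (0:ℝ) ≤ (μ ρ ^ (d-1))⁻¹ * Real.exp (β * G ρ) := by positivity
    have h1 := mul_le_mul_of_nonneg_left (hIbound ρ hρ) hpos
    calc H ρ ≤ (μ ρ ^ (d-1))⁻¹ * Real.exp (β * G ρ) *
        (Real.exp (-(β * G ρ)) * μ ρ ^ (d-1) * (ρ^2)⁻¹ * D / c) := h1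
      _ = D / c * (ρ^2)⁻¹ := by
          rw [Real.exp_neg]
          have hμ0 : μ ρ ^ (d-1) ≠ 0 := pow_ne_zero _ hμρ.ne'
          have he0 : Real.exp (β * G ρ) ≠ 0 := (Real.exp_pos _).ne'
          have hμc1 : (μ ρ ^ (d-1))⁻¹ * μ ρ ^ (d-1) = 1 := inv_mul_cancel₀ hμ0
          have hec1 : Real.exp (β * G ρ) * (Real.exp (β * G ρ))⁻¹ = 1 := mul_inv_cancel₀ he0
          calc (μ ρ ^ (d-1))⁻¹ * Real.exp (β * G ρ) *
              ((Real.exp (β * G ρ))⁻¹ * μ ρ ^ (d-1) * (ρ^2)⁻¹ * D / c)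
              = ((μ ρ ^ (d-1))⁻¹ * μ ρ ^ (d-1)) * (Real.exp (β * G ρ) * (Real.exp (β * G ρ))⁻¹) *
                ((ρ^2)⁻¹ * D / c) := by ring
            _ = D / c * (ρ^2)⁻¹ := by rw [hμc1, hec1]; ring
  have hHmeas : ∀ r, r₀ ≤ r → AEStronglyMeasurable H (volume.restrict (Ioi r)) := by
    intro r hr
    have hr1 : (1:ℝ) ≤ r := hr₀.trans hr
    have hJanti : Antitone (fun ρ => I (max ρ r₀)) := by
      intro u v huv
      exact hIanti (le_max_right u r₀) (le_max_right v r₀) (max_le_max huv le_rfl)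
    have hJm : Measurable (fun ρ => I (max ρ r₀)) := hJanti.measurable
    have hcont : ContinuousOn (fun ρ => (μ ρ ^ (d-1))⁻¹ * Real.exp (β * G ρ)) (Ici 1) := by
      apply ContinuousOn.mul
      · apply ContinuousOn.inv₀ (hμc.pow _)
        intro ρ _
        exact pow_ne_zero _ (hμpos ρ).ne'
      · exact Real.continuous_exp.comp_continuousOn (continuousOn_const.mul (hGc.mono hsub10))
    have h1 : AEStronglyMeasurable
        (fun ρ => ((μ ρ ^ (d-1))⁻¹ * Real.exp (β * G ρ)) * I (max ρ r₀))
        (volume.restrict (Ioi r)) := by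
      apply AEStronglyMeasurable.mul
      · exact (hcont.mono (fun s (hs : r < s) => le_of_lt (lt_of_le_of_lt hr1 hs))).aestronglyMeasurable
          measurableSet_Ioi
      · exact hJm.aestronglyMeasurable
    apply h1.congr
    apply (ae_restrict_iff' measurableSet_Ioi).2 (ae_of_all _ ?_)
    intro ρ hρ
    show (μ ρ ^ (d-1))⁻¹ * Real.exp (β * G ρ) * I (max ρ r₀) = H ρ
    rw [max_eq_left (hr.trans (le_of_lt hρ))]
  have hbint : ∀ r : ℝ, 0 < r → IntegrableOn (fun ρ => D / c * (ρ^2)⁻¹) (Ioi r) := fun r hr =>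
    (aux_invsq_integrable hr).const_mul _
  have part2 : ∀ r ≥ r₀, IntegrableOn H (Ioi r) := by
    intro r hr
    have hr1 : (1:ℝ) ≤ r := hr₀.trans hr
    have hr0 : (0:ℝ) < r := lt_of_lt_of_le one_pos hr1
    apply Integrable.mono (hbint r hr0) (hHmeas r hr)
    apply (ae_restrict_iff' measurableSet_Ioi).2 (ae_of_all _ ?_)
    intro ρ hρ
    have hρr₀ : r₀ ≤ ρ := hr.trans (le_of_lt hρ)
    have hρ0 : (0:ℝ) < ρ := hr0.trans hρ
    rw [Real.norm_eq_abs, Real.norm_eq_abs, abs_of_nonneg (hHnn ρ hρr₀),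
      abs_of_nonneg (by positivity)]
    exact hHbound ρ hρr₀
  -- lam in terms of H
  have hlamH : ∀ r, lam r = ∫ ρ in Ioi r, H ρ := fun r => hlam r
  have hlamnn : ∀ r, r₀ ≤ r → 0 ≤ lam r := by
    intro r hr
    rw [hlamH]
    exact setIntegral_nonneg measurableSet_Ioi (fun ρ hρ => hHnn ρ (hr.trans (le_of_lt hρ)))
  have hlamle : ∀ r, r₀ ≤ r → lam r ≤ D / c * r⁻¹ := by
    intro r hr
    have hr0 : (0:ℝ) < r := lt_of_lt_of_le one_pos (hr₀.trans hr)
    rw [hlamH]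
    have h1 : ∫ ρ in Ioi r, H ρ ≤ ∫ ρ in Ioi r, D / c * (ρ^2)⁻¹ :=
      setIntegral_mono_on (part2 r hr) (hbint r hr0) measurableSet_Ioi
        (fun ρ hρ => hHbound ρ (hr.trans (le_of_lt hρ)))
    have h2 : ∫ ρ in Ioi r, D / c * (ρ^2)⁻¹ = D / c * r⁻¹ := by
      rw [integral_const_mul, aux_invsq_integral hr0]
    linarith
  refine ⟨part1, part2, ?_, ?_, ?_⟩
  · intro u hu v hv huv
    rw [hlamH, hlamH]
    exact setIntegral_mono_set (part2 u hu)
      ((ae_restrict_iff' measurableSet_Ioi).2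
        (ae_of_all _ fun ρ hρ => hHnn ρ (hu.trans (le_of_lt hρ))))
      (Ioi_subset_Ioi huv).eventuallyLE
  · rw [isBigO_iff]
    refine ⟨D / c, ?_⟩
    filter_upwards [eventually_ge_atTop r₀, eventually_ge_atTop (1:ℝ)] with r h1 h2
    have hr0 : (0:ℝ) < r := lt_of_lt_of_le one_pos h2
    rw [Real.norm_eq_abs, Real.norm_eq_abs, abs_of_nonneg (hlamnn r h1),
      abs_of_nonneg (by positivity), one_div]
    exact hlamle r h1
  · apply squeeze_zero' ((eventually_ge_atTop r₀).mono (fun r hr => hlamnn r hr))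
      ((eventually_ge_atTop r₀).mono (fun r hr => hlamle r hr))
    have h := (tendsto_inv_atTop_zero (𝕜 := ℝ)).const_mul (D / c)
    simpa using h
end

section
/- Under hypotheses (H), there exists a C² function ζ₂ on [0,∞) solving the homogeneous equation (12) on (0,∞), with ζ₂(0) = 0, ζ₂′(0) = 1, and ζ₂(r)/r → 1 as r → 0⁺; moreover ζ₂(r) > 0 for all sufficiently small r > 0. -/
open Filter MeasureTheory Set intervalIntegral

noncomputable section Stmt4Aux

variable (A γ K : ℝ → ℝ)

/-- integrating factor -/
def Qa : ℝ → ℝ := fun r => if r ≤ 0 then 0 else r^2 * Real.exp (∫ t in (1:ℝ)..r, (A t / t - γ t))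

/-- exponential bound constant -/
def Eba : ℝ → ℝ := fun T => Real.exp (∫ t in (0:ℝ)..T, |γ t|)

def inna (v : ℝ → ℝ) : ℝ → ℝ := fun s => ∫ t in (0:ℝ)..s, Qa A γ t * K t * v t

def FFa (v : ℝ → ℝ) : ℝ → ℝ := fun s => (Qa A γ s)⁻¹ * inna A γ K v s

variable {A γ K}

lemma Qa_pos {r : ℝ} (hr : 0 < r) : 0 < Qa A γ r := by
  rw [Qa, if_neg (not_le.2 hr)]; positivity

lemma Qa_nonneg (r : ℝ) : 0 ≤ Qa A γ r := by
  rcases le_or_gt r 0 with h | h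
  · rw [Qa, if_pos h]
  · exact (Qa_pos h).le

lemma h_contOn (hA : Continuous A) (hγ : Continuous γ) :
    ContinuousOn (fun t => A t / t - γ t) (Ioi 0) := by
  apply ContinuousOn.sub _ hγ.continuousOn
  exact hA.continuousOn.div continuous_id.continuousOn (fun t ht => ne_of_gt ht)

lemma h_intInt (hA : Continuous A) (hγ : Continuous γ) {t s : ℝ} (ht : 0 < t) (hs : 0 < s) :
    IntervalIntegrable (fun u => A u / u - γ u) volume t s := by
  apply ContinuousOn.intervalIntegrable
  apply (h_contOn hA hγ).mono
  intro x hx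
  rw [Set.mem_uIcc] at hx
  rcases hx with h | h
  · exact lt_of_lt_of_le ht h.1
  · exact lt_of_lt_of_le hs h.1

lemma Ea_hasDeriv (hA : Continuous A) (hγ : Continuous γ) {r : ℝ} (hr : 0 < r) :
    HasDerivAt (fun x => ∫ t in (1:ℝ)..x, (A t / t - γ t)) (A r / r - γ r) r := by
  apply intervalIntegral.integral_hasDerivAt_right (h_intInt hA hγ one_pos hr)
  · exact (h_contOn hA hγ).stronglyMeasurableAtFilter isOpen_Ioi r hr
  · exact (h_contOn hA hγ).continuousAt (isOpen_Ioi.mem_nhds hr)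

lemma Qa_hasDeriv (hA : Continuous A) (hγ : Continuous γ) {r : ℝ} (hr : 0 < r) :
    HasDerivAt (Qa A γ) ((2 / r + A r / r - γ r) * Qa A γ r) r := by
  have hE := Ea_hasDeriv hA hγ hr
  have h1 : HasDerivAt (fun x : ℝ => x ^ 2 * Real.exp (∫ t in (1:ℝ)..x, (A t / t - γ t)))
      ((2 * r) * Real.exp (∫ t in (1:ℝ)..r, (A t / t - γ t)) +
        r ^ 2 * (Real.exp (∫ t in (1:ℝ)..r, (A t / t - γ t)) * (A r / r - γ r))) r := by
    have hp : HasDerivAt (fun x : ℝ => x ^ 2) (2 * r) r := by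
      simpa using hasDerivAt_pow 2 r
    exact hp.mul hE.exp
  have h2 : Qa A γ =ᶠ[nhds r]
      fun x : ℝ => x ^ 2 * Real.exp (∫ t in (1:ℝ)..x, (A t / t - γ t)) := by
    filter_upwards [isOpen_Ioi.mem_nhds hr] with x hx
    rw [Qa, if_neg (not_le.2 hx)]
  have h3 := h1.congr_of_eventuallyEq h2
  have hQr : Qa A γ r = r ^ 2 * Real.exp (∫ t in (1:ℝ)..r, (A t / t - γ t)) :=
    if_neg (not_le.2 hr)
  refine h3.congr_deriv ?_
  rw [hQr]
  field_simp
  ring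

lemma Qa_contOn (hA : Continuous A) (hγ : Continuous γ) : ContinuousOn (Qa A γ) (Ioi 0) :=
  fun r hr => ((Qa_hasDeriv hA hγ hr).continuousAt).continuousWithinAt

lemma Eba_pos (T : ℝ) : 0 < Eba γ T := Real.exp_pos _

lemma Eba_one_le (hγ : Continuous γ) {T : ℝ} (hT : 0 ≤ T) : 1 ≤ Eba γ T := by
  rw [Eba, ← Real.exp_zero]
  apply Real.exp_le_exp.2
  apply intervalIntegral.integral_nonneg hT
  intro u _; exact abs_nonneg _

lemma Eba_mono (hγ : Continuous γ) {s T : ℝ} (h0 : 0 ≤ s) (hsT : s ≤ T) :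
    Eba γ s ≤ Eba γ T := by
  apply Real.exp_le_exp.2
  apply intervalIntegral.integral_mono_interval le_rfl h0 hsT
  · exact Filter.Eventually.of_forall (fun u => by positivity)
  · exact (hγ.abs.intervalIntegrable _ _)

/-- Key ratio bound for the integrating factor. -/
lemma Qa_le (hA : Continuous A) (hγ : Continuous γ) (hA0 : ∀ t, 0 ≤ A t)
    {t s : ℝ} (ht : 0 < t) (hts : t ≤ s) :
    Qa A γ t ≤ Qa A γ s * Eba γ s := by
  have hs : 0 < s := lt_of_lt_of_le ht hts
  have hadd : (∫ u in (1:ℝ)..t, (A u / u - γ u)) + ∫ u in t..s, (A u / u - γ u)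
      = ∫ u in (1:ℝ)..s, (A u / u - γ u) :=
    intervalIntegral.integral_add_adjacent_intervals (h_intInt hA hγ one_pos ht)
      (h_intInt hA hγ ht hs)
  have hAint : IntervalIntegrable (fun u => A u / u) volume t s := by
    apply ContinuousOn.intervalIntegrable
    apply (hA.continuousOn.div continuous_id.continuousOn (fun x hx => ne_of_gt hx)).mono
    rw [Set.uIcc_of_le hts]
    intro x hx
    exact lt_of_lt_of_le ht hx.1
  have hsplit : (∫ u in t..s, (A u / u - γ u))
      = (∫ u in t..s, A u / u) - ∫ u in t..s, γ u :=
    intervalIntegral.integral_sub hAint (hγ.intervalIntegrable _ _)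
  have h1 : 0 ≤ ∫ u in t..s, A u / u := by
    apply intervalIntegral.integral_nonneg hts
    intro u hu
    have hu0 : 0 < u := lt_of_lt_of_le ht hu.1
    exact div_nonneg (hA0 u) hu0.le
  have h2 : (∫ u in t..s, γ u) ≤ ∫ u in (0:ℝ)..s, |γ u| := by
    calc (∫ u in t..s, γ u) ≤ ∫ u in t..s, |γ u| := by
          apply intervalIntegral.integral_mono_on hts (hγ.intervalIntegrable _ _)
            (hγ.abs.intervalIntegrable _ _)
          exact fun x _ => le_abs_self _
      _ ≤ ∫ u in (0:ℝ)..s, |γ u| := by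
          apply intervalIntegral.integral_mono_interval ht.le hts le_rfl
          · exact Filter.Eventually.of_forall (fun u => by positivity)
          · exact (hγ.abs.intervalIntegrable _ _)
  have hEle : (∫ u in (1:ℝ)..t, (A u / u - γ u))
      ≤ (∫ u in (1:ℝ)..s, (A u / u - γ u)) + ∫ u in (0:ℝ)..s, |γ u| := by
    have : (∫ u in (1:ℝ)..t, (A u / u - γ u))
        = (∫ u in (1:ℝ)..s, (A u / u - γ u)) - ∫ u in t..s, (A u / u - γ u) := by
      linarith [hadd]
    rw [this, hsplit]
    linarith
  have hQt : Qa A γ t = t ^ 2 * Real.exp (∫ u in (1:ℝ)..t, (A u / u - γ u)) :=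
    if_neg (not_le.2 ht)
  have hQs : Qa A γ s = s ^ 2 * Real.exp (∫ u in (1:ℝ)..s, (A u / u - γ u)) :=
    if_neg (not_le.2 hs)
  rw [hQt, hQs, Eba, mul_assoc, ← Real.exp_add]
  have hts2 : t ^ 2 ≤ s ^ 2 := by nlinarith
  exact mul_le_mul hts2 (Real.exp_le_exp.2 hEle) (Real.exp_pos _).le (by positivity)
lemma intInt_of_bound {f : ℝ → ℝ} {X B : ℝ} (hX : 0 ≤ X)
    (hf : ContinuousOn f (Ioc 0 X)) (hB : ∀ t ∈ Ioc 0 X, |f t| ≤ B) :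
    IntervalIntegrable f volume 0 X := by
  rw [intervalIntegrable_iff_integrableOn_Ioc_of_le hX]
  apply MeasureTheory.Integrable.mono' (integrable_const B)
    (hf.aestronglyMeasurable measurableSet_Ioc)
  exact (ae_restrict_iff' measurableSet_Ioc).2
    (Filter.Eventually.of_forall (fun t ht => by simpa [Real.norm_eq_abs] using hB t ht))

lemma rho_contOn (hA : Continuous A) (hγ : Continuous γ) (hK : Continuous K)
    {v : ℝ → ℝ} {X : ℝ} (hv : ContinuousOn v (Icc 0 X)) :
    ContinuousOn (fun t => Qa A γ t * K t * v t) (Ioc 0 X) := by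
  apply ContinuousOn.mul
  · exact (((Qa_contOn hA hγ).mono (fun x hx => hx.1)).mul hK.continuousOn)
  · exact hv.mono (fun x hx => ⟨hx.1.le, hx.2⟩)

lemma rho_bound (hA : Continuous A) (hγ : Continuous γ)
    (hA0 : ∀ t, 0 ≤ A t) {v ψ : ℝ → ℝ} {s X Kb : ℝ} (hsX : s ≤ X)
    (hKb : ∀ t ∈ Icc 0 X, |K t| ≤ Kb)
    (hbd : ∀ t ∈ Icc 0 X, |v t| ≤ ψ t) :
    ∀ t ∈ Ioc 0 s, |Qa A γ t * K t * v t| ≤ Qa A γ s * Eba γ X * Kb * ψ t := by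
  intro t ht
  have ht0 : 0 < t := ht.1
  have hts : t ≤ s := ht.2
  have htX : t ∈ Icc 0 X := ⟨ht0.le, hts.trans hsX⟩
  have hs0 : 0 < s := ht0.trans_le hts
  have e1 : Qa A γ t ≤ Qa A γ s * Eba γ X :=
    (Qa_le hA hγ hA0 ht0 hts).trans
      (mul_le_mul_of_nonneg_left (Eba_mono hγ hs0.le hsX) (Qa_nonneg _))
  have e2 : |K t| ≤ Kb := hKb t htX
  have e3 : |v t| ≤ ψ t := hbd t htX
  have hKb0 : 0 ≤ Kb := (abs_nonneg _).trans e2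
  have hq0 : 0 ≤ Qa A γ s * Eba γ X := mul_nonneg (Qa_nonneg _) (Eba_pos _).le
  rw [abs_mul, abs_mul, abs_of_nonneg (Qa_nonneg _)]
  exact mul_le_mul (mul_le_mul e1 e2 (abs_nonneg _) hq0) e3 (abs_nonneg _)
    (mul_nonneg hq0 hKb0)

lemma rho_intInt (hA : Continuous A) (hγ : Continuous γ) (hK : Continuous K)
    (hA0 : ∀ t, 0 ≤ A t) {v : ℝ → ℝ} {s X : ℝ} (hs : 0 ≤ s) (hsX : s ≤ X)
    (hv : ContinuousOn v (Icc 0 X)) :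
    IntervalIntegrable (fun t => Qa A γ t * K t * v t) volume 0 s := by
  obtain ⟨Mv, hMv⟩ := isCompact_Icc.exists_bound_of_continuousOn hv
  obtain ⟨Kb, hKb⟩ := isCompact_Icc.exists_bound_of_continuousOn
    (hK.continuousOn : ContinuousOn K (Icc 0 X))
  have hMv' : ∀ t ∈ Icc (0:ℝ) X, |v t| ≤ (fun _ => Mv) t := by
    intro t ht; simpa [Real.norm_eq_abs] using hMv t ht
  have hKb' : ∀ t ∈ Icc (0:ℝ) X, |K t| ≤ Kb := by
    intro t ht; simpa [Real.norm_eq_abs] using hKb t ht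
  apply intInt_of_bound hs
    ((rho_contOn hA hγ hK hv).mono (fun x hx => ⟨hx.1, le_trans hx.2 hsX⟩))
  exact rho_bound hA hγ hA0 hsX hKb' hMv'

lemma inna_contOn (hA : Continuous A) (hγ : Continuous γ) (hK : Continuous K)
    (hA0 : ∀ t, 0 ≤ A t) {v : ℝ → ℝ} {X : ℝ} (hX : 0 ≤ X)
    (hv : ContinuousOn v (Icc 0 X)) :
    ContinuousOn (inna A γ K v) (Icc 0 X) := by
  have : IntegrableOn (fun t => Qa A γ t * K t * v t) (uIcc 0 X) volume := by
    rw [uIcc_of_le hX, integrableOn_Icc_iff_integrableOn_Ioc]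
    exact (rho_intInt hA hγ hK hA0 hX le_rfl hv).1
  have h2 := intervalIntegral.continuousOn_primitive_interval this
  rw [uIcc_of_le hX] at h2
  exact h2

/-- The fundamental estimate on FFa. -/
lemma FF_bound (hA : Continuous A) (hγ : Continuous γ) (hK : Continuous K)
    (hA0 : ∀ t, 0 ≤ A t) {v ψ : ℝ → ℝ} {T Kb : ℝ}
    (hv : ContinuousOn v (Icc 0 T)) (hψ : Continuous ψ) (hψ0 : ∀ t, 0 ≤ ψ t)
    (hKb : ∀ t ∈ Icc 0 T, |K t| ≤ Kb)
    (hbd : ∀ t ∈ Icc 0 T, |v t| ≤ ψ t) :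
    ∀ s ∈ Icc 0 T, |FFa A γ K v s| ≤ Eba γ T * Kb * ∫ t in (0:ℝ)..s, ψ t := by
  intro s hs
  rcases eq_or_lt_of_le hs.1 with h0 | h0
  · simp only [FFa, inna, ← h0]
    simp
  have hKb0 : 0 ≤ Kb := (abs_nonneg _).trans (hKb 0 ⟨le_rfl, hs.1.trans hs.2⟩)
  have hψint : IntervalIntegrable ψ volume 0 s := hψ.intervalIntegrable _ _
  have hinn : |inna A γ K v s| ≤ (Qa A γ s * Eba γ T * Kb) * ∫ t in (0:ℝ)..s, ψ t := by
    have hb : ∀ᵐ t ∂(volume.restrict (Set.uIoc (0:ℝ) s)),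
        ‖Qa A γ t * K t * v t‖ ≤ Qa A γ s * Eba γ T * Kb * ψ t := by
      rw [uIoc_of_le hs.1]
      exact (ae_restrict_iff' measurableSet_Ioc).2 (Filter.Eventually.of_forall
        (fun t ht => by
          rw [Real.norm_eq_abs]
          exact rho_bound hA hγ hA0 hs.2 hKb hbd t ht))
    have := intervalIntegral.norm_integral_le_abs_of_norm_le hb
      (((continuous_const.mul hψ).intervalIntegrable _ _) :
        IntervalIntegrable (fun t => Qa A γ s * Eba γ T * Kb * ψ t) volume 0 s)
    rw [Real.norm_eq_abs] at this
    calc |inna A γ K v s| ≤ |∫ t in (0:ℝ)..s, Qa A γ s * Eba γ T * Kb * ψ t| := this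
      _ = (Qa A γ s * Eba γ T * Kb) * ∫ t in (0:ℝ)..s, ψ t := by
          rw [intervalIntegral.integral_const_mul, abs_of_nonneg (mul_nonneg
            (mul_nonneg (mul_nonneg (Qa_nonneg _) (Eba_pos _).le) hKb0)
            (intervalIntegral.integral_nonneg h0.le (fun u _ => hψ0 u)))]
  have hQ0 : 0 < Qa A γ s := Qa_pos h0
  simp only [FFa]
  rw [abs_mul, abs_of_nonneg (inv_nonneg.2 hQ0.le)]
  calc (Qa A γ s)⁻¹ * |inna A γ K v s|
      ≤ (Qa A γ s)⁻¹ * ((Qa A γ s * Eba γ T * Kb) * ∫ t in (0:ℝ)..s, ψ t) :=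
        mul_le_mul_of_nonneg_left hinn (inv_nonneg.2 hQ0.le)
    _ = Eba γ T * Kb * ∫ t in (0:ℝ)..s, ψ t := by
        field_simp
/-- Linear bound on FFa from a constant bound on v. -/
lemma FF_lin (hA : Continuous A) (hγ : Continuous γ) (hK : Continuous K)
    (hA0 : ∀ t, 0 ≤ A t) {v : ℝ → ℝ} {T Kb Mv : ℝ} (hT : 0 ≤ T)
    (hv : ContinuousOn v (Icc 0 T))
    (hKb : ∀ t ∈ Icc 0 T, |K t| ≤ Kb)
    (hMv : ∀ t ∈ Icc 0 T, |v t| ≤ Mv) :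
    ∀ s ∈ Icc 0 T, |FFa A γ K v s| ≤ (Eba γ T * Kb * Mv) * s := by
  intro s hsI
  have hMv0 : 0 ≤ Mv := (abs_nonneg _).trans (hMv 0 ⟨le_rfl, hT⟩)
  have h := FF_bound hA hγ hK hA0 hv (continuous_const : Continuous fun _ => Mv)
    (fun _ => hMv0) hKb hMv s hsI
  calc |FFa A γ K v s| ≤ Eba γ T * Kb * ∫ _t in (0:ℝ)..s, Mv := h
    _ = (Eba γ T * Kb * Mv) * s := by
        rw [intervalIntegral.integral_const, smul_eq_mul]
        ring

lemma FF_contOn_Ioc (hA : Continuous A) (hγ : Continuous γ) (hK : Continuous K)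
    (hA0 : ∀ t, 0 ≤ A t) {v : ℝ → ℝ} {x T : ℝ} (hx : 0 ≤ x) (hxT : x ≤ T)
    (hv : ContinuousOn v (Icc 0 T)) :
    ContinuousOn (FFa A γ K v) (Ioc 0 x) := by
  apply ContinuousOn.mul
  · exact ((Qa_contOn hA hγ).mono (fun y hy => hy.1)).inv₀
      (fun y hy => (Qa_pos hy.1).ne')
  · exact (inna_contOn hA hγ hK hA0 (hx.trans hxT) hv).mono
      (fun y hy => ⟨hy.1.le, hy.2.trans hxT⟩)

lemma FF_intInt (hA : Continuous A) (hγ : Continuous γ) (hK : Continuous K)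
    (hA0 : ∀ t, 0 ≤ A t) {v : ℝ → ℝ} {x T : ℝ} (hx : 0 ≤ x) (hxT : x ≤ T)
    (hv : ContinuousOn v (Icc 0 T)) :
    IntervalIntegrable (FFa A γ K v) volume 0 x := by
  obtain ⟨Mv, hMv⟩ := isCompact_Icc.exists_bound_of_continuousOn hv
  obtain ⟨Kb, hKb⟩ := isCompact_Icc.exists_bound_of_continuousOn
    (hK.continuousOn : ContinuousOn K (Icc 0 T))
  have hMv' : ∀ t ∈ Icc (0:ℝ) T, |v t| ≤ Mv := by
    intro t ht; simpa [Real.norm_eq_abs] using hMv t ht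
  have hKb' : ∀ t ∈ Icc (0:ℝ) T, |K t| ≤ Kb := by
    intro t ht; simpa [Real.norm_eq_abs] using hKb t ht
  have hMv0 : 0 ≤ Mv := (abs_nonneg _).trans (hMv' 0 ⟨le_rfl, hx.trans hxT⟩)
  have hKb0 : 0 ≤ Kb := (abs_nonneg _).trans (hKb' 0 ⟨le_rfl, hx.trans hxT⟩)
  apply intInt_of_bound hx (FF_contOn_Ioc hA hγ hK hA0 hx hxT hv)
    (B := (Eba γ T * Kb * Mv) * T)
  intro t ht
  calc |FFa A γ K v t| ≤ (Eba γ T * Kb * Mv) * t :=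
        FF_lin hA hγ hK hA0 (hx.trans hxT) hv hKb' hMv' t ⟨ht.1.le, ht.2.trans hxT⟩
    _ ≤ (Eba γ T * Kb * Mv) * T := by
        exact mul_le_mul_of_nonneg_left (ht.2.trans hxT)
          (mul_nonneg (mul_nonneg (Eba_pos _).le hKb0) hMv0)

lemma FF_prim_contOn (hA : Continuous A) (hγ : Continuous γ) (hK : Continuous K)
    (hA0 : ∀ t, 0 ≤ A t) {v : ℝ → ℝ} {T : ℝ} (hT : 0 ≤ T)
    (hv : ContinuousOn v (Icc 0 T)) :
    ContinuousOn (fun x => ∫ s in (0:ℝ)..x, FFa A γ K v s) (Icc 0 T) := by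
  have : IntegrableOn (FFa A γ K v) (uIcc 0 T) volume := by
    rw [uIcc_of_le hT, integrableOn_Icc_iff_integrableOn_Ioc]
    exact (FF_intInt hA hγ hK hA0 hT le_rfl hv).1
  have h2 := intervalIntegral.continuousOn_primitive_interval this
  rw [uIcc_of_le hT] at h2
  exact h2

lemma integral_exp_mul' {Λ : ℝ} (hΛ : 0 < Λ) (x : ℝ) :
    ∫ s in (0:ℝ)..x, Real.exp (Λ * s) = (Real.exp (Λ * x) - 1) / Λ := by
  have hd : ∀ s ∈ uIcc (0:ℝ) x, HasDerivAt (fun y => Real.exp (Λ * y) / Λ)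
      (Real.exp (Λ * s)) s := by
    intro s _
    have h1 : HasDerivAt (fun y : ℝ => Λ * y) Λ s := by
      simpa using (hasDerivAt_id s).const_mul Λ
    have := (h1.exp).div_const Λ
    simpa [mul_comm, mul_div_assoc, mul_div_cancel_left₀ _ hΛ.ne'] using this
  rw [intervalIntegral.integral_eq_sub_of_hasDerivAt hd
    ((Real.continuous_exp.comp (continuous_const.mul continuous_id)).intervalIntegrable _ _)]
  simp [Real.exp_zero]
  ring

lemma FF_integral_sub (hA : Continuous A) (hγ : Continuous γ) (hK : Continuous K)
    (hA0 : ∀ t, 0 ≤ A t) {v₁ v₂ : ℝ → ℝ} {x T : ℝ} (hx : 0 ≤ x) (hxT : x ≤ T)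
    (hv₁ : ContinuousOn v₁ (Icc 0 T)) (hv₂ : ContinuousOn v₂ (Icc 0 T)) :
    (∫ s in (0:ℝ)..x, FFa A γ K v₁ s) - (∫ s in (0:ℝ)..x, FFa A γ K v₂ s)
      = ∫ s in (0:ℝ)..x, FFa A γ K (fun t => v₁ t - v₂ t) s := by
  rw [← intervalIntegral.integral_sub (FF_intInt hA hγ hK hA0 hx hxT hv₁)
    (FF_intInt hA hγ hK hA0 hx hxT hv₂)]
  apply intervalIntegral.integral_congr
  intro s hsu
  rw [uIcc_of_le hx] at hsu
  have hsT : 0 ≤ s ∧ s ≤ T := ⟨hsu.1, hsu.2.trans hxT⟩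
  simp only [FFa, Pi.sub_apply]
  rw [← mul_sub]
  congr 1
  rw [inna, inna, inna, ← intervalIntegral.integral_sub
    (rho_intInt hA hγ hK hA0 hsT.1 hsT.2 hv₁) (rho_intInt hA hγ hK hA0 hsT.1 hsT.2 hv₂)]
  apply intervalIntegral.integral_congr
  intro t _
  ring

/-- Master estimate used both for the contraction and uniqueness. -/
lemma master_est (hA : Continuous A) (hγ : Continuous γ) (hK : Continuous K)
    (hA0 : ∀ t, 0 ≤ A t) {u : ℝ → ℝ} {T Λ D Kb : ℝ} (hT : 0 < T) (hΛ : 1 ≤ Λ)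
    (hKb : ∀ t ∈ Icc 0 T, |K t| ≤ Kb)
    (hu : ContinuousOn u (Icc 0 T)) (hD : 0 ≤ D)
    (hub : ∀ t ∈ Icc 0 T, |u t| ≤ D * Real.exp (Λ * t)) :
    ∀ x ∈ Icc 0 T, |∫ s in (0:ℝ)..x, FFa A γ K u s|
      ≤ Eba γ T * Kb * D * Real.exp (Λ * x) / Λ ^ 2 := by
  intro x hx
  have hΛ0 : 0 < Λ := lt_of_lt_of_le one_pos hΛ
  have hKb0 : 0 ≤ Kb := (abs_nonneg _).trans (hKb 0 ⟨le_rfl, hT.le⟩)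
  have hE0 : 0 < Eba γ T := Eba_pos _
  have step1 : ∀ s ∈ Icc (0:ℝ) T, |FFa A γ K u s|
      ≤ (Eba γ T * Kb * D / Λ) * Real.exp (Λ * s) := by
    intro s hsI
    have hψ : Continuous fun t => D * Real.exp (Λ * t) :=
      continuous_const.mul (Real.continuous_exp.comp (continuous_const.mul continuous_id))
    have h := FF_bound hA hγ hK hA0 hu hψ (fun t => by positivity) hKb hub s hsI
    calc |FFa A γ K u s| ≤ Eba γ T * Kb * ∫ t in (0:ℝ)..s, D * Real.exp (Λ * t) := h
      _ = Eba γ T * Kb * (D * ((Real.exp (Λ * s) - 1) / Λ)) := by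
          rw [intervalIntegral.integral_const_mul, integral_exp_mul' hΛ0]
      _ ≤ (Eba γ T * Kb * D / Λ) * Real.exp (Λ * s) := by
          have h3 : Eba γ T * Kb * (D * ((Real.exp (Λ * s) - 1) / Λ))
              = Eba γ T * Kb * D * (Real.exp (Λ * s) - 1) / Λ := by ring
          have h4 : (Eba γ T * Kb * D / Λ) * Real.exp (Λ * s)
              = Eba γ T * Kb * D * Real.exp (Λ * s) / Λ := by ring
          rw [h3, h4, div_le_div_iff_of_pos_right hΛ0]
          nlinarith [Real.exp_pos (Λ * s), mul_nonneg (mul_nonneg hE0.le hKb0) hD]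
  have hb : ∀ᵐ s ∂(volume.restrict (Set.uIoc (0:ℝ) x)),
      ‖FFa A γ K u s‖ ≤ (Eba γ T * Kb * D / Λ) * Real.exp (Λ * s) := by
    rw [uIoc_of_le hx.1]
    refine (ae_restrict_iff' measurableSet_Ioc).2 (Filter.Eventually.of_forall (fun s hsI => ?_))
    rw [Real.norm_eq_abs]
    exact step1 s ⟨hsI.1.le, hsI.2.trans hx.2⟩
  have hgint : IntervalIntegrable (fun s => (Eba γ T * Kb * D / Λ) * Real.exp (Λ * s)) volume 0 x :=
    (continuous_const.mul (Real.continuous_exp.comp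
      (continuous_const.mul continuous_id))).intervalIntegrable _ _
  have h2 := intervalIntegral.norm_integral_le_abs_of_norm_le hb hgint
  rw [Real.norm_eq_abs] at h2
  calc |∫ s in (0:ℝ)..x, FFa A γ K u s|
      ≤ |∫ s in (0:ℝ)..x, (Eba γ T * Kb * D / Λ) * Real.exp (Λ * s)| := h2
    _ = (Eba γ T * Kb * D / Λ) * ((Real.exp (Λ * x) - 1) / Λ) := by
        rw [intervalIntegral.integral_const_mul, integral_exp_mul' hΛ0, abs_of_nonneg
          (mul_nonneg (div_nonneg (mul_nonneg (mul_nonneg hE0.le hKb0) hD) hΛ0.le)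
            (div_nonneg (by linarith [Real.one_le_exp (mul_nonneg hΛ0.le hx.1)]) hΛ0.le))]
    _ ≤ Eba γ T * Kb * D * Real.exp (Λ * x) / Λ ^ 2 := by
        have h3 : (Eba γ T * Kb * D / Λ) * ((Real.exp (Λ * x) - 1) / Λ)
            = Eba γ T * Kb * D * (Real.exp (Λ * x) - 1) / Λ ^ 2 := by ring
        rw [h3, div_le_div_iff_of_pos_right (by positivity : (0:ℝ) < Λ ^ 2)]
        nlinarith [Real.exp_pos (Λ * x), mul_nonneg (mul_nonneg hE0.le hKb0) hD]
lemma half_bound {E Kb D Λ z x : ℝ} (hΛ : 1 ≤ Λ) (h2 : 2 * (E * Kb) ≤ Λ)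
    (hE0 : 0 ≤ E) (hKb0 : 0 ≤ Kb) (hD : 0 ≤ D)
    (hz : |z| ≤ E * Kb * D * Real.exp (Λ * x) / Λ ^ 2) :
    Real.exp (-(Λ * x)) * |z| ≤ 1 / 2 * D := by
  have hΛ0 : 0 < Λ := lt_of_lt_of_le one_pos hΛ
  have hEKb : E * Kb / Λ ^ 2 ≤ 1 / 2 := by
    rw [div_le_iff₀ (by positivity)]
    nlinarith
  have h3 : Real.exp (-(Λ * x)) * |z|
      ≤ Real.exp (-(Λ * x)) * (E * Kb * D * Real.exp (Λ * x) / Λ ^ 2) :=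
    mul_le_mul_of_nonneg_left hz (Real.exp_pos _).le
  have heq : Real.exp (-(Λ * x)) * (E * Kb * D * Real.exp (Λ * x) / Λ ^ 2)
      = (E * Kb / Λ ^ 2) * D := by
    rw [Real.exp_neg]
    field_simp
  have h4 := mul_le_mul_of_nonneg_right hEKb hD
  linarith

/-- Existence of a solution of the integral equation on `[0,T]`. -/
lemma exists_on (hA : Continuous A) (hγ : Continuous γ) (hK : Continuous K)
    (hA0 : ∀ t, 0 ≤ A t) {T : ℝ} (hT : 0 < T) :
    ∃ v : ℝ → ℝ, Continuous v ∧
      ∀ x ∈ Icc 0 T, v x = 1 + ∫ s in (0:ℝ)..x, FFa A γ K v s := by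
  obtain ⟨Kb, hKbn⟩ := isCompact_Icc.exists_bound_of_continuousOn
    (hK.continuousOn : ContinuousOn K (Icc 0 T))
  have hKb : ∀ t ∈ Icc (0:ℝ) T, |K t| ≤ Kb := by
    intro t ht; simpa [Real.norm_eq_abs] using hKbn t ht
  have hKb0 : 0 ≤ Kb := (abs_nonneg _).trans (hKb 0 ⟨le_rfl, hT.le⟩)
  set Λ : ℝ := max 1 (2 * (Eba γ T * Kb)) with hΛdef
  have hΛ1 : 1 ≤ Λ := le_max_left _ _
  have hΛ2 : 2 * (Eba γ T * Kb) ≤ Λ := le_max_right _ _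
  have hΛ0 : 0 < Λ := lt_of_lt_of_le one_pos hΛ1
  set X := C(Icc (0:ℝ) T, ℝ)
  haveI : Nonempty X := ⟨ContinuousMap.const _ 0⟩
  -- the extension operator
  set ext : X → ℝ → ℝ := fun w t => Real.exp (Λ * t) * IccExtend hT.le w t with hextdef
  have hext_cont : ∀ w : X, Continuous (ext w) := by
    intro w
    exact (Real.continuous_exp.comp (continuous_const.mul continuous_id)).mul
      (w.continuous.comp continuous_projIcc)
  -- the Picard operator
  set Φfun : X → ℝ → ℝ := fun w x =>
    Real.exp (-(Λ * x)) * (1 + ∫ s in (0:ℝ)..x, FFa A γ K (ext w) s) with hΦdef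
  have hΦcont : ∀ w : X, ContinuousOn (Φfun w) (Icc 0 T) := by
    intro w
    apply ContinuousOn.mul
    · exact (Real.continuous_exp.comp (continuous_const.mul continuous_id).neg).continuousOn
    · exact continuousOn_const.add
        (FF_prim_contOn hA hγ hK hA0 hT.le (hext_cont w).continuousOn)
  set Φ : X → X := fun w => ⟨(Icc (0:ℝ) T).restrict (Φfun w), (hΦcont w).restrict⟩ with hΦ
  -- contraction estimate
  have hcontr : ∀ w₁ w₂ : X, dist (Φ w₁) (Φ w₂) ≤ 1 / 2 * dist w₁ w₂ := by
    intro w₁ w₂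
    set D := dist w₁ w₂ with hDdef
    have hD0 : 0 ≤ D := dist_nonneg
    rw [ContinuousMap.dist_le (by positivity)]
    intro x
    have hxI : (x:ℝ) ∈ Icc (0:ℝ) T := x.2
    have hui : ∀ t ∈ Icc (0:ℝ) T, |ext w₁ t - ext w₂ t| ≤ D * Real.exp (Λ * t) := by
      intro t _
      have : ext w₁ t - ext w₂ t
          = Real.exp (Λ * t) * (IccExtend hT.le w₁ t - IccExtend hT.le w₂ t) := by
        simp only [hextdef]; ring
      rw [this, abs_mul, abs_of_nonneg (Real.exp_pos _).le]
      rw [mul_comm]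
      apply mul_le_mul_of_nonneg_right _ (Real.exp_pos _).le
      rw [← Real.dist_eq]
      exact ContinuousMap.dist_apply_le_dist _
    have hsub := FF_integral_sub hA hγ hK hA0 hxI.1 hxI.2
      (hext_cont w₁).continuousOn (hext_cont w₂).continuousOn
    have hme := master_est hA hγ hK hA0 hT hΛ1 hKb
      (((hext_cont w₁).sub (hext_cont w₂)).continuousOn) hD0 hui (x:ℝ) hxI
    have hdist : dist (Φ w₁ x) (Φ w₂ x)
        = Real.exp (-(Λ * (x:ℝ))) * |(∫ s in (0:ℝ)..(x:ℝ), FFa A γ K (ext w₁) s)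
            - ∫ s in (0:ℝ)..(x:ℝ), FFa A γ K (ext w₂) s| := by
      rw [Real.dist_eq]
      show |Φfun w₁ x - Φfun w₂ x| = _
      simp only [hΦdef]
      rw [← mul_sub, abs_mul, abs_of_nonneg (Real.exp_pos _).le]
      congr 1
      ring_nf
    rw [hdist, hsub]
    exact half_bound hΛ1 hΛ2 (Eba_pos _).le hKb0 hD0 hme
  -- fixed point
  have hlip : LipschitzWith (1/2 : NNReal) Φ := by
    apply LipschitzWith.of_dist_le_mul
    intro w₁ w₂
    have : ((1/2 : NNReal) : ℝ) = 1/2 := by norm_num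
    rw [this]
    exact hcontr w₁ w₂
  have hctr : ContractingWith (1/2 : NNReal) Φ :=
    ⟨by rw [← NNReal.coe_lt_coe]; norm_num, hlip⟩
  set w : X := ContractingWith.fixedPoint Φ hctr with hwdef
  have hfix : Φ w = w := hctr.fixedPoint_isFixedPt
  refine ⟨ext w, hext_cont w, ?_⟩
  intro x hx
  have h1 : w ⟨x, hx⟩ = Φfun w x := by
    conv_lhs => rw [← hfix]
    rfl
  have h2 : ext w x = Real.exp (Λ * x) * w ⟨x, hx⟩ := by
    show Real.exp (Λ * x) * IccExtend hT.le w x = _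
    rw [IccExtend_of_mem hT.le w hx]
  rw [h2, h1]
  simp only [hΦdef]
  rw [← mul_assoc, ← Real.exp_add, add_neg_cancel, Real.exp_zero, one_mul]
/-- Uniqueness of continuous solutions of the integral equation on `[0,T]`. -/
lemma unique_on (hA : Continuous A) (hγ : Continuous γ) (hK : Continuous K)
    (hA0 : ∀ t, 0 ≤ A t) {T : ℝ} (hT : 0 < T) {v₁ v₂ : ℝ → ℝ}
    (h₁c : ContinuousOn v₁ (Icc 0 T)) (h₂c : ContinuousOn v₂ (Icc 0 T))
    (h₁ : ∀ x ∈ Icc 0 T, v₁ x = 1 + ∫ s in (0:ℝ)..x, FFa A γ K v₁ s)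
    (h₂ : ∀ x ∈ Icc 0 T, v₂ x = 1 + ∫ s in (0:ℝ)..x, FFa A γ K v₂ s) :
    EqOn v₁ v₂ (Icc 0 T) := by
  obtain ⟨Kb, hKbn⟩ := isCompact_Icc.exists_bound_of_continuousOn
    (hK.continuousOn : ContinuousOn K (Icc 0 T))
  have hKb : ∀ t ∈ Icc (0:ℝ) T, |K t| ≤ Kb := by
    intro t ht; simpa [Real.norm_eq_abs] using hKbn t ht
  have hKb0 : 0 ≤ Kb := (abs_nonneg _).trans (hKb 0 ⟨le_rfl, hT.le⟩)
  set Λ : ℝ := max 1 (2 * (Eba γ T * Kb)) with hΛdef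
  have hΛ1 : 1 ≤ Λ := le_max_left _ _
  have hΛ2 : 2 * (Eba γ T * Kb) ≤ Λ := le_max_right _ _
  set φ : ℝ → ℝ := fun x => |v₁ x - v₂ x| * Real.exp (-(Λ * x)) with hφdef
  have hφc : ContinuousOn φ (Icc 0 T) :=
    ((h₁c.sub h₂c).abs).mul
      (Real.continuous_exp.comp (continuous_const.mul continuous_id).neg).continuousOn
  obtain ⟨x₀, hx₀I, hx₀max⟩ := isCompact_Icc.exists_isMaxOn ⟨0, ⟨le_rfl, hT.le⟩⟩ hφc
  set D := φ x₀ with hDdef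
  have hD0 : 0 ≤ D := mul_nonneg (abs_nonneg _) (Real.exp_pos _).le
  have hub : ∀ t ∈ Icc (0:ℝ) T, |v₁ t - v₂ t| ≤ D * Real.exp (Λ * t) := by
    intro t ht
    have h5 : |v₁ t - v₂ t| = φ t * Real.exp (Λ * t) := by
      simp only [hφdef]
      rw [mul_assoc, ← Real.exp_add, neg_add_cancel, Real.exp_zero, mul_one]
    rw [h5]
    exact mul_le_mul_of_nonneg_right (hx₀max ht) (Real.exp_pos _).le
  have key : ∀ x ∈ Icc (0:ℝ) T, φ x ≤ 1 / 2 * D := by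
    intro x hx
    have hδ : v₁ x - v₂ x = ∫ s in (0:ℝ)..x, FFa A γ K (fun t => v₁ t - v₂ t) s := by
      rw [h₁ x hx, h₂ x hx]
      have := FF_integral_sub hA hγ hK hA0 hx.1 hx.2 h₁c h₂c
      linarith [this]
    have hme := master_est hA hγ hK hA0 hT hΛ1 hKb (u := fun t => v₁ t - v₂ t) (h₁c.sub h₂c) hD0 hub x hx
    rw [← hδ] at hme
    calc φ x = Real.exp (-(Λ * x)) * |v₁ x - v₂ x| := by
          simp only [hφdef]; ring
      _ ≤ 1 / 2 * D := half_bound hΛ1 hΛ2 (Eba_pos _).le hKb0 hD0 hme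
  have hD_le : D ≤ 1 / 2 * D := key x₀ hx₀I
  have hD : D = 0 := by linarith
  intro x hx
  have h6 := key x hx
  rw [hD] at h6
  have h7 : 0 ≤ φ x := mul_nonneg (abs_nonneg _) (Real.exp_pos _).le
  have h8 : φ x = 0 := le_antisymm (by linarith) h7
  have h9 : |v₁ x - v₂ x| = 0 := by
    by_contra h
    have hbpos : 0 < |v₁ x - v₂ x| := lt_of_le_of_ne (abs_nonneg _) (Ne.symm h)
    have : 0 < φ x := mul_pos hbpos (Real.exp_pos _)
    linarith
  have := abs_eq_zero.1 h9
  linarith [this]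

/-- A global solution of the integral equation on `[0,∞)`. -/
lemma exists_glob (hA : Continuous A) (hγ : Continuous γ) (hK : Continuous K)
    (hA0 : ∀ t, 0 ≤ A t) :
    ∃ v : ℝ → ℝ, ContinuousOn v (Ici 0) ∧
      ∀ x : ℝ, 0 ≤ x → v x = 1 + ∫ s in (0:ℝ)..x, FFa A γ K v s := by
  have hEx : ∀ n : ℕ, ∃ vv : ℝ → ℝ, Continuous vv ∧
      ∀ x ∈ Icc 0 ((n:ℝ)+1), vv x = 1 + ∫ s in (0:ℝ)..x, FFa A γ K vv s :=
    fun n => exists_on hA hγ hK hA0 (by positivity)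
  choose w hwc hweq using hEx
  have hconsist : ∀ n m : ℕ, ∀ x, x ∈ Icc (0:ℝ) (min ((n:ℝ)+1) ((m:ℝ)+1)) →
      w n x = w m x := by
    intro n m
    have hminpos : (0:ℝ) < min ((n:ℝ)+1) ((m:ℝ)+1) := lt_min (by positivity) (by positivity)
    apply unique_on hA hγ hK hA0 hminpos (hwc n).continuousOn (hwc m).continuousOn
    · exact fun x hx => hweq n x ⟨hx.1, hx.2.trans (min_le_left _ _)⟩
    · exact fun x hx => hweq m x ⟨hx.1, hx.2.trans (min_le_right _ _)⟩
  set v : ℝ → ℝ := fun r => w ⌈r⌉₊ r with hvdef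
  have hceil : ∀ r : ℝ, 0 ≤ r → r ≤ (⌈r⌉₊ : ℝ) + 1 :=
    fun r _ => (Nat.le_ceil r).trans (by linarith)
  have hveqn : ∀ n : ℕ, ∀ x ∈ Icc (0:ℝ) ((n:ℝ)+1), v x = w n x := by
    intro n x hx
    exact hconsist ⌈x⌉₊ n x ⟨hx.1, le_min (hceil x hx.1) hx.2⟩
  have hvc : ContinuousOn v (Ici 0) := by
    intro r hr
    set n := ⌈r⌉₊ with hndef
    have hrn : r < (n:ℝ) + 1 := lt_of_le_of_lt (Nat.le_ceil r) (lt_add_one _)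
    have hmem : Ici (0:ℝ) ∩ Iio ((n:ℝ)+1) ∈ nhdsWithin r (Ici (0:ℝ)) :=
      Filter.inter_mem self_mem_nhdsWithin
        (mem_nhdsWithin_of_mem_nhds (Iio_mem_nhds hrn))
    apply ((hwc n).continuousWithinAt).congr_of_eventuallyEq
    · filter_upwards [hmem] with x hx
      exact hveqn n x ⟨hx.1, hx.2.le⟩
    · exact hveqn n r ⟨hr, hrn.le⟩
  refine ⟨v, hvc, ?_⟩
  intro x hx
  set n := ⌈x⌉₊ with hndef
  have hx2 : x ≤ (n:ℝ) + 1 := hceil x hx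
  have h1 : v x = w n x := hveqn n x ⟨hx, hx2⟩
  rw [h1, hweq n x ⟨hx, hx2⟩]
  congr 1
  apply intervalIntegral.integral_congr
  intro s hs
  rw [uIcc_of_le hx] at hs
  simp only [FFa]
  congr 1
  apply intervalIntegral.integral_congr
  intro t ht
  rw [uIcc_of_le hs.1] at ht
  show Qa A γ t * K t * w n t = Qa A γ t * K t * v t
  rw [hveqn n t ⟨ht.1, (ht.2.trans hs.2).trans hx2⟩]
/-- Full package: global solution with all calculus facts. -/
lemma main_construction (hA : Continuous A) (hγ : Continuous γ) (hK : Continuous K)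
    (hA0 : ∀ t, 0 ≤ A t) :
    ∃ v : ℝ → ℝ, ContinuousOn v (Ici 0) ∧ v 0 = 1 ∧
      (∀ r, 0 < r → HasDerivAt v (FFa A γ K v r) r) ∧
      (∀ r, 0 < r → HasDerivAt (FFa A γ K v)
          (K r * v r - (2 / r + A r / r - γ r) * FFa A γ K v r) r) ∧
      ContinuousOn (FFa A γ K v) (Ioi 0) ∧
      FFa A γ K v 0 = 0 ∧
      ∃ C, 0 ≤ C ∧ (∀ s ∈ Icc (0:ℝ) 1, |FFa A γ K v s| ≤ C * s) ∧
        ∀ x ∈ Icc (0:ℝ) 1, |v x - 1| ≤ C * x ^ 2 := by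
  obtain ⟨v, hvc, hveq⟩ := exists_glob hA hγ hK hA0
  have hv0 : v 0 = 1 := by
    have := hveq 0 le_rfl
    simpa [intervalIntegral.integral_same] using this
  have hF0 : FFa A γ K v 0 = 0 := by
    simp [FFa, inna, intervalIntegral.integral_same]
  have hvIcc : ∀ T : ℝ, ContinuousOn v (Icc 0 T) :=
    fun T => hvc.mono (fun x hx => hx.1)
  -- continuity of inna on Ioi 0
  have hinn_at : ∀ r : ℝ, 0 < r → ContinuousAt (inna A γ K v) r := by
    intro r hr
    have h1 : ContinuousOn (inna A γ K v) (Icc 0 (r+1)) :=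
      inna_contOn hA hγ hK hA0 (by linarith) (hvIcc (r+1))
    exact h1.continuousAt (Icc_mem_nhds (by linarith) (by linarith))
  have hQat : ∀ r : ℝ, 0 < r → ContinuousAt (Qa A γ) r :=
    fun r hr => (Qa_hasDeriv hA hγ hr).continuousAt
  have hFat : ∀ r : ℝ, 0 < r → ContinuousAt (FFa A γ K v) r := by
    intro r hr
    exact ((hQat r hr).inv₀ (Qa_pos hr).ne').mul (hinn_at r hr)
  have hFc : ContinuousOn (FFa A γ K v) (Ioi 0) :=
    fun r hr => (hFat r hr).continuousWithinAt
  -- derivative of v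
  have hFint : ∀ x : ℝ, 0 ≤ x → IntervalIntegrable (FFa A γ K v) volume 0 x :=
    fun x hx => FF_intInt hA hγ hK hA0 hx (le_of_lt (lt_add_one x)) (hvIcc (x+1))
  have hvD : ∀ r, 0 < r → HasDerivAt v (FFa A γ K v r) r := by
    intro r hr
    have hprim : HasDerivAt (fun x => 1 + ∫ s in (0:ℝ)..x, FFa A γ K v s)
        (FFa A γ K v r) r := by
      apply HasDerivAt.const_add
      apply intervalIntegral.integral_hasDerivAt_right (hFint r hr.le)
      · exact hFc.stronglyMeasurableAtFilter isOpen_Ioi r hr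
      · exact hFat r hr
    apply hprim.congr_of_eventuallyEq
    filter_upwards [isOpen_Ioi.mem_nhds hr] with x hx
    exact hveq x hx.le
  -- derivative of FFa
  have hρc : ContinuousOn (fun t => Qa A γ t * K t * v t) (Ioi 0) :=
    (((Qa_contOn hA hγ).mul hK.continuousOn).mul (hvc.mono (fun x hx => mem_Ici.2 (le_of_lt hx))))
  have hinnD : ∀ r, 0 < r → HasDerivAt (inna A γ K v) (Qa A γ r * K r * v r) r := by
    intro r hr
    apply intervalIntegral.integral_hasDerivAt_right
      (rho_intInt hA hγ hK hA0 hr.le (le_of_lt (lt_add_one r)) (hvIcc (r+1)))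
    · exact hρc.stronglyMeasurableAtFilter isOpen_Ioi r hr
    · exact hρc.continuousAt (isOpen_Ioi.mem_nhds hr)
  have hFD : ∀ r, 0 < r → HasDerivAt (FFa A γ K v)
      (K r * v r - (2 / r + A r / r - γ r) * FFa A γ K v r) r := by
    intro r hr
    have hQ0 : Qa A γ r ≠ 0 := (Qa_pos hr).ne'
    have h1 := ((Qa_hasDeriv hA hγ hr).inv hQ0).mul (hinnD r hr)
    have h2 : -((2 / r + A r / r - γ r) * Qa A γ r) / Qa A γ r ^ 2 * inna A γ K v r
        + (Qa A γ r)⁻¹ * (Qa A γ r * K r * v r)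
        = K r * v r - (2 / r + A r / r - γ r) * FFa A γ K v r := by
      simp only [FFa]
      field_simp
      ring
    replace h1 := h1.congr_deriv h2
    exact h1
  refine ⟨v, hvc, hv0, hvD, hFD, hFc, hF0, ?_⟩
  -- linear bound near 0
  obtain ⟨Kb, hKbn⟩ := isCompact_Icc.exists_bound_of_continuousOn
    (hK.continuousOn : ContinuousOn K (Icc 0 1))
  have hKb : ∀ t ∈ Icc (0:ℝ) 1, |K t| ≤ Kb := by
    intro t ht; simpa [Real.norm_eq_abs] using hKbn t ht
  obtain ⟨Mv, hMvn⟩ := isCompact_Icc.exists_bound_of_continuousOn (hvIcc 1)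
  have hMv : ∀ t ∈ Icc (0:ℝ) 1, |v t| ≤ Mv := by
    intro t ht; simpa [Real.norm_eq_abs] using hMvn t ht
  have hKb0 : 0 ≤ Kb := (abs_nonneg _).trans (hKb 0 ⟨le_rfl, one_pos.le⟩)
  have hMv0 : 0 ≤ Mv := (abs_nonneg _).trans (hMv 0 ⟨le_rfl, one_pos.le⟩)
  set C := Eba γ 1 * Kb * Mv with hCdef
  have hC0 : 0 ≤ C := mul_nonneg (mul_nonneg (Eba_pos _).le hKb0) hMv0
  have hlin : ∀ s ∈ Icc (0:ℝ) 1, |FFa A γ K v s| ≤ C * s :=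
    FF_lin hA hγ hK hA0 one_pos.le (hvIcc 1) hKb hMv
  refine ⟨C, hC0, hlin, ?_⟩
  intro x hx
  have hveq' : v x - 1 = ∫ s in (0:ℝ)..x, FFa A γ K v s := by
    rw [hveq x hx.1]; ring
  rw [hveq']
  have hb : ∀ᵐ s ∂(volume.restrict (Set.uIoc (0:ℝ) x)), ‖FFa A γ K v s‖ ≤ C * s := by
    rw [uIoc_of_le hx.1]
    refine (ae_restrict_iff' measurableSet_Ioc).2 (Filter.Eventually.of_forall (fun s hsI => ?_))
    rw [Real.norm_eq_abs]
    exact hlin s ⟨hsI.1.le, hsI.2.trans hx.2⟩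
  have h2 := intervalIntegral.norm_integral_le_abs_of_norm_le hb
    ((continuous_const.mul continuous_id).intervalIntegrable 0 x)
  rw [Real.norm_eq_abs] at h2
  calc |∫ s in (0:ℝ)..x, FFa A γ K v s| ≤ |∫ s in (0:ℝ)..x, C * s| := h2
    _ = C * (x ^ 2 / 2) := by
        rw [intervalIntegral.integral_const_mul, integral_id, abs_of_nonneg]
        · norm_num
        · apply mul_nonneg hC0
          norm_num
          positivity
    _ ≤ C * x ^ 2 := by nlinarith
end Stmt4Aux

/-- Under hypotheses (H), the homogeneous equation (12) admits a C² solution ζ₂ on [0,∞)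
with ζ₂(0)=0, ζ₂′(0)=1, ζ₂(r)/r → 1 as r → 0⁺, and ζ₂ > 0 near 0. -/
theorem stmt4 (d : ℕ) (hd : 1 ≤ d) (β ε : ℝ) (hβ : 0 < β) (hε : 0 < ε)
    (f b σ η : ℝ → ℝ)
    (hfc : ContinuousOn f (Ici 0)) (hbc : ContinuousOn b (Ici 0))
    (hσc : ContinuousOn σ (Ici 0)) (hηc : ContinuousOn η (Ici 0))
    (hσε : ∀ r ∈ Ici (0:ℝ), ε ≤ σ r)
    (g G μ : ℝ → ℝ)
    (hg : ∀ r, g r = 2 * r * b r / (σ r) ^ 2)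
    (hG : ∀ r, G r = ∫ ρ in (0:ℝ)..r, g ρ)
    (hμ : ∀ r, μ r = Real.exp (∫ s in (1:ℝ)..r, 1 / (s * (1 + η s ^ 2))))
    (H1 : ∃ r₀ ≥ (1:ℝ), ∀ r ≥ r₀, ε ≤ g r)
    (H2 : ∃ ε' < β * ε / 2, Tendsto (fun r => Real.exp (-ε' * r) * f r) atTop (nhds 0)) :
    ∃ ζ₂ : ℝ → ℝ, ContDiffOn ℝ 2 ζ₂ (Ici 0) ∧
      (∀ r > (0:ℝ), deriv (deriv ζ₂) r
          + (((d : ℝ) - 1) / (r * (1 + η r ^ 2)) - β * g r) * deriv ζ₂ r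
          - ((d : ℝ) - 1) / (r ^ 2 * (1 + η r ^ 2)) * ζ₂ r = 0) ∧
      ζ₂ 0 = 0 ∧
      derivWithin ζ₂ (Ici 0) 0 = 1 ∧
      Tendsto (fun r => ζ₂ r / r) (nhdsWithin 0 (Ioi 0)) (nhds 1) ∧
      ∃ δ > (0:ℝ), ∀ r ∈ Ioo (0:ℝ) δ, 0 < ζ₂ r := by
  have hmaxc : Continuous (fun r : ℝ => max r 0) := continuous_id.max continuous_const
  have hmaxm : ∀ r : ℝ, max r 0 ∈ Ici (0:ℝ) := fun r => le_max_right r 0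
  have hbcC : Continuous (fun r : ℝ => b (max r 0)) := hbc.comp_continuous hmaxc hmaxm
  have hσcC : Continuous (fun r : ℝ => σ (max r 0)) := hσc.comp_continuous hmaxc hmaxm
  have hηcC : Continuous (fun r : ℝ => η (max r 0)) := hηc.comp_continuous hmaxc hmaxm
  have hσc0 : ∀ r : ℝ, σ (max r 0) ≠ 0 := by
    intro r
    have := hσε (max r 0) (hmaxm r)
    exact ne_of_gt (lt_of_lt_of_le hε this)
  set Af : ℝ → ℝ := fun r => ((d:ℝ) - 1) / (1 + (η (max r 0)) ^ 2) with hAfdef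
  set γf : ℝ → ℝ := fun r => β * (2 * max r 0 * b (max r 0) / (σ (max r 0)) ^ 2) with hγfdef
  set Kf : ℝ → ℝ := fun r => β * (2 * b (max r 0) / (σ (max r 0)) ^ 2) with hKfdef
  have hd1 : (1:ℝ) ≤ (d:ℝ) := by exact_mod_cast hd
  have hAcont : Continuous Af := by
    apply continuous_const.div ((continuous_const.add (hηcC.pow 2)))
    intro r
    exact (by positivity : (0:ℝ) < 1 + η (max r 0) ^ 2).ne'
  have hγcont : Continuous γf := by
    apply continuous_const.mul
    apply Continuous.div ((continuous_const.mul hmaxc).mul hbcC) (hσcC.pow 2)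
    intro r
    exact pow_ne_zero 2 (hσc0 r)
  have hKcont : Continuous Kf := by
    apply continuous_const.mul
    apply Continuous.div (continuous_const.mul hbcC) (hσcC.pow 2)
    intro r
    exact pow_ne_zero 2 (hσc0 r)
  have hA0 : ∀ t, 0 ≤ Af t := by
    intro t
    apply div_nonneg (by linarith)
    positivity
  obtain ⟨v, hvc, hv0, hvD, hFD, hFc, hF0, C, hC0, hlin, hquad⟩ :=
    main_construction hAcont hγcont hKcont hA0
  set F : ℝ → ℝ := FFa Af γf Kf v with hFdef
  set ζ : ℝ → ℝ := fun r => r * v r with hζdef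
  have hζ0 : ζ 0 = 0 := by simp [hζdef]
  -- first derivative on (0,∞)
  have hζD : ∀ r, 0 < r → HasDerivAt ζ (v r + r * F r) r := by
    intro r hr
    have := (hasDerivAt_id' r).mul (hvD r hr)
    exact this.congr_deriv (by ring)
  have hderiv1 : ∀ x, 0 < x → deriv ζ x = v x + x * F x :=
    fun x hx => (hζD x hx).deriv
  -- W is the candidate first derivative
  set W : ℝ → ℝ := fun x => v x + x * F x with hWdef
  have hW0 : W 0 = 1 := by simp [hWdef, hv0]
  have hWD : ∀ r, 0 < r → HasDerivAt W
      (F r + (F r + r * (Kf r * v r - (2 / r + Af r / r - γf r) * F r))) r := by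
    intro r hr
    have h1 := (hvD r hr).add ((hasDerivAt_id' r).mul (hFD r hr))
    exact h1.congr_deriv (by ring)
  -- second derivative of ζ on (0,∞)
  have hζpp : ∀ r, 0 < r → deriv (deriv ζ) r
      = F r + (F r + r * (Kf r * v r - (2 / r + Af r / r - γf r) * F r)) := by
    intro r hr
    have hev : deriv ζ =ᶠ[nhds r] W := by
      filter_upwards [isOpen_Ioi.mem_nhds hr] with x hx
      exact hderiv1 x hx
    rw [hev.deriv_eq]
    exact (hWD r hr).deriv
  -- the tendsto fact for slopes
  have hset : Ici (0:ℝ) \ {0} = Ioi (0:ℝ) := Set.Ici_sdiff_left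
  have hvt : Tendsto v (nhdsWithin 0 (Ici (0:ℝ))) (nhds 1) := by
    have h1 := (hvc 0 (self_mem_Ici)).tendsto
    rwa [hv0] at h1
  have hvtIoi : Tendsto v (nhdsWithin 0 (Ioi (0:ℝ))) (nhds 1) :=
    hvt.mono_left (nhdsWithin_mono _ Ioi_subset_Ici_self)
  have hslope : Tendsto (slope ζ 0) (nhdsWithin 0 (Ici (0:ℝ) \ {0})) (nhds 1) := by
    rw [hset]
    apply hvtIoi.congr'
    filter_upwards [self_mem_nhdsWithin] with x hx
    rw [slope_def_field, hζ0]
    simp only [hζdef]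
    have hx0 : x ≠ 0 := ne_of_gt (mem_Ioi.mp hx)
    field_simp
    ring
  have hζ0' : HasDerivWithinAt ζ 1 (Ici (0:ℝ)) 0 := by
    rw [hasDerivWithinAt_iff_tendsto_slope]
    exact hslope
  have hu : UniqueDiffOn ℝ (Ici (0:ℝ)) := uniqueDiffOn_Ici 0
  -- continuity of F on Ici 0
  have hFIci : ContinuousOn F (Ici (0:ℝ)) := by
    intro x hx
    rcases (mem_Ici.mp hx).eq_or_lt with h0 | h0
    · rw [← h0]
      unfold ContinuousWithinAt
      rw [hF0]
      have hevF : ∀ᶠ t in nhdsWithin (0:ℝ) (Ici (0:ℝ)), ‖F t‖ ≤ C * t := by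
        filter_upwards [Filter.inter_mem self_mem_nhdsWithin
          (mem_nhdsWithin_of_mem_nhds (Iic_mem_nhds one_pos))] with t ht
        rw [Real.norm_eq_abs]
        exact hlin t ⟨ht.1, ht.2⟩
      apply squeeze_zero_norm' hevF
      have h0 : Tendsto (fun t : ℝ => C * t) (nhds 0) (nhds (C * 0)) :=
        (continuous_const.mul continuous_id).tendsto 0
      rw [mul_zero] at h0
      exact h0.mono_left nhdsWithin_le_nhds
    · exact (hFc x h0).mono_of_mem_nhdsWithin (mem_nhdsWithin_of_mem_nhds (isOpen_Ioi.mem_nhds h0))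
  -- derivWithin ζ = W on Ici 0
  have hWd : EqOn (derivWithin ζ (Ici (0:ℝ))) W (Ici (0:ℝ)) := by
    intro x hx
    rcases (mem_Ici.mp hx).eq_or_lt with h0 | h0
    · rw [← h0, hζ0'.derivWithin (hu 0 self_mem_Ici), hW0]
    · rw [((hζD x h0).hasDerivWithinAt).derivWithin (hu x hx)]
  -- HasDerivWithinAt W 0 at 0
  have hW0' : HasDerivWithinAt W 0 (Ici (0:ℝ)) 0 := by
    rw [hasDerivWithinAt_iff_tendsto_slope, hset]
    have hevW : ∀ᶠ x in nhdsWithin (0:ℝ) (Ioi (0:ℝ)), ‖slope W 0 x - 0‖ ≤ 2 * C * x := by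
      filter_upwards [Filter.inter_mem self_mem_nhdsWithin
        (mem_nhdsWithin_of_mem_nhds (Iic_mem_nhds one_pos))] with x hx
      have hx0 : 0 < x := hx.1
      have hx1 : x ≤ 1 := hx.2
      have hIcc : x ∈ Icc (0:ℝ) 1 := ⟨hx0.le, hx1⟩
      have e1 : |v x - 1| ≤ C * x ^ 2 := hquad x hIcc
      have e2 : |F x| ≤ C * x := hlin x hIcc
      have e3 : |W x - W 0| ≤ 2 * C * x ^ 2 := by
        rw [hW0]
        have : W x - 1 = (v x - 1) + x * F x := by simp [hWdef]; ring
        rw [this]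
        calc |(v x - 1) + x * F x| ≤ |v x - 1| + |x * F x| := abs_add_le _ _
          _ ≤ C * x ^ 2 + x * (C * x) := by
              have : |x * F x| = x * |F x| := by
                rw [abs_mul, abs_of_nonneg hx0.le]
              rw [this]
              exact add_le_add e1 (mul_le_mul_of_nonneg_left e2 hx0.le)
          _ = 2 * C * x ^ 2 := by ring
      rw [sub_zero, Real.norm_eq_abs, slope_def_field]
      rw [abs_div]
      rw [div_le_iff₀ (by rw [abs_of_nonneg (by linarith : (0:ℝ) ≤ x - 0)]; linarith)]
      rw [abs_of_nonneg (by linarith : (0:ℝ) ≤ x - 0)]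
      calc |W x - W 0| ≤ 2 * C * x ^ 2 := e3
        _ = (2 * C * x) * (x - 0) := by ring
    have h2 : Tendsto (fun x : ℝ => 2 * C * x) (nhdsWithin 0 (Ioi (0:ℝ))) (nhds 0) := by
      have h0 : Tendsto (fun t : ℝ => 2 * C * t) (nhds 0) (nhds (2 * C * 0)) :=
        (continuous_const.mul continuous_id).tendsto 0
      rw [mul_zero] at h0
      exact h0.mono_left nhdsWithin_le_nhds
    have h3 := squeeze_zero_norm' (f := fun x => slope W 0 x - 0) (by
      filter_upwards [hevW] with x hx
      exact hx) h2
    have h4 : Tendsto (fun x => slope W 0 x) (nhdsWithin 0 (Ioi (0:ℝ))) (nhds 0) := by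
      simpa using h3
    exact h4
  -- Z is the candidate second derivative
  set Z : ℝ → ℝ := fun x => x * Kf x * v x - (Af x - x * γf x) * F x with hZdef
  have hZ0 : Z 0 = 0 := by simp [hZdef, hF0]
  have hZd : EqOn (derivWithin W (Ici (0:ℝ))) Z (Ici (0:ℝ)) := by
    intro x hx
    rcases (mem_Ici.mp hx).eq_or_lt with h0 | h0
    · rw [← h0, hW0'.derivWithin (hu 0 self_mem_Ici), hZ0]
    · rw [((hWD x h0).hasDerivWithinAt).derivWithin (hu x hx)]
      simp only [hZdef]
      field_simp
      ring
  have hZc : ContinuousOn Z (Ici (0:ℝ)) := by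
    apply ContinuousOn.sub
    · exact ((continuous_id.mul hKcont).continuousOn.mul hvc)
    · exact ((hAcont.sub (continuous_id.mul hγcont)).continuousOn.mul hFIci)
  -- ContDiffOn
  have hD1 : DifferentiableOn ℝ ζ (Ici (0:ℝ)) := by
    intro x hx
    rcases (mem_Ici.mp hx).eq_or_lt with h0 | h0
    · rw [← h0]; exact hζ0'.differentiableWithinAt
    · exact (hζD x h0).differentiableAt.differentiableWithinAt
  have hDW : DifferentiableOn ℝ W (Ici (0:ℝ)) := by
    intro x hx
    rcases (mem_Ici.mp hx).eq_or_lt with h0 | h0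
    · rw [← h0]; exact hW0'.differentiableWithinAt
    · exact (hWD x h0).differentiableAt.differentiableWithinAt
  have hCD : ContDiffOn ℝ 2 ζ (Ici (0:ℝ)) := by
    rw [(by norm_num : (2 : WithTop ℕ∞) = 1 + 1), contDiffOn_succ_iff_derivWithin hu]
    refine ⟨hD1, by simp, ?_⟩
    apply ContDiffOn.congr _ hWd
    rw [(by norm_num : (1 : WithTop ℕ∞) = 0 + 1), contDiffOn_succ_iff_derivWithin hu]
    refine ⟨hDW, by simp, ?_⟩
    rw [contDiffOn_zero]
    exact hZc.congr hZd
  refine ⟨ζ, hCD, ?_, hζ0, hζ0'.derivWithin (hu 0 self_mem_Ici), ?_, ?_⟩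
  · -- the ODE
    intro r hr
    have hmax : max r 0 = r := max_eq_left hr.le
    have hσr : σ r ≠ 0 := by
      have := hσc0 r; rwa [hmax] at this
    have hη2 : (1 : ℝ) + η r ^ 2 ≠ 0 := by positivity
    have hA_eq : Af r = ((d:ℝ) - 1) / (1 + η r ^ 2) := by
      simp only [hAfdef]; rw [hmax]
    have hγ_eq : γf r = β * g r := by
      simp only [hγfdef]; rw [hmax, hg r]
    have hK_eq : Kf r = β * (2 * b r / σ r ^ 2) := by
      simp only [hKfdef]; rw [hmax]
    have hg_eq : g r = 2 * r * b r / σ r ^ 2 := hg r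
    rw [hζpp r hr, hderiv1 r hr]
    show _ + _ * (v r + r * F r) - _ * (r * v r) = 0
    rw [hA_eq, hγ_eq, hK_eq, hg_eq]
    field_simp
    ring
  · -- tendsto ζ r / r → 1
    apply hvtIoi.congr'
    filter_upwards [self_mem_nhdsWithin] with x hx
    show v x = ζ x / x
    simp only [hζdef]
    have hx0 : x ≠ 0 := ne_of_gt (mem_Ioi.mp hx)
    field_simp
  · -- positivity near 0
    have hev : ∀ᶠ x in nhdsWithin 0 (Ici (0:ℝ)), v x ∈ Ioi (1/2 : ℝ) :=
      hvt (Ioi_mem_nhds (by norm_num))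
    rw [Filter.eventually_iff, Metric.mem_nhdsWithin_iff] at hev
    obtain ⟨δ, hδ, hsub⟩ := hev
    refine ⟨δ, hδ, ?_⟩
    intro r hrm
    have hr1 : r ∈ Metric.ball (0:ℝ) δ := by
      rw [Metric.mem_ball, Real.dist_eq, sub_zero, abs_of_pos hrm.1]
      exact hrm.2
    have hv2 : v r ∈ Ioi (1/2 : ℝ) := hsub ⟨hr1, hrm.1.le⟩
    have : (0:ℝ) < v r := lt_trans (by norm_num) hv2
    exact mul_pos hrm.1 this
end

section
/- Under hypotheses (H), assume furthermore that f = b (so that h = g). Then the identity function ψ(r) = r solves equation (5), and it is the unique C² solution ψ on [0,∞) of equation (5) satisfying ψ(0) = 0 and |ψ(r)| = O(e^{ε″ r}) as r → ∞ for some ε″ < βε/2. -/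
open Filter MeasureTheory Set Asymptotics
open Topology

set_option maxHeartbeats 2000000 in
lemma key_comparison (n : ℕ) (β ε : ℝ) (hβ : 0 < β) (hε : 0 < ε)
    (g a q : ℝ → ℝ) (hgc : Continuous g)
    (r₀ : ℝ) (hr₀ : 1 ≤ r₀) (hgε : ∀ r, r₀ ≤ r → ε ≤ g r)
    (ha : ∀ r, 0 < r → a r ≤ n / r) (hq : ∀ r, 0 < r → 0 ≤ q r)
    (χ : ℝ → ℝ) (hχ : ContDiffOn ℝ 2 χ (Ici 0)) (hχ0 : χ 0 = 0)
    (hode : ∀ r, 0 < r → deriv (deriv χ) r = (β * g r - a r) * deriv χ r + q r * χ r)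
    (C : ℝ) (hgrow : ∀ᶠ r in atTop, χ r ≤ C * Real.exp (β * ε / 2 * r)) :
    ∀ r, 0 ≤ r → χ r ≤ 0 := by
  have hθ : (0:ℝ) < β * ε / 4 := by positivity
  set θ : ℝ := β * ε / 4 with hθdef
  set G₀ : ℝ → ℝ := fun r => ∫ s in (0:ℝ)..r, g s with hG₀def
  have hG₀ : ∀ r : ℝ, HasDerivAt G₀ (g r) r := by
    intro r
    exact intervalIntegral.integral_hasDerivAt_right (hgc.intervalIntegrable _ _)
      (hgc.stronglyMeasurable.stronglyMeasurableAtFilter) hgc.continuousAt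
  have hG₀lb : ∀ s, r₀ ≤ s → G₀ r₀ + ε * (s - r₀) ≤ G₀ s := by
    intro s hs
    have hsplit : (∫ x in (0:ℝ)..r₀, g x) + (∫ x in r₀..s, g x) = ∫ x in (0:ℝ)..s, g x :=
      intervalIntegral.integral_add_adjacent_intervals (hgc.intervalIntegrable _ _)
        (hgc.intervalIntegrable _ _)
    have hmono : ε * (s - r₀) ≤ ∫ x in r₀..s, g x := by
      have := intervalIntegral.integral_mono_on (μ := volume) hs intervalIntegrable_const
        (hgc.intervalIntegrable _ _) (fun x hx => hgε x hx.1)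
      simpa [mul_comm] using this
    simp only [hG₀def]
    linarith [hsplit, hmono]
  set p : ℝ → ℝ := fun s => Real.exp (β * G₀ s - θ * s) * (s ^ n)⁻¹ with hpdef
  have hp_pos : ∀ s : ℝ, 0 < s → 0 < p s := by
    intro s hs; exact mul_pos (Real.exp_pos _) (inv_pos.2 (pow_pos hs n))
  have hp_cont : ContinuousOn p (Ioi 0) := by
    apply ContinuousOn.mul
    · have hG₀cont : Continuous G₀ := by
        rw [continuous_iff_continuousAt]; exact fun r => (hG₀ r).continuousAt
      exact (Real.continuous_exp.comp ((continuous_const.mul hG₀cont).sub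
        (continuous_const.mul continuous_id))).continuousOn
    · exact ((continuous_pow n).continuousOn).inv₀ fun x hx => pow_ne_zero n (ne_of_gt hx)
  have hp_deriv : ∀ s : ℝ, 0 < s → HasDerivAt p (p s * (β * g s - θ - n / s)) s := by
    intro s hs
    have h1 : HasDerivAt (fun x : ℝ => β * G₀ x - θ * x) (β * g s - θ) s := by
      have := ((hG₀ s).const_mul β).sub ((hasDerivAt_id s).const_mul θ)
      exact this.congr_deriv (by simp)
    have h2 : HasDerivAt (fun x : ℝ => Real.exp (β * G₀ x - θ * x))
        (Real.exp (β * G₀ s - θ * s) * (β * g s - θ)) s := h1.exp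
    have h3 : HasDerivAt (fun x : ℝ => (x ^ n)⁻¹)
        (-(↑n * s ^ (n - 1)) / (s ^ n) ^ 2) s := (hasDerivAt_pow n s).inv (pow_ne_zero _ hs.ne')
    have h4 := h2.mul h3
    have hns : -((n:ℝ) * s ^ (n - 1)) / (s ^ n) ^ 2 = (s ^ n)⁻¹ * (-(↑n / s)) := by
      cases n with
      | zero => simp
      | succ m =>
        have hm : s ^ (m + 1 - 1) = s ^ m := by simp
        rw [hm]
        have h1 : s ^ (m+1) ≠ 0 := pow_ne_zero _ hs.ne'
        field_simp
        ring
    refine HasDerivAt.congr_deriv h4 ?_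
    rw [hns]
    simp only [hpdef]
    ring
  have hp_nonneg : ∀ s : ℝ, 0 < s → 0 ≤ p s := fun s hs => (hp_pos s hs).le
  have hχd : ∀ x : ℝ, 0 < x → DifferentiableAt ℝ χ x := by
    intro x hx
    exact (hχ.contDiffAt (Ici_mem_nhds hx)).differentiableAt (by norm_num)
  have hχd2 : ∀ x : ℝ, 0 < x → DifferentiableAt ℝ (deriv χ) x := by
    intro x hx
    have h1 : ContDiffOn ℝ 1 (deriv χ) (Ioi 0) :=
      (hχ.mono Ioi_subset_Ici_self).deriv_of_isOpen isOpen_Ioi (by norm_num)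
    exact ((h1.contDiffAt (isOpen_Ioi.mem_nhds hx)).differentiableAt (by norm_num))
  -- main comparison claim
  have comp : ∀ r₁ : ℝ, 0 < r₁ → ∀ δ : ℝ, 0 < δ → ∀ r, r₁ ≤ r →
      χ r ≤ max (χ r₁) 0 + δ * (1 + ∫ s in r₁..r, p s) := by
    intro r₁ hr₁ δ hδ
    set M : ℝ := max (χ r₁) 0 with hMdef
    have hM0 : 0 ≤ M := le_max_right _ _
    set W : ℝ → ℝ := fun x => ∫ s in r₁..x, p s with hWdef
    set v : ℝ → ℝ := fun x => χ x - (M + δ * (1 + W x)) with hvdef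
    have hWd : ∀ x : ℝ, 0 < x → HasDerivAt W (p x) x := by
      intro x hx
      have hsub : uIcc r₁ x ⊆ Ioi 0 := by
        intro y hy
        rcases mem_uIcc.mp hy with h | h
        · exact lt_of_lt_of_le hr₁ h.1
        · exact lt_of_lt_of_le hx h.1
      refine intervalIntegral.integral_hasDerivAt_right
        ((hp_cont.mono hsub).intervalIntegrable)
        ⟨Ioi 0, isOpen_Ioi.mem_nhds hx, hp_cont.aestronglyMeasurable measurableSet_Ioi⟩
        (hp_cont.continuousAt (isOpen_Ioi.mem_nhds hx))
    have hvd : ∀ x : ℝ, 0 < x → HasDerivAt v (deriv χ x - δ * p x) x := by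
      intro x hx
      exact ((hχd x hx).hasDerivAt).sub ((((hWd x hx).const_add 1).const_mul δ).const_add M)
    have hv' : ∀ x : ℝ, 0 < x → deriv v x = deriv χ x - δ * p x :=
      fun x hx => (hvd x hx).deriv
    have hW_nonneg : ∀ x : ℝ, r₁ ≤ x → 0 ≤ W x := by
      intro x hx
      exact intervalIntegral.integral_nonneg hx
        (fun u hu => hp_nonneg u (lt_of_lt_of_le hr₁ hu.1))
    set A : ℝ := Real.exp (β * G₀ r₀ - β * ε * (r₀ + 1)) with hAdef
    have hA : (0:ℝ) < A := Real.exp_pos _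
    have hW_lb : ∀ r : ℝ, max r₀ r₁ + 1 ≤ r →
        A * Real.exp ((β * ε - θ) * r) * (r ^ n)⁻¹ ≤ W r := by
      intro r hr
      have hr0r : r₀ ≤ r - 1 := by have := le_max_left r₀ r₁; linarith
      have hr1r : r₁ ≤ r - 1 := by have := le_max_right r₀ r₁; linarith
      have hrm1pos : 0 < r - 1 := lt_of_lt_of_le hr₁ hr1r
      have hrpos : (0:ℝ) < r := by linarith
      have hsub1 : uIcc r₁ (r - 1) ⊆ Ioi 0 := by
        intro y hy
        rcases mem_uIcc.mp hy with h | h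
        · exact lt_of_lt_of_le hr₁ h.1
        · exact lt_of_lt_of_le hrm1pos h.1
      have hsub2 : uIcc (r - 1) r ⊆ Ioi 0 := by
        intro y hy
        rcases mem_uIcc.mp hy with h | h
        · exact lt_of_lt_of_le hrm1pos h.1
        · exact lt_of_lt_of_le hrpos h.1
      have int1 : IntervalIntegrable p volume r₁ (r - 1) :=
        (hp_cont.mono hsub1).intervalIntegrable
      have int2 : IntervalIntegrable p volume (r - 1) r :=
        (hp_cont.mono hsub2).intervalIntegrable
      have hsplit : (∫ s in r₁..(r-1), p s) + (∫ s in (r-1)..r, p s) = W r :=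
        intervalIntegral.integral_add_adjacent_intervals int1 int2
      have h1 : 0 ≤ ∫ s in r₁..(r-1), p s :=
        intervalIntegral.integral_nonneg hr1r
          (fun u hu => hp_nonneg u (lt_of_lt_of_le hr₁ hu.1))
      have hLb : ∀ s ∈ Icc (r-1) r, A * Real.exp ((β * ε - θ) * r) * (r ^ n)⁻¹ ≤ p s := by
        intro s hs
        have hs0 : 0 < s := lt_of_lt_of_le hrm1pos hs.1
        have hGs : G₀ r₀ + ε * (s - r₀) ≤ G₀ s := hG₀lb s (le_trans hr0r hs.1)
        have hexp : (β * G₀ r₀ - β * ε * (r₀ + 1)) + (β * ε - θ) * r ≤ β * G₀ s - θ * s := by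
          have h2 : θ * s ≤ θ * r := by
            exact mul_le_mul_of_nonneg_left hs.2 hθ.le
          have h3 : G₀ r₀ + ε * ((r - 1) - r₀) ≤ G₀ s := by
            have : ε * ((r - 1) - r₀) ≤ ε * (s - r₀) := by
              have := hs.1
              nlinarith
            linarith
          nlinarith [hβ.le]
        have hexp2 : A * Real.exp ((β * ε - θ) * r) ≤ Real.exp (β * G₀ s - θ * s) := by
          rw [hAdef, ← Real.exp_add]
          exact Real.exp_le_exp.mpr hexp
        have hpow : (r ^ n)⁻¹ ≤ (s ^ n)⁻¹ := by
          apply inv_anti₀ (pow_pos hs0 n)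
          exact pow_le_pow_left₀ hs0.le hs.2 n
        calc A * Real.exp ((β * ε - θ) * r) * (r ^ n)⁻¹
            ≤ Real.exp (β * G₀ s - θ * s) * (s ^ n)⁻¹ := by
              apply mul_le_mul hexp2 hpow (by positivity) (Real.exp_pos _).le
          _ = p s := rfl
      have h2 : A * Real.exp ((β * ε - θ) * r) * (r ^ n)⁻¹ ≤ ∫ s in (r-1)..r, p s := by
        have hmono := intervalIntegral.integral_mono_on (μ := volume)
          (by linarith : r - 1 ≤ r) intervalIntegrable_const int2 hLb
        simpa using hmono
      linarith
    have hEtend : Tendsto (fun r : ℝ => Real.exp (θ * r) * (r ^ n)⁻¹) atTop atTop := by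
      have h1 : Tendsto (fun r : ℝ => θ * r) atTop atTop :=
        Tendsto.const_mul_atTop hθ tendsto_id
      have h2 : Tendsto (fun r : ℝ => Real.exp (θ * r) / (θ * r) ^ n) atTop atTop :=
        (Real.tendsto_exp_div_pow_atTop n).comp h1
      have h3 := h2.const_mul_atTop (pow_pos hθ n)
      apply h3.congr'
      filter_upwards [eventually_gt_atTop (0:ℝ)] with r hr
      have : (θ * r) ^ n = θ ^ n * r ^ n := mul_pow θ r n
      rw [this]
      field_simp
    have hinner : Tendsto (fun r : ℝ => C - δ * A * (Real.exp (θ * r) * (r ^ n)⁻¹))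
        atTop atBot := by
      have h1 := hEtend.const_mul_atTop (mul_pos hδ hA)
      have h2 : Tendsto (fun r : ℝ => -(δ * A * (Real.exp (θ * r) * (r ^ n)⁻¹))) atTop atBot :=
        tendsto_neg_atTop_atBot.comp h1
      have h3 := tendsto_atBot_add_const_left atTop C h2
      exact h3.congr (fun r => by ring)
    have htend : Tendsto v atTop atBot := by
      apply tendsto_atBot_mono' atTop _ hinner
      filter_upwards [hgrow, eventually_ge_atTop (max r₀ r₁ + 1),
        hinner.eventually (eventually_le_atBot 0), eventually_ge_atTop (0:ℝ)]
        with r hg1 hg2 hg3 hg4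
      have hWr := hW_lb r hg2
      have hWrge : r₁ ≤ r := by have := le_max_right r₀ r₁; linarith
      have hexp1 : (1:ℝ) ≤ Real.exp (β * ε / 2 * r) := by
        rw [← Real.exp_zero]
        exact Real.exp_le_exp.mpr (by positivity)
      have hexpprod : Real.exp ((β * ε - θ) * r)
          = Real.exp (β * ε / 2 * r) * Real.exp (θ * r) := by
        rw [← Real.exp_add]
        congr 1
        rw [hθdef]; ring
      have step1 : v r ≤ C * Real.exp (β * ε / 2 * r) - δ * W r := by
        have hd1 : 0 ≤ δ * 1 := by linarith
        simp only [hvdef]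
        nlinarith [hM0]
      have step2 : v r ≤ Real.exp (β * ε / 2 * r) *
          (C - δ * A * (Real.exp (θ * r) * (r ^ n)⁻¹)) := by
        have : δ * (A * Real.exp ((β * ε - θ) * r) * (r ^ n)⁻¹) ≤ δ * W r :=
          mul_le_mul_of_nonneg_left hWr hδ.le
        calc v r ≤ C * Real.exp (β * ε / 2 * r) - δ * W r := step1
          _ ≤ C * Real.exp (β * ε / 2 * r)
              - δ * (A * Real.exp ((β * ε - θ) * r) * (r ^ n)⁻¹) := by linarith
          _ = Real.exp (β * ε / 2 * r) *
              (C - δ * A * (Real.exp (θ * r) * (r ^ n)⁻¹)) := by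
              rw [hexpprod]; ring
      calc v r ≤ Real.exp (β * ε / 2 * r) *
            (C - δ * A * (Real.exp (θ * r) * (r ^ n)⁻¹)) := step2
        _ ≤ 1 * (C - δ * A * (Real.exp (θ * r) * (r ^ n)⁻¹)) := by
            apply mul_le_mul_of_nonpos_right hexp1 hg3
        _ = C - δ * A * (Real.exp (θ * r) * (r ^ n)⁻¹) := one_mul _
    -- the maximum principle argument
    intro r hr
    by_contra hcon
    push_neg at hcon
    have hvr : 0 < v r := by simp only [hvdef]; linarith
    have hrpos : 0 < r := lt_of_lt_of_le hr₁ hr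
    obtain ⟨R₀, hR₀⟩ := (eventually_atTop.mp (htend.eventually (eventually_le_atBot (v r - 1))))
    set R : ℝ := max R₀ (r + 1) with hRdef
    have hrR : r ≤ R := by have := le_max_right R₀ (r+1); linarith
    have hr₁R : r₁ ≤ R := le_trans hr hrR
    have hcontv : ContinuousOn v (Icc r₁ R) := by
      intro x hx
      exact ((hvd x (lt_of_lt_of_le hr₁ hx.1)).continuousAt).continuousWithinAt
    obtain ⟨rs, hrsmem, hmax⟩ := isCompact_Icc.exists_isMaxOn
      ⟨r, hr, hrR⟩ hcontv
    have hrs_pos : 0 < rs := lt_of_lt_of_le hr₁ hrsmem.1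
    have hvrs : 0 < v rs := lt_of_lt_of_le hvr (hmax ⟨hr, hrR⟩)
    have hWr₁ : W r₁ = 0 := intervalIntegral.integral_same
    have hvr₁ : v r₁ < 0 := by
      have hχr₁ : χ r₁ ≤ M := le_max_left _ _
      simp only [hvdef, hWr₁]
      nlinarith
    have hrsne₁ : r₁ < rs := by
      rcases lt_or_eq_of_le hrsmem.1 with h | h
      · exact h
      · exfalso; rw [← h] at hvrs; linarith
    have hrsltR : rs < R := by
      rcases lt_or_eq_of_le hrsmem.2 with h | h
      · exact h
      · exfalso
        have h1 : v R ≤ v r - 1 := hR₀ R (le_max_left _ _)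
        have h2 : v r ≤ v rs := hmax ⟨hr, hrR⟩
        rw [h] at h2
        linarith
    have hlocal : IsLocalMax v rs := hmax.isLocalMax (Icc_mem_nhds hrsne₁ hrsltR)
    have hd0 : deriv v rs = 0 := hlocal.deriv_eq_zero
    have hχ'rs : deriv χ rs = δ * p rs := by
      have := hv' rs hrs_pos
      rw [hd0] at this
      linarith
    have hvD : deriv v =ᶠ[𝓝 rs] fun x => deriv χ x - δ * p x :=
      eventually_of_mem (isOpen_Ioi.mem_nhds hrs_pos) (fun x hx => hv' x hx)
    have hpdiff : DifferentiableAt ℝ p rs := (hp_deriv rs hrs_pos).differentiableAt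
    have hdd : DifferentiableAt ℝ (fun x => deriv χ x - δ * p x) rs :=
      (hχd2 rs hrs_pos).sub (hpdiff.const_mul δ)
    have h2nd : deriv (deriv v) rs ≤ 0 := by
      by_contra hpos
      push_neg at hpos
      have hdv : DifferentiableAt ℝ (deriv v) rs := hdd.congr_of_eventuallyEq hvD
      have hD : HasDerivAt (deriv v) (deriv (deriv v) rs) rs := hdv.hasDerivAt
      rw [hasDerivAt_iff_tendsto_slope] at hD
      have hev : ∀ᶠ x in 𝓝[≠] rs, 0 < slope (deriv v) rs x :=
        hD.eventually (eventually_gt_nhds hpos)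
      obtain ⟨δ₂, hδ₂, hball⟩ := Metric.mem_nhdsWithin_iff.mp hev
      set t : ℝ := min (δ₂ / 2) ((R - rs) / 2) with htdef
      have ht : 0 < t := lt_min (by linarith) (by linarith)
      have hmono : StrictMonoOn v (Icc rs (rs + t)) := by
        apply strictMonoOn_of_deriv_pos (convex_Icc _ _)
        · intro x hx
          exact ((hvd x (lt_of_lt_of_le hrs_pos hx.1)).continuousAt).continuousWithinAt
        · intro x hx
          rw [interior_Icc] at hx
          have hx0 : 0 < x := lt_trans hrs_pos hx.1
          have hxne : x ≠ rs := ne_of_gt hx.1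
          have hdist : dist x rs < δ₂ := by
            rw [Real.dist_eq, abs_of_pos (by linarith [hx.1] : (0:ℝ) < x - rs)]
            have h1 : t ≤ δ₂ / 2 := min_le_left _ _
            linarith [hx.2]
          have hslope : 0 < slope (deriv v) rs x := hball ⟨Metric.mem_ball.mpr hdist, hxne⟩
          rw [slope_def_field] at hslope
          rw [hd0, sub_zero] at hslope
          have hxrs : 0 < x - rs := by linarith [hx.1]
          have := div_pos_iff.mp hslope
          rcases this with ⟨h1, _⟩ | ⟨_, h2⟩
          · exact h1
          · linarith
      have hmem1 : rs ∈ Icc rs (rs + t) := ⟨le_refl _, by linarith⟩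
      have hmem2 : rs + t ∈ Icc rs (rs + t) := ⟨by linarith, le_refl _⟩
      have hlt : v rs < v (rs + t) := hmono hmem1 hmem2 (by linarith)
      have hmemR : rs + t ∈ Icc r₁ R := by
        constructor
        · linarith [hrsmem.1]
        · have h2 : t ≤ (R - rs) / 2 := min_le_right _ _
          linarith
      have h3 : v (rs + t) ≤ v rs := hmax hmemR
      linarith
    have hddv : deriv (deriv v) rs
        = deriv (deriv χ) rs - δ * (p rs * (β * g rs - θ - ↑n / rs)) := by
      rw [hvD.deriv_eq]
      rw [deriv_fun_sub (hχd2 rs hrs_pos) (hpdiff.const_mul δ)]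
      rw [deriv_const_mul _ hpdiff, (hp_deriv rs hrs_pos).deriv]
    have hode' := hode rs hrs_pos
    rw [hχ'rs] at hode'
    have hWrs : 0 ≤ W rs := hW_nonneg rs hrsmem.1
    have hχrs : χ rs = v rs + (M + δ * (1 + W rs)) := by simp only [hvdef]; ring
    have hχpos : 0 < χ rs := by
      rw [hχrs]
      have hx1 : 0 < δ * (1 + W rs) := mul_pos hδ (by linarith)
      linarith
    have hq' := hq rs hrs_pos
    have ha' := ha rs hrs_pos
    have hp' := hp_pos rs hrs_pos
    have e1 : 0 < δ * p rs * θ := by positivity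
    have e2 : 0 ≤ δ * p rs * (↑n / rs - a rs) :=
      mul_nonneg (mul_pos hδ hp').le (by linarith)
    have e3 : 0 ≤ q rs * χ rs := mul_nonneg hq' hχpos.le
    have hsimp : (β * g rs - a rs) * (δ * p rs) + q rs * χ rs
        - δ * (p rs * (β * g rs - θ - ↑n / rs))
        = δ * p rs * θ + δ * p rs * (↑n / rs - a rs) + q rs * χ rs := by ring
    linarith [h2nd, hddv, hode', hsimp, e1, e2, e3]
  -- conclude from comp
  have step1 : ∀ r₁ : ℝ, 0 < r₁ → ∀ r : ℝ, r₁ ≤ r → χ r ≤ max (χ r₁) 0 := by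
    intro r₁ hr₁ r hr
    by_contra hcon
    push_neg at hcon
    set M : ℝ := max (χ r₁) 0 with hMdef
    have hWr : 0 ≤ ∫ s in r₁..r, p s := by
      apply intervalIntegral.integral_nonneg hr
      intro u hu
      exact hp_nonneg u (lt_of_lt_of_le hr₁ hu.1)
    set W : ℝ := ∫ s in r₁..r, p s with hWdef
    have hWpos : 0 < 1 + W := by linarith
    set δ : ℝ := (χ r - M) / (2 * (1 + W)) with hδdef
    have hδ : 0 < δ := by apply div_pos (by linarith) (by linarith)
    have := comp r₁ hr₁ δ hδ r hr
    rw [hδdef] at this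
    have heq : (χ r - M) / (2 * (1 + W)) * (1 + W) = (χ r - M) / 2 := by
      field_simp
    rw [heq] at this
    linarith
  intro r hr
  rcases eq_or_lt_of_le hr with h | h
  · rw [← h, hχ0]
  · have hall : ∀ t : ℝ, 0 < t → χ r ≤ t := by
      intro t ht
      have hcont : Tendsto χ (nhdsWithin 0 (Ici 0)) (nhds 0) := by
        have := (hχ.continuousOn).continuousWithinAt (self_mem_Ici)
        rwa [ContinuousWithinAt, hχ0] at this
      have hlt : χ ⁻¹' Iio t ∈ nhdsWithin (0:ℝ) (Ici 0) := hcont (Iio_mem_nhds ht)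
      have hlt' : χ ⁻¹' Iio t ∈ nhdsWithin (0:ℝ) (Ioi 0) :=
        nhdsWithin_mono 0 Ioi_subset_Ici_self hlt
      have hIoc : Ioc (0:ℝ) r ∈ nhdsWithin (0:ℝ) (Ioi 0) :=
        Ioc_mem_nhdsGT_of_mem ⟨le_refl 0, h⟩
      obtain ⟨r₁, hr₁lt, hr₁mem⟩ := Filter.nonempty_of_mem (Filter.inter_mem hlt' hIoc)
      have h1 : χ r ≤ max (χ r₁) 0 := step1 r₁ hr₁mem.1 r hr₁mem.2
      have h2 : max (χ r₁) 0 < t := max_lt hr₁lt ht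
      linarith
    by_contra hcon
    push_neg at hcon
    have := hall (χ r / 2) (by linarith)
    linarith


set_option maxHeartbeats 1000000 in
/-- Under hypotheses (H) with f = b (so h = g), the identity function solves equation (5),
and it is the unique C² solution on [0,∞) vanishing at 0 with subexponential growth
O(e^{ε″ r}) for some ε″ < βε/2. -/
theorem stmt7 (d : ℕ) (hd : 1 ≤ d) (β ε : ℝ) (hβ : 0 < β) (hε : 0 < ε)
    (f b σ η : ℝ → ℝ)
    (hfc : ContinuousOn f (Ici 0)) (hbc : ContinuousOn b (Ici 0))
    (hσc : ContinuousOn σ (Ici 0)) (hηc : ContinuousOn η (Ici 0))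
    (hσε : ∀ r ∈ Ici (0:ℝ), ε ≤ σ r)
    (hfb : f = b)
    (g h G : ℝ → ℝ)
    (hg : ∀ r, g r = 2 * r * b r / (σ r) ^ 2)
    (hh : ∀ r, h r = 2 * r * f r / (σ r) ^ 2)
    (hG : ∀ r, G r = ∫ ρ in (0:ℝ)..r, g ρ)
    (H1 : ∃ r₀ ≥ (1:ℝ), ∀ r ≥ r₀, ε ≤ g r)
    (H2 : ∃ ε' < β * ε / 2, Tendsto (fun r => Real.exp (-ε' * r) * f r) atTop (nhds 0)) :
    (∀ r > (0:ℝ), deriv (deriv (fun x : ℝ => x)) r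
        - (β * g r - ((d : ℝ) - 1) / (r * (1 + η r ^ 2))) * deriv (fun x : ℝ => x) r
        - ((d : ℝ) - 1) / (r ^ 2 * (1 + η r ^ 2)) * r + β * h r = 0) ∧
    ∀ ψ : ℝ → ℝ, ContDiffOn ℝ 2 ψ (Ici 0) → ψ 0 = 0 →
      (∀ r > (0:ℝ), deriv (deriv ψ) r
          - (β * g r - ((d : ℝ) - 1) / (r * (1 + η r ^ 2))) * deriv ψ r
          - ((d : ℝ) - 1) / (r ^ 2 * (1 + η r ^ 2)) * ψ r + β * h r = 0) →
      (∃ ε'' < β * ε / 2, ψ =O[atTop] fun r => Real.exp (ε'' * r)) →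
      ∀ r ∈ Ici (0:ℝ), ψ r = r := by
  have hhg : ∀ r, h r = g r := by intro r; rw [hh, hg, hfb]
  have hη1 : ∀ r : ℝ, (0:ℝ) < 1 + η r ^ 2 := by
    intro r; nlinarith [sq_nonneg (η r)]
  have hQA : ∀ r : ℝ, 0 < r →
      ((d : ℝ) - 1) / (r ^ 2 * (1 + η r ^ 2)) * r = ((d : ℝ) - 1) / (r * (1 + η r ^ 2)) := by
    intro r hr
    have h1 := hη1 r
    field_simp
  have part1 : ∀ r > (0:ℝ), deriv (deriv (fun x : ℝ => x)) r
      - (β * g r - ((d : ℝ) - 1) / (r * (1 + η r ^ 2))) * deriv (fun x : ℝ => x) r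
      - ((d : ℝ) - 1) / (r ^ 2 * (1 + η r ^ 2)) * r + β * h r = 0 := by
    intro r hr
    have h1 : deriv (fun x : ℝ => x) = fun _ => (1:ℝ) := by
      funext x; simp
    rw [h1]
    simp only [deriv_const]
    rw [hhg, hQA r hr]
    ring
  refine ⟨part1, ?_⟩
  intro ψ hψC hψ0 hψode hψgrow
  obtain ⟨r₀, hr₀, hgε⟩ := H1
  -- continuous extension of g
  have hgcont : ContinuousOn g (Ici 0) := by
    have : ContinuousOn (fun r => 2 * r * b r / (σ r) ^ 2) (Ici 0) := by
      apply ContinuousOn.div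
      · exact (continuousOn_const.mul continuousOn_id).mul hbc
      · exact hσc.pow 2
      · intro x hx
        exact pow_ne_zero _ (ne_of_gt (lt_of_lt_of_le hε (hσε x hx)))
    exact this.congr (fun x _ => hg x)
  set g' : ℝ → ℝ := fun r => g (max r 0) with hg'def
  have hg'c : Continuous g' :=
    hgcont.comp_continuous (continuous_id.max continuous_const) (fun x => le_max_right x 0)
  have hg'eq : ∀ r : ℝ, 0 ≤ r → g' r = g r := by
    intro r hr; simp only [hg'def, max_eq_left hr]
  have hg'ε : ∀ r, r₀ ≤ r → ε ≤ g' r := by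
    intro r hr
    rw [hg'eq r (by linarith)]
    exact hgε r hr
  set n : ℕ := d - 1 with hndef
  have hn : (n : ℝ) = (d : ℝ) - 1 := by
    rw [hndef]
    push_cast [Nat.cast_sub hd]
    ring
  set A : ℝ → ℝ := fun r => ((d : ℝ) - 1) / (r * (1 + η r ^ 2)) with hAdef
  set Q : ℝ → ℝ := fun r => ((d : ℝ) - 1) / (r ^ 2 * (1 + η r ^ 2)) with hQdef
  have hd1 : (0:ℝ) ≤ (d : ℝ) - 1 := by
    have : (1:ℝ) ≤ (d:ℝ) := by exact_mod_cast hd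
    linarith
  have haA : ∀ r : ℝ, 0 < r → A r ≤ (n : ℝ) / r := by
    intro r hr
    rw [hn]
    have h2 : r ≤ r * (1 + η r ^ 2) := by nlinarith [sq_nonneg (η r)]
    exact div_le_div_of_nonneg_left hd1 hr h2
  have hqQ : ∀ r : ℝ, 0 < r → 0 ≤ Q r := by
    intro r hr
    apply div_nonneg hd1
    positivity
  -- ψ differentiability facts
  have hψd : ∀ x : ℝ, 0 < x → DifferentiableAt ℝ ψ x := by
    intro x hx
    exact (hψC.contDiffAt (Ici_mem_nhds hx)).differentiableAt (by norm_num)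
  -- ODE rewriting
  have hψ'' : ∀ r : ℝ, 0 < r → deriv (deriv ψ) r
      = (β * g' r - A r) * deriv ψ r + Q r * ψ r - β * g' r := by
    intro r hr
    have h1 := hψode r hr
    rw [hhg] at h1
    rw [hg'eq r hr.le]
    simp only [hAdef, hQdef]
    linarith
  -- growth bound
  obtain ⟨ε'', hε''lt, hψO⟩ := hψgrow
  rw [isBigO_iff] at hψO
  obtain ⟨C₀, hC₀ev⟩ := hψO
  have hC₀ev' : ∀ᶠ r in atTop, |ψ r| ≤ C₀ * Real.exp (ε'' * r) := by
    filter_upwards [hC₀ev] with r hr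
    simpa [abs_of_pos (Real.exp_pos _)] using hr
  have hC₀nonneg : 0 ≤ C₀ := by
    obtain ⟨r, hr⟩ := hC₀ev'.exists
    nlinarith [abs_nonneg (ψ r), Real.exp_pos (ε'' * r)]
  set c : ℝ := β * ε / 2 with hcdef
  have hc : 0 < c := by positivity
  have hexpmono : ∀ r : ℝ, 0 ≤ r → Real.exp (ε'' * r) ≤ Real.exp (c * r) := by
    intro r hr
    apply Real.exp_le_exp.mpr
    nlinarith
  have hrle : ∀ r : ℝ, 0 ≤ r → r ≤ Real.exp (c * r) / c := by
    intro r hr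
    rw [le_div_iff₀ hc]
    calc r * c = c * r := by ring
      _ ≤ Real.exp (c * r) := by
          linarith [Real.add_one_le_exp (c * r)]
  -- apply key lemma to χ₁ = ψ - id
  have hkey1 := key_comparison n β ε hβ hε g' A Q hg'c r₀ hr₀ hg'ε haA hqQ
    (fun r => ψ r - r) (hψC.sub (contDiff_id.contDiffOn)) (by simpa using hψ0)
    ?ode1 C₀ ?gr1
  case ode1 =>
    intro r hr
    have hder : ∀ x : ℝ, 0 < x → deriv (fun y => ψ y - y) x = deriv ψ x - 1 := by
      intro x hx
      rw [deriv_fun_sub (hψd x hx) differentiableAt_fun_id]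
      simp
    have hev : deriv (fun y => ψ y - y) =ᶠ[nhds r] fun x => deriv ψ x - 1 :=
      eventually_of_mem (isOpen_Ioi.mem_nhds hr) (fun x hx => hder x hx)
    rw [hev.deriv_eq, deriv_sub_const, hψ'' r hr, hder r hr]
    have hQA' : Q r * r = A r := by
      simp only [hQdef, hAdef]
      exact hQA r hr
    beta_reduce
    linear_combination hQA'
  case gr1 =>
    filter_upwards [hC₀ev', eventually_ge_atTop (0:ℝ)] with r h1 h2
    have : ψ r - r ≤ |ψ r| := by
      have := abs_nonneg (ψ r)
      have := le_abs_self (ψ r)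
      linarith
    calc ψ r - r ≤ |ψ r| := this
      _ ≤ C₀ * Real.exp (ε'' * r) := h1
      _ ≤ C₀ * Real.exp (β * ε / 2 * r) := by
          have := hexpmono r h2
          nlinarith [Real.exp_pos (ε'' * r)]
  -- apply key lemma to χ₂ = id - ψ
  have hkey2 := key_comparison n β ε hβ hε g' A Q hg'c r₀ hr₀ hg'ε haA hqQ
    (fun r => r - ψ r) ((contDiff_id.contDiffOn).sub hψC) (by simpa using hψ0)
    ?ode2 (C₀ + 1/c) ?gr2
  case ode2 =>
    intro r hr
    have hder : ∀ x : ℝ, 0 < x → deriv (fun y => y - ψ y) x = 1 - deriv ψ x := by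
      intro x hx
      rw [deriv_fun_sub differentiableAt_fun_id (hψd x hx)]
      simp
    have hev : deriv (fun y => y - ψ y) =ᶠ[nhds r] fun x => 1 - deriv ψ x :=
      eventually_of_mem (isOpen_Ioi.mem_nhds hr) (fun x hx => hder x hx)
    rw [hev.deriv_eq, deriv_const_sub, hψ'' r hr, hder r hr]
    have hQA' : Q r * r = A r := by
      simp only [hQdef, hAdef]
      exact hQA r hr
    beta_reduce
    linear_combination -hQA'
  case gr2 =>
    filter_upwards [hC₀ev', eventually_ge_atTop (0:ℝ)] with r h1 h2
    have h3 : -ψ r ≤ |ψ r| := neg_le_abs _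
    have h4 : Real.exp (ε'' * r) ≤ Real.exp (c * r) := hexpmono r h2
    have h5 : r ≤ Real.exp (c * r) / c := hrle r h2
    calc r - ψ r ≤ Real.exp (c * r) / c + C₀ * Real.exp (ε'' * r) := by
          have := h1; have := abs_nonneg (ψ r); linarith
      _ ≤ Real.exp (c * r) / c + C₀ * Real.exp (c * r) := by
          nlinarith [Real.exp_pos (ε'' * r)]
      _ = (C₀ + 1/c) * Real.exp (c * r) := by
          field_simp
          ring
      _ = (C₀ + 1/c) * Real.exp (β * ε / 2 * r) := by rw [hcdef]
  intro r hr
  have h1 := hkey1 r hr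
  have h2 := hkey2 r hr
  linarith
end

section
/- Let ψ be a C² solution on (0,∞) of equation (5), continuous at 0 with ψ(0) = 0, such that ψ(r) ψ′(r) e^{−βG(r)} μ(r)^{d−1} → 0 both as r → ∞ and as r → 0⁺, and such that the three integrals below converge absolutely. Then ∫₀^∞ ψ′(r)² e^{−βG(r)} μ(r)^{d−1} dr = β ∫₀^∞ ψ(r) h(r) e^{−βG(r)} μ(r)^{d−1} dr − (d−1) ∫₀^∞ ψ(r)² (1+η(r)²)^{−1} r^{−2} e^{−βG(r)} μ(r)^{d−1} dr. -/
open Filter MeasureTheory Set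

/-- Integration by parts identity for a solution ψ of equation (5) with ψ(0)=0 and vanishing
boundary terms: ∫₀^∞ ψ′² e^{−βG} μ^{d−1} = β ∫₀^∞ ψ h e^{−βG} μ^{d−1}
− (d−1) ∫₀^∞ ψ² (1+η²)⁻¹ r⁻² e^{−βG} μ^{d−1}. -/
theorem stmt8 (d : ℕ) (hd : 1 ≤ d) (β : ℝ) (hβ : 0 < β)
    (f b σ η : ℝ → ℝ)
    (hfc : ContinuousOn f (Ici 0)) (hbc : ContinuousOn b (Ici 0))
    (hσc : ContinuousOn σ (Ici 0)) (hηc : ContinuousOn η (Ici 0))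
    (hσ0 : ∀ r ∈ Ici (0:ℝ), σ r ≠ 0)
    (g h G μ : ℝ → ℝ)
    (hg : ∀ r, g r = 2 * r * b r / (σ r) ^ 2)
    (hh : ∀ r, h r = 2 * r * f r / (σ r) ^ 2)
    (hG : ∀ r, G r = ∫ ρ in (0:ℝ)..r, g ρ)
    (hμ : ∀ r, μ r = Real.exp (∫ s in (1:ℝ)..r, 1 / (s * (1 + η s ^ 2))))
    (ψ : ℝ → ℝ)
    (hψ : ContDiffOn ℝ 2 ψ (Ioi 0))
    (hψ0 : ContinuousWithinAt ψ (Ici 0) 0) (hψ00 : ψ 0 = 0)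
    (heq : ∀ r > (0:ℝ), deriv (deriv ψ) r
        - (β * g r - ((d : ℝ) - 1) / (r * (1 + η r ^ 2))) * deriv ψ r
        - ((d : ℝ) - 1) / (r ^ 2 * (1 + η r ^ 2)) * ψ r + β * h r = 0)
    (hbdtop : Tendsto (fun r => ψ r * deriv ψ r * Real.exp (-(β * G r)) * μ r ^ (d - 1))
        atTop (nhds 0))
    (hbd0 : Tendsto (fun r => ψ r * deriv ψ r * Real.exp (-(β * G r)) * μ r ^ (d - 1))
        (nhdsWithin 0 (Ioi 0)) (nhds 0))
    (hint₁ : IntegrableOn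
        (fun r => (deriv ψ r) ^ 2 * Real.exp (-(β * G r)) * μ r ^ (d - 1)) (Ioi 0))
    (hint₂ : IntegrableOn
        (fun r => ψ r * h r * Real.exp (-(β * G r)) * μ r ^ (d - 1)) (Ioi 0))
    (hint₃ : IntegrableOn
        (fun r => (ψ r) ^ 2 * (1 + η r ^ 2)⁻¹ * (r ^ 2)⁻¹ * Real.exp (-(β * G r)) * μ r ^ (d - 1))
        (Ioi 0)) :
    (∫ r in Ioi (0:ℝ), (deriv ψ r) ^ 2 * Real.exp (-(β * G r)) * μ r ^ (d - 1))
      = β * (∫ r in Ioi (0:ℝ), ψ r * h r * Real.exp (-(β * G r)) * μ r ^ (d - 1))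
        - ((d : ℝ) - 1) * ∫ r in Ioi (0:ℝ),
            (ψ r) ^ 2 * (1 + η r ^ 2)⁻¹ * (r ^ 2)⁻¹ * Real.exp (-(β * G r)) * μ r ^ (d - 1) := by
  -- Notation
  set c : ℝ := (d : ℝ) - 1 with hc
  set q : ℝ → ℝ := fun s => 1 / (s * (1 + η s ^ 2)) with hqdef
  have hη2 : ∀ r : ℝ, (0:ℝ) < 1 + η r ^ 2 := fun r => by positivity
  -- the boundary function and the combined integrand
  set F : ℝ → ℝ := fun r => ψ r * deriv ψ r * Real.exp (-(β * G r)) * μ r ^ (d - 1) with hF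
  set E : ℝ → ℝ := fun r =>
      (deriv ψ r) ^ 2 * Real.exp (-(β * G r)) * μ r ^ (d - 1)
      + c * ((ψ r) ^ 2 * (1 + η r ^ 2)⁻¹ * (r ^ 2)⁻¹ * Real.exp (-(β * G r)) * μ r ^ (d - 1))
      - β * (ψ r * h r * Real.exp (-(β * G r)) * μ r ^ (d - 1)) with hE
  -- continuity of g on Ici 0
  have hgfun : g = fun r => 2 * r * b r / (σ r) ^ 2 := funext hg
  have hgc : ContinuousOn g (Ici 0) := by
    rw [hgfun]
    exact ((continuousOn_const.mul continuousOn_id).mul hbc).div (hσc.pow 2)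
      (fun r hr => pow_ne_zero _ (hσ0 r hr))
  -- continuity of q on Ioi 0
  have hqc : ContinuousOn q (Ioi 0) := by
    apply continuousOn_const.div
      (continuousOn_id.mul (continuousOn_const.add ((hηc.mono Ioi_subset_Ici_self).pow 2)))
    intro s hs
    have : (0:ℝ) < s := hs
    exact mul_ne_zero this.ne' (hη2 s).ne'
  -- derivative of G
  have hGd : ∀ r ∈ Ioi (0:ℝ), HasDerivAt G (g r) r := by
    intro r hr
    have hr' : (0:ℝ) < r := hr
    have hsub : uIcc (0:ℝ) r ⊆ Ici 0 := fun x hx => le_trans (le_min le_rfl hr'.le) hx.1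
    have h1 : HasDerivAt (fun u => ∫ ρ in (0:ℝ)..u, g ρ) (g r) r := by
      apply intervalIntegral.integral_hasDerivAt_right
      · exact (hgc.mono hsub).intervalIntegrable
      · exact (hgc.mono (Ioi_subset_Ici_self)).stronglyMeasurableAtFilter isOpen_Ioi r hr
      · exact hgc.continuousAt (Ici_mem_nhds hr')
    have : G = fun u => ∫ ρ in (0:ℝ)..u, g ρ := funext hG
    rw [this]; exact h1
  -- derivative of μ
  have hμd : ∀ r ∈ Ioi (0:ℝ), HasDerivAt μ (μ r * q r) r := by
    intro r hr
    have hr' : (0:ℝ) < r := hr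
    have hsub : uIcc (1:ℝ) r ⊆ Ioi 0 := fun x hx =>
      lt_of_lt_of_le (lt_min one_pos hr') hx.1
    have h1 : HasDerivAt (fun u => ∫ s in (1:ℝ)..u, q s) (q r) r := by
      apply intervalIntegral.integral_hasDerivAt_right
      · exact (hqc.mono hsub).intervalIntegrable
      · exact hqc.stronglyMeasurableAtFilter isOpen_Ioi r hr
      · exact hqc.continuousAt (Ioi_mem_nhds hr')
    have h2 : HasDerivAt (fun u => Real.exp (∫ s in (1:ℝ)..u, q s))
        (Real.exp (∫ s in (1:ℝ)..r, q s) * q r) r := h1.exp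
    have hμfun : μ = fun u => Real.exp (∫ s in (1:ℝ)..u, q s) := funext hμ
    rw [hμfun]
    exact h2
  -- derivative of μ ^ (d-1)
  have key : ∀ x : ℝ, ((d - 1 : ℕ) : ℝ) * x ^ (d - 1 - 1) * x = c * x ^ (d - 1) := by
    intro x
    obtain ⟨n, rfl⟩ := Nat.exists_eq_add_of_le hd
    cases n with
    | zero => simp [hc]
    | succ m =>
      have h1 : 1 + (m + 1) - 1 = m + 1 := by omega
      rw [h1, Nat.succ_sub_one, hc, pow_succ]
      push_cast
      ring
  have hpowd : ∀ r ∈ Ioi (0:ℝ), HasDerivAt (fun u => μ u ^ (d - 1))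
      (c * μ r ^ (d - 1) * q r) r := by
    intro r hr
    have := (hμd r hr).pow (d - 1)
    rw [show c * μ r ^ (d - 1) * q r = ((d - 1 : ℕ) : ℝ) * μ r ^ (d - 1 - 1) * (μ r * q r) by
      rw [← key (μ r)]; ring]
    exact this
  -- derivatives of ψ
  have hψd1 : ∀ r ∈ Ioi (0:ℝ), HasDerivAt ψ (deriv ψ r) r := by
    intro r hr
    exact ((hψ.differentiableOn two_ne_zero).differentiableAt
      (Ioi_mem_nhds hr)).hasDerivAt
  have hψ'c : ContDiffOn ℝ 1 (deriv ψ) (Ioi 0) :=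
    hψ.deriv_of_isOpen isOpen_Ioi (by norm_num)
  have hψd2 : ∀ r ∈ Ioi (0:ℝ), HasDerivAt (deriv ψ) (deriv (deriv ψ) r) r := by
    intro r hr
    exact ((hψ'c.differentiableOn one_ne_zero).differentiableAt (Ioi_mem_nhds hr)).hasDerivAt
  -- derivative of F equals E
  have hFd : ∀ r ∈ Ioi (0:ℝ), HasDerivAt F (E r) r := by
    intro r hr
    have hr' : (0:ℝ) < r := hr
    have hexp : HasDerivAt (fun u => Real.exp (-(β * G u)))
        (Real.exp (-(β * G r)) * (-(β * g r))) r := (((hGd r hr).const_mul β).neg).exp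
    have hprod := (((hψd1 r hr).mul (hψd2 r hr)).mul hexp).mul (hpowd r hr)
    have hψ'' : deriv (deriv ψ) r =
        (β * g r - c / (r * (1 + η r ^ 2))) * deriv ψ r
        + c / (r ^ 2 * (1 + η r ^ 2)) * ψ r - β * h r := by
      have := heq r hr'
      linarith
    refine hprod.congr_deriv ?_
    simp only [hE, hqdef, Pi.mul_apply]
    rw [hψ'']
    have hne1 : r ≠ 0 := ne_of_gt hr'
    have hne2 : (1 + η r ^ 2) ≠ 0 := ne_of_gt (hη2 r)
    field_simp
    ring
  -- integrability of E
  have hEint : IntegrableOn E (Ioi 0) :=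
    (hint₁.add (hint₃.const_mul c)).sub (hint₂.const_mul β)
  -- for every ε > 0, ∫_{Ioi ε} E = 0 - F ε
  have hstep : ∀ ε : ℝ, 0 < ε → (∫ r in Ioi ε, E r) = 0 - F ε := by
    intro ε hε
    apply integral_Ioi_of_hasDerivAt_of_tendsto
    · exact (hFd ε hε).continuousAt.continuousWithinAt
    · exact fun x hx => hFd x (lt_trans hε hx)
    · exact hEint.mono_set (Ioi_subset_Ioi hε.le)
    · exact hbdtop
  -- take the limit ε → 0⁺ along 1/(n+1)
  have hseq : ∀ n : ℕ, (0:ℝ) < 1 / (n + 1) := fun n => by positivity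
  have hUnion : (⋃ n : ℕ, Ioi ((1:ℝ) / (n + 1))) = Ioi (0:ℝ) := by
    ext x
    simp only [mem_iUnion, mem_Ioi]
    constructor
    · rintro ⟨n, hn⟩; exact lt_trans (hseq n) hn
    · intro hx; exact exists_nat_one_div_lt hx
  have hmono : Monotone (fun n : ℕ => Ioi ((1:ℝ) / (n + 1))) := by
    intro n m hnm
    apply Ioi_subset_Ioi
    apply one_div_le_one_div_of_le (by positivity)
    exact_mod_cast Nat.add_le_add_right hnm 1
  have h1 : Tendsto (fun n : ℕ => ∫ r in Ioi ((1:ℝ) / (n + 1)), E r) atTop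
      (nhds (∫ r in Ioi (0:ℝ), E r)) := by
    have := tendsto_setIntegral_of_monotone (fun n : ℕ => measurableSet_Ioi) hmono
      (hUnion ▸ hEint)
    rwa [hUnion] at this
  have h2 : Tendsto (fun n : ℕ => (1:ℝ) / (n + 1)) atTop (nhdsWithin 0 (Ioi 0)) := by
    rw [tendsto_nhdsWithin_iff]
    constructor
    · exact tendsto_one_div_add_atTop_nhds_zero_nat
    · exact Eventually.of_forall fun n => hseq n
  have h3 : Tendsto (fun n : ℕ => F ((1:ℝ) / (n + 1))) atTop (nhds 0) := hbd0.comp h2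
  have h4 : Tendsto (fun n : ℕ => ∫ r in Ioi ((1:ℝ) / (n + 1)), E r) atTop (nhds 0) := by
    have : (fun n : ℕ => ∫ r in Ioi ((1:ℝ) / (n + 1)), E r)
        = fun n : ℕ => 0 - F ((1:ℝ) / (n + 1)) := funext fun n => hstep _ (hseq n)
    rw [this]
    simpa using (tendsto_const_nhds (x := (0:ℝ))).sub h3
  have hE0 : (∫ r in Ioi (0:ℝ), E r) = 0 := tendsto_nhds_unique h1 h4
  -- expand the integral of E
  simp only [hE] at hE0
  have hA : IntegrableOn (fun r => (deriv ψ r) ^ 2 * Real.exp (-(β * G r)) * μ r ^ (d - 1)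
      + c * ((ψ r) ^ 2 * (1 + η r ^ 2)⁻¹ * (r ^ 2)⁻¹ * Real.exp (-(β * G r)) * μ r ^ (d - 1)))
      (Ioi 0) := hint₁.add (hint₃.const_mul c)
  have hB : IntegrableOn (fun r => β * (ψ r * h r * Real.exp (-(β * G r)) * μ r ^ (d - 1)))
      (Ioi 0) := hint₂.const_mul β
  rw [integral_sub hA hB, integral_add hint₁ (hint₃.const_mul c),
    integral_const_mul, integral_const_mul] at hE0
  linarith
end

section
/- Under hypotheses (H), for every real c with 0 ≤ c < βε, the integral ∫₀^∞ e^{c r} σ(r)^{−2} μ(r)^{d−1} e^{−βG(r)} dr is finite. In particular the equilibrium density ν(r) := σ(r)^{−2} μ(r)^{d−1} e^{−βG(r)} has finite total mass on (0,∞). -/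
open Filter MeasureTheory Set

/-- Under hypotheses (H), for every 0 ≤ c < βε the integral
∫₀^∞ e^{cr} σ(r)⁻² μ(r)^{d−1} e^{−βG(r)} dr is finite; in particular the equilibrium
density ν = σ⁻² μ^{d−1} e^{−βG} has finite total mass on (0,∞). -/
theorem stmt10 (d : ℕ) (hd : 1 ≤ d) (β ε : ℝ) (hβ : 0 < β) (hε : 0 < ε)
    (f b σ η : ℝ → ℝ)
    (hfc : ContinuousOn f (Ici 0)) (hbc : ContinuousOn b (Ici 0))
    (hσc : ContinuousOn σ (Ici 0)) (hηc : ContinuousOn η (Ici 0))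
    (hσε : ∀ r ∈ Ici (0:ℝ), ε ≤ σ r)
    (g G μ : ℝ → ℝ)
    (hg : ∀ r, g r = 2 * r * b r / (σ r) ^ 2)
    (hG : ∀ r, G r = ∫ ρ in (0:ℝ)..r, g ρ)
    (hμ : ∀ r, μ r = Real.exp (∫ s in (1:ℝ)..r, 1 / (s * (1 + η s ^ 2))))
    (H1 : ∃ r₀ ≥ (1:ℝ), ∀ r ≥ r₀, ε ≤ g r)
    (H2 : ∃ ε' < β * ε / 2, Tendsto (fun r => Real.exp (-ε' * r) * f r) atTop (nhds 0)) :
    (∀ c : ℝ, 0 ≤ c → c < β * ε →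
      IntegrableOn
        (fun r => Real.exp (c * r) * (σ r ^ 2)⁻¹ * μ r ^ (d - 1) * Real.exp (-(β * G r)))
        (Ioi 0)) ∧
    IntegrableOn (fun r => (σ r ^ 2)⁻¹ * μ r ^ (d - 1) * Real.exp (-(β * G r))) (Ioi 0) := by
  clear hfc H2
  obtain ⟨r₀, hr₀1, hH1⟩ := H1
  have hr₀0 : (0:ℝ) ≤ r₀ := by linarith
  set k := d - 1 with hk
  -- σ is nonvanishing on [0,∞)
  have hσ0 : ∀ r ∈ Ici (0:ℝ), σ r ≠ 0 := fun r hr =>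
    ne_of_gt (lt_of_lt_of_le hε (hσε r hr))
  have hσ2 : ∀ r ∈ Ici (0:ℝ), ε ^ 2 ≤ σ r ^ 2 := fun r hr =>
    pow_le_pow_left₀ hε.le (hσε r hr) 2
  -- continuity of g on [0,∞)
  have hgc : ContinuousOn g (Ici 0) := by
    have h1 : ContinuousOn (fun r => 2 * r * b r / (σ r) ^ 2) (Ici 0) :=
      ((continuousOn_const.mul continuousOn_id).mul hbc).div (hσc.pow 2)
        (fun r hr => pow_ne_zero 2 (hσ0 r hr))
    exact h1.congr fun r _ => hg r
  have hgint : ∀ p q : ℝ, 0 ≤ p → p ≤ q → IntervalIntegrable g volume p q := by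
    intro p q hp hpq
    apply ContinuousOn.intervalIntegrable
    apply hgc.mono
    rw [uIcc_of_le hpq]
    exact fun t ht => le_trans hp ht.1
  -- continuity of G
  have hGcont : ∀ R : ℝ, 0 ≤ R → ContinuousOn G (Icc 0 R) := by
    intro R hR
    have hint : IntegrableOn g (uIcc 0 R) := by
      rw [uIcc_of_le hR]
      exact (hgc.mono (fun t ht => ht.1)).integrableOn_Icc
    have := intervalIntegral.continuousOn_primitive_interval hint
    rw [uIcc_of_le hR] at this
    exact this.congr fun x _ => hG x
  have hGIoi : ContinuousOn G (Ioi 0) := by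
    intro x hx
    have hx0 : (0:ℝ) < x := hx
    have h1 := (hGcont (x+1) (by linarith)) x ⟨hx0.le, by linarith⟩
    exact h1.mono_of_mem_nhdsWithin (mem_nhdsWithin_of_mem_nhds
      (Icc_mem_nhds hx0 (by linarith)))
  -- a bound on G over [0, r₀]
  obtain ⟨M, hM⟩ := isCompact_Icc.exists_bound_of_continuousOn (hGcont r₀ hr₀0)
  have hM0 : 0 ≤ M := le_trans (norm_nonneg _) (hM 0 ⟨le_rfl, hr₀0⟩)
  -- lower bound on G
  have hGlb : ∀ x : ℝ, 0 ≤ x → ε * x - (M + ε * r₀) ≤ G x := by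
    intro x hx
    rcases le_total x r₀ with hxr | hxr
    · have h1 : |G x| ≤ M := by
        simpa [Real.norm_eq_abs] using hM x ⟨hx, hxr⟩
      have h2 : ε * x ≤ ε * r₀ := by nlinarith
      have h3 := (abs_le.mp h1).1
      linarith
    · have hadd := intervalIntegral.integral_add_adjacent_intervals
        (hgint 0 r₀ le_rfl hr₀0) (hgint r₀ x hr₀0 hxr)
      have hmono : ε * (x - r₀) ≤ ∫ t in r₀..x, g t := by
        have h2 := intervalIntegral.integral_mono_on hxr
          (intervalIntegrable_const (c := ε)) (hgint r₀ x hr₀0 hxr)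
          (fun t ht => hH1 t ht.1)
        simpa [intervalIntegral.integral_const, smul_eq_mul, mul_comm] using h2
      have h1 : |G r₀| ≤ M := by
        simpa [Real.norm_eq_abs] using hM r₀ ⟨hr₀0, le_rfl⟩
      have hGx : G x = G r₀ + ∫ t in r₀..x, g t := by
        rw [hG x, hG r₀, ← hadd]
      have h3 := (abs_le.mp h1).1
      rw [hGx]; nlinarith
  -- continuity of the integrand of μ
  have hhc : ContinuousOn (fun s : ℝ => 1 / (s * (1 + η s ^ 2))) (Ioi 0) := by
    apply ContinuousOn.div continuousOn_const
    · exact continuousOn_id.mul (continuousOn_const.add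
        ((hηc.mono (Ioi_subset_Ici le_rfl)).pow 2))
    · intro s hs
      have hs0 : (0:ℝ) < s := hs
      nlinarith [sq_nonneg (η s)]
  have hμint : ∀ p q : ℝ, 0 < p → p ≤ q →
      IntervalIntegrable (fun s : ℝ => 1 / (s * (1 + η s ^ 2))) volume p q := by
    intro p q hp hpq
    apply ContinuousOn.intervalIntegrable
    apply hhc.mono
    rw [uIcc_of_le hpq]
    exact fun t ht => lt_of_lt_of_le hp ht.1
  -- continuity of μ on (0,∞)
  have hμc : ContinuousOn μ (Ioi 0) := by
    have hPc : ContinuousOn (fun r => ∫ s in (1:ℝ)..r, 1 / (s * (1 + η s ^ 2))) (Ioi 0) := by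
      intro x hx
      have hx0 : (0:ℝ) < x := hx
      have hb₁ : (0:ℝ) < min x 1 / 2 := by positivity
      have hb₁x : min x 1 / 2 < x := by
        have : min x 1 ≤ x := min_le_left _ _
        linarith
      have hb₁1 : min x 1 / 2 ≤ 1 := by
        have : min x 1 ≤ 1 := min_le_right _ _
        linarith
      have hble : min x 1 / 2 ≤ x + 1 := by linarith
      have hint := hμint (min x 1 / 2) (x + 1) hb₁ hble
      have hcont := intervalIntegral.continuousOn_primitive_interval' hint
        (by rw [uIcc_of_le hble]; exact ⟨hb₁1, by linarith⟩)
      have hxmem : x ∈ uIcc (min x 1 / 2) (x + 1) := by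
        rw [uIcc_of_le hble]; exact ⟨hb₁x.le, by linarith⟩
      exact (hcont x hxmem).mono_of_mem_nhdsWithin (mem_nhdsWithin_of_mem_nhds
        (by rw [uIcc_of_le hble]; exact Icc_mem_nhds hb₁x (by linarith)))
    exact (Real.continuous_exp.comp_continuousOn hPc).congr fun r _ => hμ r
  have hμpos : ∀ r : ℝ, 0 < μ r := fun r => by rw [hμ]; exact Real.exp_pos _
  -- upper bound on μ
  have hμle : ∀ x : ℝ, 0 < x → μ x ≤ 1 + x := by
    intro x hx
    rcases le_total x 1 with hx1 | hx1
    · rw [hμ]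
      have h0 : (0:ℝ) ≤ ∫ s in x..1, 1 / (s * (1 + η s ^ 2)) := by
        apply intervalIntegral.integral_nonneg hx1
        intro u hu
        have hu0 : 0 < u := lt_of_lt_of_le hx hu.1
        positivity
      have h1 : (∫ s in (1:ℝ)..x, 1 / (s * (1 + η s ^ 2))) ≤ 0 := by
        rw [intervalIntegral.integral_symm]; linarith
      calc Real.exp (∫ s in (1:ℝ)..x, 1 / (s * (1 + η s ^ 2)))
          ≤ Real.exp 0 := Real.exp_le_exp.mpr h1
        _ = 1 := Real.exp_zero
        _ ≤ 1 + x := by linarith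
    · rw [hμ]
      have hint1 := hμint 1 x one_pos hx1
      have hint2 : IntervalIntegrable (fun s : ℝ => 1 / s) volume 1 x := by
        apply ContinuousOn.intervalIntegrable
        apply ContinuousOn.div continuousOn_const continuousOn_id
        intro s hs
        rw [uIcc_of_le hx1] at hs
        exact ne_of_gt (lt_of_lt_of_le one_pos hs.1)
      have hm := intervalIntegral.integral_mono_on hx1 hint1 hint2 (fun s hs => by
        have hs0 : (0:ℝ) < s := lt_of_lt_of_le one_pos hs.1
        apply one_div_le_one_div_of_le hs0
        nlinarith [sq_nonneg (η s)])
      rw [integral_one_div (by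
        rw [uIcc_of_le hx1]
        intro h0
        exact absurd h0.1 (by norm_num)), div_one] at hm
      calc Real.exp (∫ s in (1:ℝ)..x, 1 / (s * (1 + η s ^ 2)))
          ≤ Real.exp (Real.log x) := Real.exp_le_exp.mpr hm
        _ = x := Real.exp_log (by linarith)
        _ ≤ 1 + x := by linarith
  -- the key integrability claim
  have key : ∀ c : ℝ, 0 ≤ c → c < β * ε →
      IntegrableOn
        (fun r => Real.exp (c * r) * (σ r ^ 2)⁻¹ * μ r ^ k * Real.exp (-(β * G r)))
        (Ioi 0) := by
    intro c hc hcβε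
    set a : ℝ := β * ε - c with ha_def
    have ha : 0 < a := by rw [ha_def]; linarith
    set K : ℝ := (ε ^ 2)⁻¹ * Real.exp (β * (M + ε * r₀)) with hK_def
    have hK0 : 0 ≤ K := by positivity
    -- dominating function
    have i1 : IntegrableOn (fun x => Real.exp (-a * x)) (Ioi 0) :=
      exp_neg_integrableOn_Ioi 0 ha
    have i2 : IntegrableOn (fun x => x ^ k * Real.exp (-a * x)) (Ioi 0) := by
      have h2 : IntegrableOn (fun x : ℝ => x ^ (k:ℝ) * Real.exp (-a * x ^ (1:ℝ))) (Ioi 0) :=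
        integrableOn_rpow_mul_exp_neg_mul_rpow
          (by exact_mod_cast (by norm_num : (-1:ℝ) < 0).trans_le (Nat.cast_nonneg k)) one_pos ha
      apply h2.congr_fun _ measurableSet_Ioi
      intro x hx
      simp [Real.rpow_natCast, Real.rpow_one]
    have iBd : IntegrableOn
        (fun x => K * 2 ^ k * (Real.exp (-a * x) + x ^ k * Real.exp (-a * x))) (Ioi 0) :=
      (i1.add i2).const_mul (K * 2 ^ k)
    -- continuity of the integrand on (0,∞)
    have hFc : ContinuousOn
        (fun r => Real.exp (c * r) * (σ r ^ 2)⁻¹ * μ r ^ k * Real.exp (-(β * G r))) (Ioi 0) := by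
      have hF1 : ContinuousOn (fun r => Real.exp (c * r)) (Ioi 0) :=
        (Real.continuous_exp.comp (continuous_const.mul continuous_id)).continuousOn
      have hF2 : ContinuousOn (fun r => (σ r ^ 2)⁻¹) (Ioi 0) :=
        ((hσc.mono (Ioi_subset_Ici le_rfl)).pow 2).inv₀
          (fun r hr => pow_ne_zero 2 (hσ0 r (mem_Ici.mpr (le_of_lt hr))))
      have hF3 : ContinuousOn (fun r => μ r ^ k) (Ioi 0) := hμc.pow k
      have hF4 : ContinuousOn (fun r => Real.exp (-(β * G r))) (Ioi 0) :=
        Real.continuous_exp.comp_continuousOn ((continuousOn_const.mul hGIoi).neg)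
      exact ((hF1.mul hF2).mul hF3).mul hF4
    apply Integrable.mono' iBd (hFc.aestronglyMeasurable measurableSet_Ioi)
    rw [ae_restrict_iff' measurableSet_Ioi]
    apply ae_of_all
    intro x hx
    have hx0 : (0:ℝ) < x := hx
    have hxI : x ∈ Ici (0:ℝ) := hx0.le
    have hFnn : 0 ≤ Real.exp (c * x) * (σ x ^ 2)⁻¹ * μ x ^ k * Real.exp (-(β * G x)) := by
      have h1 := (hμpos x).le
      positivity
    rw [Real.norm_eq_abs, abs_of_nonneg hFnn]
    have b1 : (σ x ^ 2)⁻¹ ≤ (ε ^ 2)⁻¹ :=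
      inv_anti₀ (by positivity) (hσ2 x hxI)
    have b2 : μ x ^ k ≤ (1 + x) ^ k :=
      pow_le_pow_left₀ (hμpos x).le (hμle x hx0) k
    have b3 : Real.exp (-(β * G x)) ≤
        Real.exp (β * (M + ε * r₀)) * Real.exp (-(β * ε) * x) := by
      rw [← Real.exp_add]
      apply Real.exp_le_exp.mpr
      have h1 := hGlb x hx0.le
      nlinarith
    have b4 : (1 + x) ^ k ≤ 2 ^ k * (1 + x ^ k) := by
      have hxk : (0:ℝ) ≤ x ^ k := pow_nonneg hx0.le k
      rcases le_total x 1 with h1 | h1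
      · calc (1 + x) ^ k ≤ 2 ^ k := pow_le_pow_left₀ (by linarith) (by linarith) k
          _ = 2 ^ k * 1 := (mul_one _).symm
          _ ≤ 2 ^ k * (1 + x ^ k) := by
              apply mul_le_mul_of_nonneg_left (by linarith) (by positivity)
      · calc (1 + x) ^ k ≤ (2 * x) ^ k := pow_le_pow_left₀ (by linarith) (by linarith) k
          _ = 2 ^ k * x ^ k := mul_pow 2 x k
          _ ≤ 2 ^ k * (1 + x ^ k) := by
              apply mul_le_mul_of_nonneg_left (by linarith) (by positivity)
    have hexp : Real.exp (c * x) * Real.exp (-(β * ε) * x) = Real.exp (-a * x) := by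
      rw [← Real.exp_add]
      congr 1
      rw [ha_def]; ring
    calc Real.exp (c * x) * (σ x ^ 2)⁻¹ * μ x ^ k * Real.exp (-(β * G x))
        ≤ Real.exp (c * x) * (ε ^ 2)⁻¹ * (1 + x) ^ k *
          (Real.exp (β * (M + ε * r₀)) * Real.exp (-(β * ε) * x)) := by
          apply mul_le_mul _ b3 (Real.exp_pos _).le (by positivity)
          apply mul_le_mul _ b2 (pow_nonneg (hμpos x).le k) (by positivity)
          exact mul_le_mul_of_nonneg_left b1 (Real.exp_pos _).le
      _ = K * ((1 + x) ^ k * Real.exp (-a * x)) := by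
          rw [hK_def, ← hexp]; ring
      _ ≤ K * (2 ^ k * (1 + x ^ k) * Real.exp (-a * x)) := by
          apply mul_le_mul_of_nonneg_left _ hK0
          exact mul_le_mul_of_nonneg_right b4 (Real.exp_pos _).le
      _ = K * 2 ^ k * (Real.exp (-a * x) + x ^ k * Real.exp (-a * x)) := by ring
  refine ⟨key, ?_⟩
  have h0 := key 0 le_rfl (by positivity)
  simpa using h0
end

section
/- Suppose d = 1 and hypotheses (H) hold. Then the function ψ(r) := β ∫₀^r e^{βG(ρ)} ( ∫_ρ^∞ e^{−βG(s)} h(s) ds ) dρ is well defined (all integrals converge absolutely), is C² on [0,∞), satisfies ψ(0) = 0, and solves ψ″(r) − β g(r) ψ′(r) + β h(r) = 0 for all r > 0. -/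
open Filter MeasureTheory Set

lemma primHD {u : ℝ → ℝ} (hu : ContinuousOn u (Ici 0)) {r : ℝ} (hr : 0 ≤ r) :
    HasDerivWithinAt (fun x => ∫ t in (0:ℝ)..x, u t) (u r) (Ici 0) r := by
  have hii : IntervalIntegrable u MeasureTheory.volume 0 r :=
    (hu.mono (by rw [uIcc_of_le hr]; exact Icc_subset_Ici_self)).intervalIntegrable
  have hmeas0 : AEStronglyMeasurable u (MeasureTheory.volume.restrict (Ici 0)) :=
    hu.aestronglyMeasurable measurableSet_Ici
  rcases eq_or_lt_of_le hr with h0 | h0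
  · subst h0
    exact intervalIntegral.integral_hasDerivWithinAt_right (t := Ioi 0) hii
      ⟨Ici 0, Filter.mem_of_superset self_mem_nhdsWithin Ioi_subset_Ici_self, hmeas0⟩
      ((hu 0 self_mem_Ici).mono Ioi_subset_Ici_self)
  · exact (intervalIntegral.integral_hasDerivAt_right hii
      ⟨Ici 0, Ici_mem_nhds h0, hmeas0⟩ (hu.continuousAt (Ici_mem_nhds h0))).hasDerivWithinAt


/-- For d = 1, under hypotheses (H), ψ(r) = β ∫₀^r e^{βG(ρ)} (∫_ρ^∞ e^{−βG(s)} h(s) ds) dρ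
is well defined, C² on [0,∞), vanishes at 0, and solves ψ″ − βgψ′ + βh = 0 on (0,∞). -/
theorem stmt12 (β ε : ℝ) (hβ : 0 < β) (hε : 0 < ε)
    (f b σ : ℝ → ℝ)
    (hfc : ContinuousOn f (Ici 0)) (hbc : ContinuousOn b (Ici 0))
    (hσc : ContinuousOn σ (Ici 0))
    (hσε : ∀ r ∈ Ici (0:ℝ), ε ≤ σ r)
    (g h G : ℝ → ℝ)
    (hg : ∀ r, g r = 2 * r * b r / (σ r) ^ 2)
    (hh : ∀ r, h r = 2 * r * f r / (σ r) ^ 2)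
    (hG : ∀ r, G r = ∫ ρ in (0:ℝ)..r, g ρ)
    (H1 : ∃ r₀ ≥ (1:ℝ), ∀ r ≥ r₀, ε ≤ g r)
    (H2 : ∃ ε' < β * ε / 2, Tendsto (fun r => Real.exp (-ε' * r) * f r) atTop (nhds 0))
    (ψ : ℝ → ℝ)
    (hψ : ∀ r, ψ r = β * ∫ ρ in (0:ℝ)..r,
        Real.exp (β * G ρ) * ∫ s in Ioi ρ, Real.exp (-(β * G s)) * h s) :
    (∀ ρ : ℝ, 0 ≤ ρ → IntegrableOn (fun s => Real.exp (-(β * G s)) * h s) (Ioi ρ)) ∧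
    (∀ r : ℝ, 0 ≤ r → IntegrableOn
        (fun ρ => Real.exp (β * G ρ) * ∫ s in Ioi ρ, Real.exp (-(β * G s)) * h s)
        (Ioc 0 r)) ∧
    ContDiffOn ℝ 2 ψ (Ici 0) ∧ ψ 0 = 0 ∧
    (∀ r > (0:ℝ), deriv (deriv ψ) r - β * g r * deriv ψ r + β * h r = 0) := by
  obtain ⟨r₀, hr₀1, hr₀⟩ := H1
  obtain ⟨ε', hε', hf'⟩ := H2
  have hσne : ∀ r ∈ Ici (0:ℝ), (σ r) ^ 2 ≠ 0 := fun r hr =>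
    pow_ne_zero 2 (ne_of_gt (lt_of_lt_of_le hε (hσε r hr)))
  have hhc : ContinuousOn h (Ici 0) := by
    have : ContinuousOn (fun r => 2 * r * f r / (σ r) ^ 2) (Ici 0) :=
      ((continuousOn_const.mul continuousOn_id).mul hfc).div (hσc.pow 2) hσne
    exact this.congr fun r _ => hh r
  have hgc : ContinuousOn g (Ici 0) := by
    have : ContinuousOn (fun r => 2 * r * b r / (σ r) ^ 2) (Ici 0) :=
      ((continuousOn_const.mul continuousOn_id).mul hbc).div (hσc.pow 2) hσne
    exact this.congr fun r _ => hg r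
  have hGd : ∀ r ∈ Ici (0:ℝ), HasDerivWithinAt G (g r) (Ici 0) r := by
    intro r hr
    have : G = fun x => ∫ t in (0:ℝ)..x, g t := funext hG
    rw [this]
    exact primHD hgc hr
  have hGcont : ContinuousOn G (Ici 0) := fun r hr => (hGd r hr).continuousWithinAt
  set c : ℝ → ℝ := fun s => Real.exp (-(β * G s)) * h s with hc
  have hcc : ContinuousOn c (Ici 0) :=
    (((continuousOn_const.mul hGcont).neg).rexp).mul hhc
  -- growth bound for G
  have hr₀0 : (0:ℝ) ≤ r₀ := le_trans zero_le_one hr₀1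
  have hint : ∀ a b2 : ℝ, 0 ≤ a → a ≤ b2 → IntervalIntegrable g MeasureTheory.volume a b2 := by
    intro a b2 ha hab
    exact (hgc.mono (by rw [uIcc_of_le hab]; exact fun x hx => le_trans ha hx.1)).intervalIntegrable
  have hGlow : ∀ s, r₀ ≤ s → G r₀ + ε * (s - r₀) ≤ G s := by
    intro s hs
    have hsub : G s - G r₀ = ∫ t in r₀..s, g t := by
      rw [hG s, hG r₀]
      exact intervalIntegral.integral_interval_sub_left
        (hint 0 s le_rfl (le_trans hr₀0 hs)) (hint 0 r₀ le_rfl hr₀0)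
    have hmono : ε * (s - r₀) ≤ ∫ t in r₀..s, g t := by
      have := intervalIntegral.integral_mono_on hs (intervalIntegrable_const (c := ε))
        (hint r₀ s hr₀0 hs) (fun x hx => hr₀ x hx.1)
      simpa [mul_comm] using this
    linarith [hsub ▸ hmono]
  -- decay constant
  have hδ : 0 < β * ε - ε' := by nlinarith [mul_pos hβ hε]
  set δ : ℝ := β * ε - ε' with hδdef
  -- eventual bound on f
  have hev : ∀ᶠ r in atTop, |Real.exp (-ε' * r) * f r| ≤ 1 := by
    have h1 : Tendsto (fun r => |Real.exp (-ε' * r) * f r|) atTop (nhds 0) := by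
      simpa using hf'.abs
    exact h1.eventually (eventually_le_nhds one_pos)
  obtain ⟨R, hR⟩ := eventually_atTop.mp hev
  -- pointwise bound on c for large s
  have hcbd : ∃ M : ℝ, 0 ≤ M ∧ ∀ s, max r₀ R ≤ s → |c s| ≤ M * Real.exp (-(δ/2) * s) := by
    set A : ℝ := Real.exp (β*ε*r₀ - β*G r₀) with hAdef
    have hA : 0 < A := Real.exp_pos _
    refine ⟨2/ε^2 * A * (2/δ), by positivity, ?_⟩
    intro s hsT
    have hsr : r₀ ≤ s := le_trans (le_max_left _ _) hsT
    have hs0 : (0:ℝ) ≤ s := le_trans hr₀0 hsr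
    have hsR : R ≤ s := le_trans (le_max_right _ _) hsT
    have hfs : |f s| ≤ Real.exp (ε' * s) := by
      have h1 := hR s hsR
      rw [abs_mul, abs_of_pos (Real.exp_pos _)] at h1
      calc |f s| = Real.exp (ε' * s) * (Real.exp (-ε' * s) * |f s|) := by
            rw [← mul_assoc, ← Real.exp_add]
            norm_num
        _ ≤ Real.exp (ε' * s) * 1 := mul_le_mul_of_nonneg_left h1 (Real.exp_pos _).le
        _ = _ := mul_one _
    have hexp : Real.exp (-(β * G s)) ≤ A * Real.exp (-(β*ε) * s) := by
      rw [hAdef, ← Real.exp_add]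
      apply Real.exp_le_exp.mpr
      have := hGlow s hsr
      nlinarith
    have hσs : ε ≤ σ s := hσε s hs0
    have hσ2 : ε^2 ≤ (σ s)^2 := by nlinarith
    have hhs : |h s| ≤ 2/ε^2 * (s * |f s|) := by
      rw [hh s, abs_div, abs_of_pos (lt_of_lt_of_le (by positivity) hσ2)]
      rw [abs_mul, abs_mul, abs_of_nonneg hs0, abs_of_nonneg (by norm_num : (0:ℝ) ≤ 2)]
      calc 2 * s * |f s| / (σ s)^2 ≤ 2 * s * |f s| / ε^2 := by
            apply div_le_div_of_nonneg_left (by positivity) (by positivity) hσ2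
        _ = 2/ε^2 * (s * |f s|) := by ring
    have hskey : s ≤ 2/δ * Real.exp (δ/2 * s) := by
      have h1 : δ/2 * s ≤ Real.exp (δ/2 * s) := by
        have := Real.add_one_le_exp (δ/2 * s)
        have : (0:ℝ) ≤ δ/2 * s := by positivity
        linarith [Real.add_one_le_exp (δ/2 * s)]
      calc s = 2/δ * (δ/2 * s) := by field_simp
        _ ≤ 2/δ * Real.exp (δ/2 * s) := mul_le_mul_of_nonneg_left h1 (by positivity)
    have key : Real.exp (-(β*ε)*s) * Real.exp (ε' * s) = Real.exp (-δ * s) := by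
      rw [← Real.exp_add]; congr 1; rw [hδdef]; ring
    have keyexp : Real.exp (δ/2*s) * Real.exp (-δ * s) = Real.exp (-(δ/2) * s) := by
      rw [← Real.exp_add]; congr 1; ring
    calc |c s| = Real.exp (-(β*G s)) * |h s| := by
          rw [hc]; rw [abs_mul, abs_of_pos (Real.exp_pos _)]
      _ ≤ (A * Real.exp (-(β*ε)*s)) * (2/ε^2 * (s * Real.exp (ε' * s))) := by
          apply mul_le_mul hexp ?_ (abs_nonneg _) (by positivity)
          calc |h s| ≤ 2/ε^2 * (s * |f s|) := hhs
            _ ≤ 2/ε^2 * (s * Real.exp (ε' * s)) := by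
                apply mul_le_mul_of_nonneg_left _ (by positivity)
                exact mul_le_mul_of_nonneg_left hfs hs0
      _ = 2/ε^2 * A * s * (Real.exp (-(β*ε)*s) * Real.exp (ε' * s)) := by ring
      _ = 2/ε^2 * A * s * Real.exp (-δ * s) := by rw [key]
      _ ≤ 2/ε^2 * A * (2/δ * Real.exp (δ/2*s)) * Real.exp (-δ * s) := by
          apply mul_le_mul_of_nonneg_right _ (Real.exp_pos _).le
          exact mul_le_mul_of_nonneg_left hskey (by positivity)
      _ = 2/ε^2 * A * (2/δ) * (Real.exp (δ/2*s) * Real.exp (-δ * s)) := by ring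
      _ = 2/ε^2 * A * (2/δ) * Real.exp (-(δ/2) * s) := by rw [keyexp]
  obtain ⟨M, hM0, hMbd⟩ := hcbd
  -- integrability of c on Ioi ρ for ρ ≥ 0
  have hIoi : ∀ ρ : ℝ, 0 ≤ ρ → IntegrableOn c (Ioi ρ) := by
    intro ρ hρ
    set T := max (max r₀ R) ρ with hTdef
    have hρT : ρ ≤ T := le_max_right _ _
    have hT0 : (0:ℝ) ≤ T := le_trans hρ hρT
    have h1 : IntegrableOn c (Ioc ρ T) := by
      have : IntegrableOn c (Icc ρ T) :=
        (hcc.mono (fun x hx => le_trans hρ hx.1)).integrableOn_Icc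
      exact this.mono_set Ioc_subset_Icc_self
    have h2 : IntegrableOn c (Ioi T) := by
      have hexp_int : IntegrableOn (fun s => M * Real.exp (-(δ/2) * s)) (Ioi T) :=
        (exp_neg_integrableOn_Ioi T (by positivity)).const_mul M
      apply Integrable.mono' hexp_int
      · exact (hcc.mono (fun x hx => le_trans hT0 (le_of_lt hx))).aestronglyMeasurable
          measurableSet_Ioi
      · filter_upwards [ae_restrict_mem measurableSet_Ioi] with s hs
        rw [Real.norm_eq_abs]
        exact hMbd s (le_trans (le_max_left _ _) hs.le)
    have := h1.union h2
    rwa [Ioc_union_Ioi_eq_Ioi hρT] at this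
  -- primitive of c and the tail integral
  set F : ℝ → ℝ := fun ρ => ∫ t in (0:ℝ)..ρ, c t with hFdef
  set K : ℝ := ∫ s in Ioi (0:ℝ), c s with hKdef
  have hΦ : ∀ ρ : ℝ, 0 ≤ ρ → (∫ s in Ioi ρ, c s) = K - F ρ := by
    intro ρ hρ
    have hsplit : K = F ρ + ∫ s in Ioi ρ, c s := by
      rw [hKdef, hFdef]
      simp only []
      rw [intervalIntegral.integral_of_le hρ]
      rw [← MeasureTheory.setIntegral_union (Ioc_disjoint_Ioi le_rfl) measurableSet_Ioi
        ((hIoi 0 le_rfl).mono_set Ioc_subset_Ioi_self) (hIoi ρ hρ)]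
      rw [Ioc_union_Ioi_eq_Ioi hρ]
    linarith
  set q : ℝ → ℝ := fun ρ => Real.exp (β * G ρ) * (K - F ρ) with hqdef
  have hFd : ∀ r ∈ Ici (0:ℝ), HasDerivWithinAt F (c r) (Ici 0) r := fun r hr => primHD hcc hr
  have hFcont : ContinuousOn F (Ici 0) := fun r hr => (hFd r hr).continuousWithinAt
  have hqc : ContinuousOn q (Ici 0) :=
    ((continuousOn_const.mul hGcont).rexp).mul (continuousOn_const.sub hFcont)
  have hqd : ∀ r ∈ Ici (0:ℝ), HasDerivWithinAt q (β * g r * q r - h r) (Ici 0) r := by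
    intro r hr
    have h1 : HasDerivWithinAt (fun ρ => Real.exp (β * G ρ))
        (Real.exp (β * G r) * (β * g r)) (Ici 0) r := ((hGd r hr).const_mul β).exp
    have h2 : HasDerivWithinAt (fun ρ => K - F ρ) (-(c r)) (Ici 0) r := by
      simpa using (hFd r hr).const_sub K
    have h3 := h1.mul h2
    have h4 : Real.exp (β * G r) * (β * g r) * (K - F r) + Real.exp (β * G r) * (-(c r))
        = β * g r * q r - h r := by
      rw [hqdef, hc]
      simp only []
      have hcancel : Real.exp (β * G r) * (Real.exp (-(β * G r)) * h r) = h r := by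
        rw [← mul_assoc, ← Real.exp_add]
        simp
      calc Real.exp (β * G r) * (β * g r) * (K - F r)
            + Real.exp (β * G r) * (-(Real.exp (-(β * G r)) * h r))
          = β * g r * (Real.exp (β * G r) * (K - F r))
            - Real.exp (β * G r) * (Real.exp (-(β * G r)) * h r) := by ring
        _ = β * g r * (Real.exp (β * G r) * (K - F r)) - h r := by rw [hcancel]
    exact h4 ▸ h3
  have hψq : ∀ x ∈ Ici (0:ℝ), ψ x = β * ∫ ρ in (0:ℝ)..x, q ρ := by
    intro x hx
    rw [hψ x]
    congr 1
    apply intervalIntegral.integral_congr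
    intro ρ hρ
    rw [uIcc_of_le hx] at hρ
    rw [hqdef]
    simp only []
    rw [hΦ ρ hρ.1]
  have hψd : ∀ r ∈ Ici (0:ℝ), HasDerivWithinAt ψ (β * q r) (Ici 0) r := by
    intro r hr
    exact ((primHD hqc hr).const_mul β).congr hψq (hψq r hr)
  have huniq : UniqueDiffOn ℝ (Ici (0:ℝ)) := uniqueDiffOn_Ici 0
  have hdw1 : ∀ r ∈ Ici (0:ℝ), derivWithin ψ (Ici 0) r = β * q r :=
    fun r hr => (hψd r hr).derivWithin (huniq r hr)
  have hq1 : ContDiffOn ℝ 1 (fun r => β * q r) (Ici 0) := by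
    rw [show (1 : WithTop ℕ∞) = 0 + 1 by rfl]
    apply (contDiffOn_succ_iff_derivWithin huniq).2
    refine ⟨fun r hr => ((hqd r hr).const_mul β).differentiableWithinAt, by simp, ?_⟩
    rw [contDiffOn_zero]
    have hcont : ContinuousOn (fun r => β * (β * g r * q r - h r)) (Ici 0) :=
      continuousOn_const.mul (((continuousOn_const.mul hgc).mul hqc).sub hhc)
    exact hcont.congr fun r hr => ((hqd r hr).const_mul β).derivWithin (huniq r hr)
  have hψC2 : ContDiffOn ℝ 2 ψ (Ici 0) := by
    rw [show (2 : WithTop ℕ∞) = 1 + 1 by rfl]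
    apply (contDiffOn_succ_iff_derivWithin huniq).2
    exact ⟨fun r hr => (hψd r hr).differentiableWithinAt, by simp, hq1.congr hdw1⟩
  have hψ0 : ψ 0 = 0 := by simp [hψ 0]
  -- the ODE
  have hODE : ∀ r > (0:ℝ), deriv (deriv ψ) r - β * g r * deriv ψ r + β * h r = 0 := by
    intro r hr
    have hd1 : ∀ x > (0:ℝ), HasDerivAt ψ (β * q x) x := fun x hx =>
      (hψd x (le_of_lt hx)).hasDerivAt (Ici_mem_nhds hx)
    have hderiv_eq : deriv ψ =ᶠ[nhds r] (fun x => β * q x) := by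
      filter_upwards [Ioi_mem_nhds hr] with x hx
      exact (hd1 x hx).deriv
    have hq' : HasDerivAt (fun x => β * q x) (β * (β * g r * q r - h r)) r :=
      ((hqd r (le_of_lt hr)).hasDerivAt (Ici_mem_nhds hr)).const_mul β
    have hd2 : HasDerivAt (deriv ψ) (β * (β * g r * q r - h r)) r :=
      hq'.congr_of_eventuallyEq hderiv_eq
    rw [hd2.deriv, (hd1 r hr).deriv]
    ring
  refine ⟨hIoi, ?_, hψC2, hψ0, hODE⟩
  intro r hr
  have hq_int : IntegrableOn q (Ioc 0 r) := by
    rcases le_or_gt r 0 with h0 | h0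
    · simp [Ioc_eq_empty (not_lt.mpr h0)]
    · exact ((hqc.mono (fun x hx => hx.1)).integrableOn_Icc (a := 0) (b := r)).mono_set
        Ioc_subset_Icc_self
  apply hq_int.congr_fun ?_ measurableSet_Ioc
  intro ρ hρ
  simp only []
  rw [hΦ ρ (le_of_lt hρ.1), hqdef]
end

section
/- As β → ∞, one has J_β ∼ √(π/2) · β^{−1/2}; that is, lim_{β→∞} β^{1/2} J_β = √(π/2). Moreover, for every β > 0 the identity J_β = ∫₀^∞ e^{−u} / √(u(u+2β)) du holds. -/
open Filter MeasureTheory Set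


lemma key (β : ℝ) (hβ : 0 < β) :
    (∫ z in Ioi (0:ℝ), Real.exp (β * (1 - Real.sqrt (1 + z ^ 2))) / Real.sqrt (1 + z ^ 2))
      = ∫ u in Ioi (0:ℝ), Real.exp (-u) / Real.sqrt (u * (u + 2 * β)) := by
  set φ : ℝ → ℝ := fun z => β * (Real.sqrt (1 + z ^ 2) - 1) with hφ
  have hs1 : ∀ z : ℝ, (0:ℝ) < 1 + z ^ 2 := fun z => by positivity
  have hderiv : ∀ z ∈ Ioi (0:ℝ),
      HasDerivWithinAt φ (β * (z / Real.sqrt (1 + z ^ 2))) (Ioi 0) z := by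
    intro z hz
    have h1 : HasDerivAt (fun z : ℝ => 1 + z ^ 2) (2 * z) z := by
      simpa using ((hasDerivAt_pow 2 z).const_add 1)
    have h2 : HasDerivAt (fun z : ℝ => Real.sqrt (1 + z ^ 2))
        (2 * z / (2 * Real.sqrt (1 + z ^ 2))) z :=
      (Real.hasDerivAt_sqrt (ne_of_gt (hs1 z))).comp z h1 |>.congr_deriv (by ring)
    have h3 : (2 * z / (2 * Real.sqrt (1 + z ^ 2))) = z / Real.sqrt (1 + z ^ 2) := by
      rw [mul_div_mul_left]; norm_num
    rw [h3] at h2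
    exact ((h2.sub_const 1).const_mul β).hasDerivWithinAt
  have hmono : StrictMonoOn φ (Ioi (0:ℝ)) := by
    intro a ha b hb hab
    have : Real.sqrt (1 + a ^ 2) < Real.sqrt (1 + b ^ 2) := by
      apply Real.sqrt_lt_sqrt (le_of_lt (hs1 a))
      nlinarith [mem_Ioi.mp ha, mem_Ioi.mp hb]
    have := sub_lt_sub_right this 1
    exact mul_lt_mul_of_pos_left this hβ
  have himg : φ '' Ioi (0:ℝ) = Ioi (0:ℝ) := by
    ext u
    constructor
    · rintro ⟨z, hz, rfl⟩
      have hz' : (0:ℝ) < z := hz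
      have h1 : (1:ℝ) < Real.sqrt (1 + z ^ 2) := by
        rw [show ((1:ℝ) < Real.sqrt (1 + z ^ 2)) ↔ (1:ℝ)^2 < 1 + z^2 from Real.lt_sqrt (by norm_num)]
        nlinarith
      show (0:ℝ) < β * (Real.sqrt (1 + z ^ 2) - 1)
      nlinarith
    · intro hu
      have hu' : (0:ℝ) < u := hu
      refine ⟨Real.sqrt ((1 + u / β) ^ 2 - 1), ?_, ?_⟩
      · have : (0:ℝ) < (1 + u / β) ^ 2 - 1 := by
          have : 0 < u / β := div_pos hu' hβ
          nlinarith
        exact Real.sqrt_pos.mpr this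
      · have h1 : (0:ℝ) ≤ (1 + u / β) ^ 2 - 1 := by
          have : 0 < u / β := div_pos hu' hβ
          nlinarith
        have h2 : 1 + Real.sqrt ((1 + u / β) ^ 2 - 1) ^ 2 = (1 + u / β) ^ 2 := by
          rw [Real.sq_sqrt h1]; ring
        have h3 : 0 ≤ 1 + u / β := by positivity
        simp only [hφ, h2, Real.sqrt_sq h3]
        field_simp
        ring
  have := MeasureTheory.integral_image_eq_integral_abs_deriv_smul measurableSet_Ioi hderiv
    (hmono.injOn) (fun u => Real.exp (-u) / Real.sqrt (u * (u + 2 * β)))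
  rw [himg] at this
  rw [this]
  apply setIntegral_congr_fun measurableSet_Ioi
  intro z hz
  have hz' : (0:ℝ) < z := hz
  have hsq : 0 < Real.sqrt (1 + z ^ 2) := Real.sqrt_pos.mpr (hs1 z)
  have hsqval : Real.sqrt (1 + z ^ 2) ^ 2 = 1 + z ^ 2 := Real.sq_sqrt (le_of_lt (hs1 z))
  have hkey : φ z * (φ z + 2 * β) = (β * z) ^ 2 := by
    simp only [hφ]; linear_combination β ^ 2 * hsqval
  have h4 : Real.sqrt (φ z * (φ z + 2 * β)) = β * z := by
    rw [hkey, Real.sqrt_sq (by positivity)]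
  have h5 : |β * (z / Real.sqrt (1 + z ^ 2))| = β * z / Real.sqrt (1 + z ^ 2) := by
    rw [abs_of_pos (by positivity), mul_div_assoc]
  simp only [smul_eq_mul, h5, h4]
  have h6 : -φ z = β * (1 - Real.sqrt (1 + z ^ 2)) := by simp only [hφ]; ring
  rw [h6]
  field_simp


lemma bound_integrable :
    IntegrableOn (fun u : ℝ => Real.exp (-u) / Real.sqrt (2 * u)) (Ioi 0) := by
  have h := Real.GammaIntegral_convergent (by norm_num : (0:ℝ) < 1/2)
  have h2 : IntegrableOn (fun u : ℝ => (1 / Real.sqrt 2) * (Real.exp (-u) * u ^ ((1:ℝ)/2 - 1))) (Ioi 0) :=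
    h.const_mul _
  apply h2.congr_fun _ measurableSet_Ioi
  intro u hu
  have hu' : (0:ℝ) < u := hu
  simp only
  rw [Real.sqrt_mul (by norm_num) u, show (1:ℝ)/2 - 1 = -(1/2) by norm_num,
    Real.rpow_neg (le_of_lt hu'), ← Real.sqrt_eq_rpow]
  field_simp

lemma limit_integral :
    (∫ u in Ioi (0:ℝ), Real.exp (-u) / Real.sqrt (2 * u)) = Real.sqrt (Real.pi / 2) := by
  have h := Real.Gamma_eq_integral (by norm_num : (0:ℝ) < 1/2)
  rw [Real.Gamma_one_half_eq] at h
  have key : (∫ u in Ioi (0:ℝ), Real.exp (-u) / Real.sqrt (2 * u))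
      = (1 / Real.sqrt 2) * ∫ u in Ioi (0:ℝ), Real.exp (-u) * u ^ ((1:ℝ)/2 - 1) := by
    rw [← integral_const_mul]
    apply setIntegral_congr_fun measurableSet_Ioi
    intro u hu
    have hu' : (0:ℝ) < u := hu
    simp only
    rw [Real.sqrt_mul (by norm_num) u, show (1:ℝ)/2 - 1 = -(1/2) by norm_num,
      Real.rpow_neg (le_of_lt hu'), ← Real.sqrt_eq_rpow]
    field_simp
  rw [key, ← h, Real.sqrt_div Real.pi_pos.le]
  rw [one_div, inv_mul_eq_div]

lemma stepA (β : ℝ) (hβ : 0 < β) :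
    Real.sqrt β * (∫ u in Ioi (0:ℝ), Real.exp (-u) / Real.sqrt (u * (u + 2 * β)))
      = ∫ u in Ioi (0:ℝ), Real.exp (-u) / Real.sqrt (u ^ 2 / β + 2 * u) := by
  rw [← integral_const_mul]
  apply setIntegral_congr_fun measurableSet_Ioi
  intro u hu
  have hu' : (0:ℝ) < u := hu
  simp only
  have h1 : u * (u + 2 * β) = β * (u ^ 2 / β + 2 * u) := by field_simp
  have h2 : Real.sqrt (u * (u + 2 * β)) = Real.sqrt β * Real.sqrt (u ^ 2 / β + 2 * u) := by
    rw [h1, Real.sqrt_mul hβ.le]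
  rw [h2]
  have h3 : Real.sqrt β ≠ 0 := ne_of_gt (Real.sqrt_pos.mpr hβ)
  have h4 : Real.sqrt (u ^ 2 / β + 2 * u) ≠ 0 :=
    ne_of_gt (Real.sqrt_pos.mpr (by positivity))
  field_simp

lemma stepB :
    Tendsto (fun β : ℝ => ∫ u in Ioi (0:ℝ), Real.exp (-u) / Real.sqrt (u ^ 2 / β + 2 * u))
      atTop (nhds (Real.sqrt (Real.pi / 2))) := by
  rw [← limit_integral]
  apply tendsto_integral_filter_of_dominated_convergence
    (fun u => Real.exp (-u) / Real.sqrt (2 * u))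
  · filter_upwards with β
    apply Measurable.aestronglyMeasurable
    fun_prop
  · filter_upwards [eventually_gt_atTop (0:ℝ)] with β hβ
    rw [ae_restrict_iff' measurableSet_Ioi]
    filter_upwards with u hu
    have hu' : (0:ℝ) < u := hu
    have h1 : (0:ℝ) < Real.sqrt (2 * u) := Real.sqrt_pos.mpr (by positivity)
    have h2 : Real.sqrt (2 * u) ≤ Real.sqrt (u ^ 2 / β + 2 * u) :=
      Real.sqrt_le_sqrt (le_add_of_nonneg_left (by positivity))
    have hnn : (0:ℝ) ≤ Real.exp (-u) / Real.sqrt (u ^ 2 / β + 2 * u) := by positivity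
    rw [Real.norm_eq_abs, abs_of_nonneg hnn]
    exact div_le_div_of_nonneg_left (Real.exp_pos _).le h1 h2
  · exact bound_integrable
  · rw [ae_restrict_iff' measurableSet_Ioi]
    filter_upwards with u hu
    have hu' : (0:ℝ) < u := hu
    have h0 : Tendsto (fun β : ℝ => u ^ 2 / β + 2 * u) atTop (nhds (2 * u)) := by
      have := (tendsto_inv_atTop_zero (𝕜 := ℝ)).const_mul (u ^ 2)
      simp only [mul_zero] at this
      simpa [div_eq_mul_inv] using this.add_const (2 * u)
    have h1 : Tendsto (fun β : ℝ => Real.sqrt (u ^ 2 / β + 2 * u)) atTop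
        (nhds (Real.sqrt (2 * u))) :=
      (Real.continuous_sqrt.continuousAt.tendsto).comp h0
    have h2 : Real.sqrt (2 * u) ≠ 0 := ne_of_gt (Real.sqrt_pos.mpr (by positivity))
    exact tendsto_const_nhds.div h1 h2

/-- For every β > 0, J_β = ∫₀^∞ e^{−u}/√(u(u+2β)) du, and β^{1/2} J_β → √(π/2) as β → ∞. -/
theorem stmt13 :
    (∀ β > (0:ℝ),
      (∫ z in Ioi (0:ℝ), Real.exp (β * (1 - Real.sqrt (1 + z ^ 2))) / Real.sqrt (1 + z ^ 2))
        = ∫ u in Ioi (0:ℝ), Real.exp (-u) / Real.sqrt (u * (u + 2 * β))) ∧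
    Tendsto (fun β : ℝ => Real.sqrt β *
        ∫ z in Ioi (0:ℝ), Real.exp (β * (1 - Real.sqrt (1 + z ^ 2))) / Real.sqrt (1 + z ^ 2))
      atTop (nhds (Real.sqrt (Real.pi / 2))) := by
  refine ⟨fun β hβ => key β hβ, ?_⟩
  apply stepB.congr'
  filter_upwards [eventually_gt_atTop (0:ℝ)] with β hβ
  rw [key β hβ]
  exact (stepA β hβ).symm
end

section
/- As β → 0⁺, one has J_β ∼ log(1/β); that is, lim_{β→0⁺} J_β / log(1/β) = 1. -/
open Filter MeasureTheory Set Real Topology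

noncomputable def Ff (β z : ℝ) : ℝ :=
  Real.exp (β * (1 - Real.sqrt (1 + z ^ 2))) / Real.sqrt (1 + z ^ 2)

lemma sq_pos (z : ℝ) : 0 < Real.sqrt (1 + z ^ 2) := Real.sqrt_pos.2 (by positivity)

lemma one_le_sq (z : ℝ) : 1 ≤ Real.sqrt (1 + z ^ 2) := by
  have h : (1:ℝ) ≤ 1 + z ^ 2 := by nlinarith
  calc (1:ℝ) = Real.sqrt 1 := by simp
    _ ≤ _ := Real.sqrt_le_sqrt h

lemma le_sq {z : ℝ} (hz : 0 ≤ z) : z ≤ Real.sqrt (1 + z ^ 2) :=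
  (Real.le_sqrt hz (by positivity)).2 (by nlinarith)

lemma sqle {z : ℝ} (hz : 0 ≤ z) : Real.sqrt (1 + z ^ 2) ≤ 1 + z := by
  rw [show 1 + z = Real.sqrt ((1 + z) ^ 2) from (Real.sqrt_sq (by linarith)).symm]
  exact Real.sqrt_le_sqrt (by nlinarith)

lemma contF (β : ℝ) : Continuous (Ff β) := by
  apply Continuous.div
  · fun_prop
  · fun_prop
  · exact fun z => (sq_pos z).ne'

lemma Fnonneg (β z : ℝ) : 0 ≤ Ff β z := by
  unfold Ff; positivity

lemma intF {β : ℝ} (hβ : 0 < β) : IntegrableOn (Ff β) (Ioi 0) := by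
  apply Integrable.mono' (((exp_neg_integrableOn_Ioi 0 hβ)).const_mul (Real.exp β))
  · exact (contF β).aestronglyMeasurable.restrict
  · filter_upwards [ae_restrict_mem measurableSet_Ioi] with z hz
    rw [Real.norm_eq_abs, abs_of_nonneg (Fnonneg β z)]
    have h1 : Ff β z ≤ Real.exp (β * (1 - Real.sqrt (1 + z ^ 2))) := by
      unfold Ff
      rw [div_le_iff₀ (sq_pos z)]
      nlinarith [one_le_sq z, Real.exp_pos (β * (1 - Real.sqrt (1 + z ^ 2)))]
    have h2 : β * (1 - Real.sqrt (1 + z ^ 2)) ≤ β + -β * z := by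
      have := le_sq (le_of_lt hz)
      nlinarith
    calc Ff β z ≤ Real.exp (β + -β * z) := h1.trans (Real.exp_le_exp.2 h2)
      _ = Real.exp β * Real.exp (-β * z) := Real.exp_add _ _

lemma integral_inv_sq {T : ℝ} (hT : 0 ≤ T) :
    ∫ z in Ioc 0 T, (Real.sqrt (1 + z ^ 2))⁻¹ = Real.arsinh T := by
  rw [← intervalIntegral.integral_of_le hT,
    intervalIntegral.integral_eq_sub_of_hasDerivAt
      (fun x _ => Real.hasDerivAt_arsinh x) ?_]
  · simp
  · apply Continuous.intervalIntegrable
    exact Continuous.inv₀ (by fun_prop) (fun z => (sq_pos z).ne')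

lemma tail_integral {β : ℝ} (hβ : 0 < β) (T : ℝ) :
    ∫ z in Ioi T, Real.exp (-β * z) = Real.exp (-β * T) / β := by
  have hd : ∀ x ∈ Ici T, HasDerivAt (fun z => -(Real.exp (-β * z) / β))
      (Real.exp (-β * x)) x := by
    intro x _
    have h1 : HasDerivAt (fun z : ℝ => -β * z) (-β) x :=
      (hasDerivAt_id x).const_mul (-β) |>.congr_deriv (by ring)
    have h2 := (h1.exp.div_const β).neg
    exact h2.congr_deriv (by rw [mul_neg, neg_div, neg_neg, mul_div_assoc, div_self hβ.ne', mul_one])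
  have htend : Tendsto (fun z => -(Real.exp (-β * z) / β)) atTop (𝓝 0) := by
    rw [show (0:ℝ) = -(0/β) by simp]
    apply Tendsto.neg
    apply Tendsto.div_const
    exact Real.tendsto_exp_atBot.comp (tendsto_id.const_mul_atTop_of_neg (by linarith))
  rw [integral_Ioi_of_hasDerivAt_of_tendsto' hd (exp_neg_integrableOn_Ioi T hβ) htend]
  simp

lemma log_le_arsinh {x : ℝ} (hx : 0 < x) : Real.log x ≤ Real.arsinh x := by
  rw [Real.arsinh]
  apply Real.log_le_log hx
  nlinarith [Real.sqrt_nonneg (1 + x ^ 2)]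

lemma arsinh_le_log {x : ℝ} (hx : 1 ≤ x) : Real.arsinh x ≤ Real.log 3 + Real.log x := by
  rw [Real.arsinh, ← Real.log_mul (by norm_num) (by linarith)]
  apply Real.log_le_log (by nlinarith [Real.sqrt_nonneg (1 + x ^ 2)])
  have : Real.sqrt (1 + x ^ 2) ≤ 2 * x := by
    rw [show 2 * x = Real.sqrt ((2 * x) ^ 2) from (Real.sqrt_sq (by linarith)).symm]
    exact Real.sqrt_le_sqrt (by nlinarith)
  linarith

lemma inv_sq_intOn {a b : ℝ} : IntegrableOn (fun z => (Real.sqrt (1 + z ^ 2))⁻¹) (Ioc a b) := by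
  apply Continuous.integrableOn_Ioc
  exact Continuous.inv₀ (by fun_prop) (fun z => (sq_pos z).ne')

lemma upper {β : ℝ} (hβ : 0 < β) (hβ1 : β ≤ 1) :
    ∫ z in Ioi (0:ℝ), Ff β z ≤ Real.arsinh (1 / β) + 1 := by
  set T := 1 / β with hT
  have hT0 : 0 < T := by positivity
  have hsplit : ∫ z in Ioi (0:ℝ), Ff β z =
      (∫ z in Ioc 0 T, Ff β z) + ∫ z in Ioi T, Ff β z := by
    rw [← setIntegral_union (Ioc_disjoint_Ioi le_rfl) measurableSet_Ioi
      ((intF hβ).mono_set Ioc_subset_Ioi_self) ((intF hβ).mono_set (Ioi_subset_Ioi hT0.le)),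
      Ioc_union_Ioi_eq_Ioi hT0.le]
  have h1 : ∫ z in Ioc 0 T, Ff β z ≤ Real.arsinh T := by
    rw [← integral_inv_sq hT0.le]
    apply setIntegral_mono_on ((intF hβ).mono_set Ioc_subset_Ioi_self) inv_sq_intOn
      measurableSet_Ioc
    intro z hz
    unfold Ff
    rw [div_le_iff₀ (sq_pos z), inv_mul_cancel₀ (sq_pos z).ne']
    apply Real.exp_le_one_iff.2
    nlinarith [one_le_sq z]
  have h2 : ∫ z in Ioi T, Ff β z ≤ 1 := by
    have key : ∫ z in Ioi T, Ff β z ≤ ∫ z in Ioi T, Real.exp β * β * Real.exp (-β * z) := by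
      apply setIntegral_mono_on ((intF hβ).mono_set (Ioi_subset_Ioi hT0.le))
        (((exp_neg_integrableOn_Ioi T hβ)).const_mul _) measurableSet_Ioi
      intro z hz
      have hzT : T < z := hz
      have hz0 : 0 < z := hT0.trans hzT
      have hinv : (Real.sqrt (1 + z ^ 2))⁻¹ ≤ β := by
        rw [inv_le_comm₀ (sq_pos z) hβ]
        calc β⁻¹ = T := by rw [hT, one_div]
          _ ≤ z := hzT.le
          _ ≤ _ := le_sq hz0.le
      have hexp : Real.exp (β * (1 - Real.sqrt (1 + z ^ 2))) ≤ Real.exp β * Real.exp (-β * z) := by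
        rw [← Real.exp_add]
        apply Real.exp_le_exp.2
        nlinarith [le_sq hz0.le]
      unfold Ff
      rw [div_eq_mul_inv]
      calc Real.exp (β * (1 - Real.sqrt (1 + z ^ 2))) * (Real.sqrt (1 + z ^ 2))⁻¹
          ≤ (Real.exp β * Real.exp (-β * z)) * β :=
            mul_le_mul hexp hinv (by positivity) (by positivity)
        _ = Real.exp β * β * Real.exp (-β * z) := by ring
    rw [integral_const_mul, tail_integral hβ] at key
    have : Real.exp β * β * (Real.exp (-β * T) / β) = Real.exp (β - 1) := by
      have hβT : -β * T = -1 := by rw [hT]; field_simp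
      rw [hβT, show Real.exp β * β * (Real.exp (-1) / β) = Real.exp β * Real.exp (-1) by
        field_simp, ← Real.exp_add]
      ring_nf
    rw [this] at key
    calc ∫ z in Ioi T, Ff β z ≤ Real.exp (β - 1) := key
      _ ≤ Real.exp 0 := Real.exp_le_exp.2 (by linarith)
      _ = 1 := Real.exp_zero
  linarith

lemma lower {β T : ℝ} (hβ : 0 < β) (hT0 : 0 < T) (_hβT : β * T ≤ 1) :
    (1 - β * T) * Real.arsinh T ≤ ∫ z in Ioi (0:ℝ), Ff β z := by
  have step1 : ∫ z in Ioc 0 T, Ff β z ≤ ∫ z in Ioi (0:ℝ), Ff β z := by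
    apply setIntegral_mono_set (intF hβ)
      (Filter.Eventually.of_forall fun z => Fnonneg β z)
      (HasSubset.Subset.eventuallyLE Ioc_subset_Ioi_self)
  have step2 : (1 - β * T) * Real.arsinh T ≤ ∫ z in Ioc 0 T, Ff β z := by
    rw [← integral_inv_sq hT0.le, ← integral_const_mul]
    apply setIntegral_mono_on (inv_sq_intOn.const_mul _)
      ((intF hβ).mono_set Ioc_subset_Ioi_self) measurableSet_Ioc
    intro z hz
    have hz0 : 0 < z := hz.1
    have hzT : z ≤ T := hz.2
    unfold Ff
    rw [div_eq_mul_inv]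
    apply mul_le_mul_of_nonneg_right _ (by positivity)
    have h1 : β * (1 - Real.sqrt (1 + z ^ 2)) + 1 ≤ Real.exp (β * (1 - Real.sqrt (1 + z ^ 2))) :=
      Real.add_one_le_exp _
    nlinarith [sqle hz0.le]
  linarith

lemma hphi : Tendsto (fun β : ℝ => Real.log (1 / β)) (nhdsWithin 0 (Ioi 0)) atTop := by
  apply Real.tendsto_log_atTop.comp
  have := tendsto_inv_nhdsGT_zero (𝕜 := ℝ)
  exact this.congr (fun x => (one_div x).symm)

lemma hGL : Tendsto (fun L : ℝ => (1 - L⁻¹) * (1 - Real.log L / L)) atTop (𝓝 1) := by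
  have t1 : Tendsto (fun L : ℝ => (1:ℝ) - L⁻¹) atTop (𝓝 (1 - 0)) :=
    tendsto_const_nhds.sub tendsto_inv_atTop_zero
  have t2 : Tendsto (fun L : ℝ => (1:ℝ) - Real.log L / L) atTop (𝓝 (1 - 0)) :=
    tendsto_const_nhds.sub Real.isLittleO_log_id_atTop.tendsto_div_nhds_zero
  have := t1.mul t2
  norm_num at this
  exact this

lemma hGU : Tendsto (fun L : ℝ => 1 + (Real.log 3 + 1) / L) atTop (𝓝 1) := by
  have t : Tendsto (fun L : ℝ => (Real.log 3 + 1) / L) atTop (nhds 0) :=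
    tendsto_const_nhds.div_atTop tendsto_id
  have h2 : Tendsto (fun L : ℝ => 1 + (Real.log 3 + 1) / L) atTop (nhds (1 + 0)) :=
    tendsto_const_nhds.add t
  simpa using h2

/-- As β → 0⁺, J_β ∼ log(1/β), i.e. J_β / log(1/β) → 1. -/
theorem stmt14 :
    Tendsto (fun β : ℝ =>
        (∫ z in Ioi (0:ℝ), Real.exp (β * (1 - Real.sqrt (1 + z ^ 2))) / Real.sqrt (1 + z ^ 2))
          / Real.log (1 / β))
      (nhdsWithin 0 (Ioi 0)) (nhds 1) := by
  have hev : ∀ᶠ β in nhdsWithin (0:ℝ) (Ioi 0), β ∈ Ioo 0 (Real.exp (-2)) := by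
    apply Ioo_mem_nhdsGT_of_mem
    exact ⟨le_refl _, Real.exp_pos _⟩
  apply tendsto_of_tendsto_of_tendsto_of_le_of_le'
    ((hGL.comp hphi)) ((hGU.comp hphi))
  · -- lower bound eventually
    filter_upwards [hev] with β hβm
    obtain ⟨hβ0, hβe⟩ := hβm
    set L := Real.log (1 / β) with hL
    have hL2 : 2 < L := by
      rw [hL, one_div, Real.log_inv]
      have := Real.log_lt_log hβ0 hβe
      rw [Real.log_exp] at this
      linarith
    have hL0 : 0 < L := by linarith
    set T := 1 / (β * L) with hT
    have hT0 : 0 < T := by positivity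
    have hβT : β * T = L⁻¹ := by rw [hT]; field_simp
    have harsinh : L - Real.log L ≤ Real.arsinh T := by
      refine le_trans (le_of_eq ?_) (log_le_arsinh hT0)
      rw [hT, one_div, Real.log_inv, Real.log_mul hβ0.ne' hL0.ne', hL, one_div, Real.log_inv]
      ring
    have hkey : (1 - L⁻¹) * (L - Real.log L) ≤
        ∫ z in Ioi (0:ℝ), Real.exp (β * (1 - Real.sqrt (1 + z ^ 2))) / Real.sqrt (1 + z ^ 2) := by
      have h1 : (1 - L⁻¹) * (L - Real.log L) ≤ (1 - L⁻¹) * Real.arsinh T := by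
        apply mul_le_mul_of_nonneg_left harsinh
        have : L⁻¹ < 1 := by rw [inv_lt_one_iff₀]; right; linarith
        linarith
      refine h1.trans ?_
      rw [← hβT]
      simpa only [Ff] using lower hβ0 hT0 (by rw [hβT, inv_le_one_iff₀]; right; linarith)
    show (1 - L⁻¹) * (1 - Real.log L / L) ≤ _ / L
    calc (1 - L⁻¹) * (1 - Real.log L / L) = (1 - L⁻¹) * (L - Real.log L) / L := by
          field_simp
      _ ≤ _ / L := by gcongr
  · -- upper bound eventually
    filter_upwards [hev] with β hβm
    obtain ⟨hβ0, hβe⟩ := hβm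
    set L := Real.log (1 / β) with hL
    have hL2 : 2 < L := by
      rw [hL, one_div, Real.log_inv]
      have := Real.log_lt_log hβ0 hβe
      rw [Real.log_exp] at this
      linarith
    have hL0 : 0 < L := by linarith
    have hβ1 : β ≤ 1 := by
      have := (Real.exp_lt_one_iff).2 (show (-2:ℝ) < 0 by norm_num)
      linarith
    have h1β : 1 ≤ 1 / β := by
      rw [le_div_iff₀ hβ0]; linarith
    have hup : (∫ z in Ioi (0:ℝ),
        Real.exp (β * (1 - Real.sqrt (1 + z ^ 2))) / Real.sqrt (1 + z ^ 2)) ≤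
        L + (Real.log 3 + 1) := by
      have := upper hβ0 hβ1
      simp only [Ff] at this
      have h2 : Real.arsinh (1 / β) ≤ Real.log 3 + L := by
        rw [hL]; exact arsinh_le_log h1β
      linarith
    show _ / L ≤ 1 + (Real.log 3 + 1) / L
    calc (∫ z in Ioi (0:ℝ),
        Real.exp (β * (1 - Real.sqrt (1 + z ^ 2))) / Real.sqrt (1 + z ^ 2)) / L
        ≤ (L + (Real.log 3 + 1)) / L := by gcongr
      _ = 1 + (Real.log 3 + 1) / L := by field_simp
end
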